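/- arXiv:2408.09002 — 2 statements merged into one kernel-verified Lean document; each statement's English description precedes it below -/
import Mathlib

section
/- For a deterministic unary two-way automaton with broadcasting states B ⊆ Q and a fixed state s, the set Mute = {(N, p) : starting from configuration (s, p) on tape {0,…,N+1}, the automaton never enters a state of B} is Presburger-definable in (N, p), for N exceeding all amplitudes. -/
/-- Tape symbols: left endmarker, the unary letter, right endmarker. -/
inductive TapeSym : Type
  | lmark | a | rmark

/-- A linear subset of ℕᵏ. -/
def IsLinearSet' {k : ℕ} (S : Set (Fin k → ℕ)) : Prop :=
  ∃ (m : ℕ) (a : Fin k → ℕ) (b : Fin m → Fin k → ℕ),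
    S = {v | ∃ c : Fin m → ℕ, v = a + ∑ j, c j • b j}

/-- A semilinear (equivalently, Presburger-definable) subset of ℕᵏ. -/
def IsSemilinearSet' {k : ℕ} (S : Set (Fin k → ℕ)) : Prop :=
  ∃ (m : ℕ) (f : Fin m → Set (Fin k → ℕ)),
    (∀ i, IsLinearSet' (f i)) ∧ S = ⋃ i, f i

/-- Eventually periodic subset of ℕ. -/
def EventuallyPeriodic (L : Set ℕ) : Prop :=
  ∃ n₀ p : ℕ, 1 ≤ p ∧ ∀ n, n₀ ≤ n → (n ∈ L ↔ n + p ∈ L)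

/-- The unary language {aⁿ : n ∈ L} is regular. -/
def UnaryRegular (L : Set ℕ) : Prop :=
  ∃ (σ : Type) (_ : Fintype σ) (dfa : DFA Unit σ),
    ∀ n : ℕ, List.replicate n () ∈ dfa.accepts ↔ n ∈ L

/-- The symbol scanned at position `p` on the tape `{0, …, N+1}`. -/
def symAt (N : ℕ) (p : ℤ) : TapeSym :=
  if p ≤ 0 then TapeSym.lmark else if (N : ℤ) + 1 ≤ p then TapeSym.rmark else TapeSym.a

/-- One step of a deterministic two-way unary automaton on the tape `{0, …, N+1}`. -/
def tstep {Q : Type} (δ : Q → TapeSym → Q × ℤ) (N : ℕ) (c : Q × ℤ) : Q × ℤ :=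
  ((δ c.1 (symAt N c.2)).1, c.2 + (δ c.1 (symAt N c.2)).2)

/-- The run after `t` steps from configuration `(s, p)` on the tape `{0, …, N+1}`. -/
def trun {Q : Type} (δ : Q → TapeSym → Q × ℤ) (N : ℕ) (s : Q) (p : ℤ) (t : ℕ) : Q × ℤ :=
  (tstep δ N)^[t] (s, p)

/-- One step of the free run (two-way infinite unary tape, no endmarkers). -/
def freeStep {Q : Type} (δa : Q → Q × ℤ) (c : Q × ℤ) : Q × ℤ :=
  ((δa c.1).1, c.2 + (δa c.1).2)

/-- The free run from state `s` (displacement measured from the start). -/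
def freeRun {Q : Type} (δa : Q → Q × ℤ) (s : Q) (t : ℕ) : Q × ℤ :=
  (freeStep δa)^[t] (s, 0)

/-- The amplitude of a state `s`: the width of the range of displacements along
the first loop of its free run (which is contained in the first `|Q| + 1` steps). -/
noncomputable def amplitude {Q : Type} [Fintype Q] (δa : Q → Q × ℤ) (s : Q) : ℤ :=
  ((Finset.range (Fintype.card Q + 1)).image fun i => (freeRun δa s i).2).max'
      (by simp [Finset.nonempty_range_iff]) -
  ((Finset.range (Fintype.card Q + 1)).image fun i => (freeRun δa s i).2).min'
      (by simp [Finset.nonempty_range_iff])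

set_option linter.unusedSectionVars false
set_option linter.unusedVariables false
set_option linter.unnecessarySimpa false

namespace Stmt12
attribute [local instance] Classical.propDecidable

variable {Q : Type} [Fintype Q]

/-! ### Basic walk lemmas -/

lemma freeRun_zero (f : Q → Q × ℤ) (q : Q) : freeRun f q 0 = (q, 0) := rfl

lemma freeRun_succ (f : Q → Q × ℤ) (q : Q) (t : ℕ) :
    freeRun f q (t + 1) = freeStep f (freeRun f q t) := by
  unfold freeRun
  rw [Function.iterate_succ_apply']

lemma wst_succ (f : Q → Q × ℤ) (q : Q) (t : ℕ) :
    (freeRun f q (t + 1)).1 = (f (freeRun f q t).1).1 := by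
  rw [freeRun_succ]; rfl

lemma wpos_succ (f : Q → Q × ℤ) (q : Q) (t : ℕ) :
    (freeRun f q (t + 1)).2 = (freeRun f q t).2 + (f (freeRun f q t).1).2 := by
  rw [freeRun_succ]; rfl

lemma state_shift (f : Q → Q × ℤ) (q : Q) {t₁ t₂ : ℕ}
    (h : (freeRun f q t₁).1 = (freeRun f q t₂).1) :
    ∀ u, (freeRun f q (t₁ + u)).1 = (freeRun f q (t₂ + u)).1 := by
  intro u
  induction u with
  | zero => simpa using h
  | succ u ih =>
      rw [show t₁ + (u+1) = (t₁ + u) + 1 by omega, show t₂ + (u+1) = (t₂ + u) + 1 by omega,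
        wst_succ, wst_succ, ih]

section cyc

variable (f : Q → Q × ℤ) (q : Q) (i r : ℕ)
  (hcyc : (freeRun f q i).1 = (freeRun f q (i + r)).1)

include hcyc

lemma affine (u : ℕ) :
    freeRun f q (i + r + u) =
      ((freeRun f q (i + u)).1,
        (freeRun f q (i + u)).2 + ((freeRun f q (i + r)).2 - (freeRun f q i).2)) := by
  induction u with
  | zero =>
      refine Prod.ext ?_ (by push_cast; ring)
      simpa using (state_shift f q hcyc 0).symm
  | succ u ih =>
      rw [show i + r + (u+1) = (i + r + u) + 1 by omega, freeRun_succ, ih,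
        show i + (u+1) = (i + u) + 1 by omega, freeRun_succ]
      unfold freeStep
      refine Prod.ext rfl ?_
      dsimp
      ring

lemma affine_mul (n u : ℕ) :
    freeRun f q (i + u + n * r) =
      ((freeRun f q (i + u)).1,
        (freeRun f q (i + u)).2 + n * ((freeRun f q (i + r)).2 - (freeRun f q i).2)) := by
  induction n with
  | zero => simp
  | succ n ih =>
      have h1 : i + u + (n + 1) * r = i + r + (u + n * r) := by ring
      have h2 : i + (u + n * r) = i + u + n * r := by ring
      rw [h1, affine f q i r hcyc (u + n * r), h2, ih]
      refine Prod.ext rfl ?_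
      dsimp
      push_cast
      ring

end cyc

/-! ### step bounds -/

section move

variable {f : Q → Q × ℤ} (hmove : ∀ q', (f q').2 = -1 ∨ (f q').2 = 0 ∨ (f q').2 = 1)

include hmove

lemma pos_le_succ (q : Q) (t : ℕ) : (freeRun f q (t+1)).2 ≤ (freeRun f q t).2 + 1 := by
  rw [wpos_succ]; rcases hmove (freeRun f q t).1 with h | h | h <;> omega

lemma pos_ge_succ (q : Q) (t : ℕ) : (freeRun f q t).2 - 1 ≤ (freeRun f q (t+1)).2 := by
  rw [wpos_succ]; rcases hmove (freeRun f q t).1 with h | h | h <;> omega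

lemma abs_pos_le (q : Q) (t : ℕ) : |(freeRun f q t).2| ≤ (t : ℤ) := by
  induction t with
  | zero => simp [freeRun_zero]
  | succ t ih =>
      have h1 := pos_le_succ hmove q t
      have h2 := pos_ge_succ hmove q t
      have : ((t:ℤ)+1 : ℤ) = (((t+1):ℕ) : ℤ) := by push_cast; ring
      rw [abs_le] at ih ⊢
      push_cast
      omega

/-- intermediate value, downward levels -/
lemma ivt_down (q : Q) {M : ℤ} (hM : M ≤ 0) :
    ∀ t₀, (freeRun f q t₀).2 ≤ M → ∃ t ≤ t₀, (freeRun f q t).2 = M := by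
  intro t₀
  induction t₀ with
  | zero =>
      intro h
      refine ⟨0, le_refl _, ?_⟩
      simp only [freeRun_zero] at h ⊢
      omega
  | succ t₀ ih =>
      intro h
      by_cases h' : (freeRun f q t₀).2 ≤ M
      · obtain ⟨t, ht, he⟩ := ih h'
        exact ⟨t, by omega, he⟩
      · have := pos_ge_succ hmove q t₀
        exact ⟨t₀ + 1, le_refl _, by omega⟩

lemma ivt_up (q : Q) {M : ℤ} (hM : 0 ≤ M) :
    ∀ t₀, M ≤ (freeRun f q t₀).2 → ∃ t ≤ t₀, (freeRun f q t).2 = M := by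
  intro t₀
  induction t₀ with
  | zero =>
      intro h
      refine ⟨0, le_refl _, ?_⟩
      simp only [freeRun_zero] at h ⊢
      omega
  | succ t₀ ih =>
      intro h
      by_cases h' : M ≤ (freeRun f q t₀).2
      · obtain ⟨t, ht, he⟩ := ih h'
        exact ⟨t, by omega, he⟩
      · have := pos_le_succ hmove q t₀
        exact ⟨t₀ + 1, le_refl _, by omega⟩

end move

end Stmt12

set_option linter.unusedSectionVars false

namespace Stmt12
attribute [local instance] Classical.propDecidable

variable {Q : Type} [Fintype Q]

/-- threshold -/
def thr (Q : Type) [Fintype Q] : ℕ := 3 * Fintype.card Q + 3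
/-- period -/
def per (Q : Type) [Fintype Q] : ℕ := (Fintype.card Q).factorial

lemma one_le_thr : 1 ≤ thr Q := by unfold thr; omega

lemma one_le_per : 1 ≤ per Q := Nat.factorial_pos _

noncomputable def wmax (f : Q → Q × ℤ) (q : Q) : ℤ :=
  ((Finset.range (Fintype.card Q + 1)).image fun t => (freeRun f q t).2).max'
    (by simp [Finset.nonempty_range_iff])

noncomputable def wmin (f : Q → Q × ℤ) (q : Q) : ℤ :=
  ((Finset.range (Fintype.card Q + 1)).image fun t => (freeRun f q t).2).min'
    (by simp [Finset.nonempty_range_iff])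

lemma le_wmax (f : Q → Q × ℤ) (q : Q) {t : ℕ} (ht : t ≤ Fintype.card Q) :
    (freeRun f q t).2 ≤ wmax f q := by
  apply Finset.le_max'
  exact Finset.mem_image_of_mem _ (Finset.mem_range.2 (by omega))

lemma wmin_le (f : Q → Q × ℤ) (q : Q) {t : ℕ} (ht : t ≤ Fintype.card Q) :
    wmin f q ≤ (freeRun f q t).2 := by
  apply Finset.min'_le
  exact Finset.mem_image_of_mem _ (Finset.mem_range.2 (by omega))

lemma exists_wmax_idx (f : Q → Q × ℤ) (q : Q) :
    ∃ t ≤ Fintype.card Q, (freeRun f q t).2 = wmax f q := by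
  have := Finset.max'_mem ((Finset.range (Fintype.card Q + 1)).image fun t => (freeRun f q t).2)
    (by simp [Finset.nonempty_range_iff])
  rw [Finset.mem_image] at this
  obtain ⟨t, ht, he⟩ := this
  exact ⟨t, by simpa using Nat.lt_succ_iff.1 (Finset.mem_range.1 ht), he⟩

lemma exists_wmin_idx (f : Q → Q × ℤ) (q : Q) :
    ∃ t ≤ Fintype.card Q, (freeRun f q t).2 = wmin f q := by
  have := Finset.min'_mem ((Finset.range (Fintype.card Q + 1)).image fun t => (freeRun f q t).2)
    (by simp [Finset.nonempty_range_iff])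
  rw [Finset.mem_image] at this
  obtain ⟨t, ht, he⟩ := this
  exact ⟨t, by simpa using Nat.lt_succ_iff.1 (Finset.mem_range.1 ht), he⟩

section move
variable {f : Q → Q × ℤ} (hmove : ∀ q', (f q').2 = -1 ∨ (f q').2 = 0 ∨ (f q').2 = 1)
include hmove

lemma wmax_le_card (q : Q) : wmax f q ≤ (Fintype.card Q : ℤ) := by
  obtain ⟨t, ht, he⟩ := exists_wmax_idx f q
  have := abs_pos_le hmove q t
  rw [abs_le] at this
  omega

lemma neg_card_le_wmin (q : Q) : -(Fintype.card Q : ℤ) ≤ wmin f q := by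
  obtain ⟨t, ht, he⟩ := exists_wmin_idx f q
  have := abs_pos_le hmove q t
  rw [abs_le] at this
  omega

lemma pos_add_le (q : Q) (a b : ℕ) :
    (freeRun f q (a + b)).2 ≤ (freeRun f q a).2 + b := by
  induction b with
  | zero => simp
  | succ b ih =>
      have := pos_le_succ hmove q (a + b)
      have h : a + (b+1) = (a + b) + 1 := by omega
      rw [h]
      push_cast
      omega

end move

lemma exists_cycle (f : Q → Q × ℤ) (q : Q) :
    ∃ i r, 0 < r ∧ i + r ≤ Fintype.card Q ∧
      (freeRun f q i).1 = (freeRun f q (i + r)).1 := by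
  obtain ⟨x, y, hxy, he⟩ := Fintype.exists_ne_map_eq_of_card_lt
    (fun t : Fin (Fintype.card Q + 1) => (freeRun f q (t : ℕ)).1) (by simp)
  have hx := x.isLt
  have hy := y.isLt
  rcases lt_or_gt_of_ne (fun h : (x:ℕ) = (y:ℕ) => hxy (Fin.ext h)) with h | h
  · refine ⟨x, y - x, by omega, by omega, ?_⟩
    have hxy2 : (x:ℕ) + ((y:ℕ) - (x:ℕ)) = (y:ℕ) := by omega
    rw [hxy2]
    exact he
  · refine ⟨y, x - y, by omega, by omega, ?_⟩
    have hxy2 : (y:ℕ) + ((x:ℕ) - (y:ℕ)) = (x:ℕ) := by omega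
    rw [hxy2]
    exact he.symm

/-! ### Excursion outcomes -/

inductive Exc (Q : Type) : Type
  | L (q' : Q) (vis : Set Q)
  | R (q' : Q) (vis : Set Q)
  | stay (vis : Set Q)

def Exc.swap : Exc Q → Exc Q
  | .L q' vis => .R q' vis
  | .R q' vis => .L q' vis
  | .stay vis => .stay vis

lemma Exc.swap_swap (e : Exc Q) : e.swap.swap = e := by cases e <;> rfl

def visUpTo (f : Q → Q × ℤ) (q : Q) (t : ℕ) : Set Q :=
  {a | ∃ t' ≤ t, (freeRun f q t').1 = a}

def hitsP (f : Q → Q × ℤ) (q : Q) (u v : ℕ) (t : ℕ) : Prop :=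
  (freeRun f q t).2 = -(u : ℤ) ∨ (freeRun f q t).2 = (v : ℤ)

noncomputable def exc (f : Q → Q × ℤ) (q : Q) (u v : ℕ) : Exc Q :=
  if h : ∃ t, hitsP f q u v t then
    if (freeRun f q (Nat.find h)).2 = -(u : ℤ) then
      .L (freeRun f q (Nat.find h)).1 (visUpTo f q (Nat.find h))
    else
      .R (freeRun f q (Nat.find h)).1 (visUpTo f q (Nat.find h))
  else .stay (Set.range fun t => (freeRun f q t).1)

lemma nat_find_eq {p q : ℕ → Prop} [DecidablePred p] [DecidablePred q]
    (hp : ∃ n, p n) (hq : ∃ n, q n) (h : ∀ n, p n ↔ q n) : Nat.find hp = Nat.find hq := by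
  apply le_antisymm
  · exact Nat.find_le ((h _).2 (Nat.find_spec hq))
  · exact Nat.find_le ((h _).1 (Nat.find_spec hp))

lemma exc_congr {f : Q → Q × ℤ} {q : Q} {u v v' : ℕ}
    (h : ∀ t, hitsP f q u v t ↔ hitsP f q u v' t) : exc f q u v = exc f q u v' := by
  unfold exc
  by_cases hex : ∃ t, hitsP f q u v t
  · have hex' : ∃ t, hitsP f q u v' t := by
      obtain ⟨t, ht⟩ := hex; exact ⟨t, (h t).1 ht⟩
    rw [dif_pos hex, dif_pos hex', nat_find_eq hex hex' h]
  · have hex' : ¬ ∃ t, hitsP f q u v' t := by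
      intro ⟨t, ht⟩; exact hex ⟨t, (h t).2 ht⟩
    rw [dif_neg hex, dif_neg hex']

/-! ### mirror -/

def mir (f : Q → Q × ℤ) : Q → Q × ℤ := fun q => ((f q).1, -(f q).2)

lemma freeRun_mir (f : Q → Q × ℤ) (q : Q) (t : ℕ) :
    freeRun (mir f) q t = ((freeRun f q t).1, -(freeRun f q t).2) := by
  induction t with
  | zero => simp [freeRun_zero]
  | succ t ih =>
      rw [freeRun_succ, freeRun_succ, ih]
      unfold freeStep mir
      dsimp
      ring_nf

lemma hmove_mir {f : Q → Q × ℤ} (hmove : ∀ q', (f q').2 = -1 ∨ (f q').2 = 0 ∨ (f q').2 = 1) :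
    ∀ q', ((mir f) q').2 = -1 ∨ ((mir f) q').2 = 0 ∨ ((mir f) q').2 = 1 := by
  intro q'
  unfold mir
  rcases hmove q' with h | h | h <;> simp [h]

lemma visUpTo_mir (f : Q → Q × ℤ) (q : Q) (t : ℕ) :
    visUpTo (mir f) q t = visUpTo f q t := by
  unfold visUpTo
  ext a
  simp only [Set.mem_setOf_eq, freeRun_mir]

lemma exc_mir (f : Q → Q × ℤ) (q : Q) {u v : ℕ} (hu : 1 ≤ u) (hv : 1 ≤ v) :
    exc f q u v = (exc (mir f) q v u).swap := by
  have hiff : ∀ t, hitsP (mir f) q v u t ↔ hitsP f q u v t := by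
    intro t
    unfold hitsP
    rw [freeRun_mir]
    dsimp
    constructor
    · rintro (h | h)
      · right; omega
      · left; omega
    · rintro (h | h)
      · right; omega
      · left; omega
  unfold exc
  by_cases hex : ∃ t, hitsP (mir f) q v u t
  · have hex' : ∃ t, hitsP f q u v t := by
      obtain ⟨t, ht⟩ := hex; exact ⟨t, (hiff t).1 ht⟩
    rw [dif_pos hex, dif_pos hex']
    have hfe : Nat.find hex' = Nat.find hex := nat_find_eq hex' hex (fun n => (hiff n).symm)
    rw [hfe]
    have hmpos : (freeRun (mir f) q (Nat.find hex)).2 = -(freeRun f q (Nat.find hex)).2 := by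
      rw [freeRun_mir]
    have hsp2 : (freeRun f q (Nat.find hex)).2 = (v:ℤ) ∨ (freeRun f q (Nat.find hex)).2 = -(u:ℤ) := by
      have hsp := Nat.find_spec hex
      generalize Nat.find hex = n at hsp ⊢
      unfold hitsP at hsp
      rw [freeRun_mir] at hsp
      dsimp at hsp
      rcases hsp with h | h
      · left; omega
      · right; omega
    rcases hsp2 with h | h
    · rw [if_neg (by omega), if_pos (by rw [hmpos]; omega)]
      simp [Exc.swap, freeRun_mir, visUpTo_mir]
    · rw [if_pos h, if_neg (by rw [hmpos]; omega)]
      simp [Exc.swap, freeRun_mir, visUpTo_mir]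
  · have hex' : ¬ ∃ t, hitsP f q u v t := by
      intro ⟨t, ht⟩; exact hex ⟨t, (hiff t).2 ht⟩
    rw [dif_neg hex, dif_neg hex']
    unfold Exc.swap
    congr 1
    ext a
    simp only [Set.mem_range, freeRun_mir]

end Stmt12

set_option linter.unusedSectionVars false
set_option maxHeartbeats 1000000

namespace Stmt12
attribute [local instance] Classical.propDecidable

variable {Q : Type} [Fintype Q]

section cyc2

variable (f : Q → Q × ℤ) (q : Q) {i r : ℕ} (hr : 0 < r)
  (hir : i + r ≤ Fintype.card Q)
  (hcyc : (freeRun f q i).1 = (freeRun f q (i + r)).1)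

include hr hir hcyc

lemma decomp (t : ℕ) (ht : Fintype.card Q < t) :
    ∃ u n, u < r ∧ i + u + n * r = t := by
  refine ⟨(t - i) % r, (t - i) / r, Nat.mod_lt _ hr, ?_⟩
  have hd := Nat.div_add_mod (t - i) r
  rw [Nat.mul_comm]
  omega

lemma global_ub (hD : (freeRun f q (i + r)).2 - (freeRun f q i).2 ≤ 0) :
    ∀ t, (freeRun f q t).2 ≤ wmax f q := by
  intro t
  by_cases ht : t ≤ Fintype.card Q
  · exact le_wmax f q ht
  · obtain ⟨u, n, hu, hidx⟩ := decomp f q hr hir hcyc t (by omega)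
    have h3 := affine_mul f q i r hcyc n u
    rw [hidx] at h3
    have h4 : (freeRun f q (i + u)).2 ≤ wmax f q := le_wmax f q (by omega)
    have h5 : (n : ℤ) * ((freeRun f q (i + r)).2 - (freeRun f q i).2) ≤ 0 :=
      mul_nonpos_iff.2 (Or.inl ⟨by positivity, hD⟩)
    have h6 : (freeRun f q t).2 =
        (freeRun f q (i + u)).2 + (n : ℤ) * ((freeRun f q (i + r)).2 - (freeRun f q i).2) := by
      rw [h3]
    linarith

lemma global_lb (hD : 0 ≤ (freeRun f q (i + r)).2 - (freeRun f q i).2) :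
    ∀ t, wmin f q ≤ (freeRun f q t).2 := by
  intro t
  by_cases ht : t ≤ Fintype.card Q
  · exact wmin_le f q ht
  · obtain ⟨u, n, hu, hidx⟩ := decomp f q hr hir hcyc t (by omega)
    have h3 := affine_mul f q i r hcyc n u
    rw [hidx] at h3
    have h4 : wmin f q ≤ (freeRun f q (i + u)).2 := wmin_le f q (by omega)
    have h5 : 0 ≤ (n : ℤ) * ((freeRun f q (i + r)).2 - (freeRun f q i).2) :=
      mul_nonneg (by positivity) hD
    have h6 : (freeRun f q t).2 =
        (freeRun f q (i + u)).2 + (n : ℤ) * ((freeRun f q (i + r)).2 - (freeRun f q i).2) := by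
      rw [h3]
    linarith

lemma vis_stable {t : ℕ} (ht : Fintype.card Q ≤ t) :
    visUpTo f q t = visUpTo f q (Fintype.card Q) := by
  ext a
  constructor
  · rintro ⟨t', ht', rfl⟩
    by_cases h : t' ≤ Fintype.card Q
    · exact ⟨t', h, rfl⟩
    · obtain ⟨u, n, hu, hidx⟩ := decomp f q hr hir hcyc t' (by omega)
      have h3 := affine_mul f q i r hcyc n u
      rw [hidx] at h3
      refine ⟨i + u, by omega, ?_⟩
      rw [h3]
  · rintro ⟨t', ht', rfl⟩
    exact ⟨t', by omega, rfl⟩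

lemma range_eq_vis :
    (Set.range fun t => (freeRun f q t).1) = visUpTo f q (Fintype.card Q) := by
  ext a
  constructor
  · rintro ⟨t', rfl⟩
    dsimp only
    by_cases h : t' ≤ Fintype.card Q
    · exact ⟨t', h, rfl⟩
    · obtain ⟨u, n, hu, hidx⟩ := decomp f q hr hir hcyc t' (by omega)
      have h3 := affine_mul f q i r hcyc n u
      rw [hidx] at h3
      refine ⟨i + u, by omega, ?_⟩
      rw [h3]
  · rintro ⟨t', ht', rfl⟩
    exact ⟨t', rfl⟩


end cyc2

section core

variable {f : Q → Q × ℤ} (hmove : ∀ q', (f q').2 = -1 ∨ (f q').2 = 0 ∨ (f q').2 = 1)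
include hmove

theorem excA_le (q : Q) {u v v' : ℕ} (hu : 1 ≤ u) (hv : thr Q ≤ v) (hvv' : v ≤ v')
    (hres : (v - thr Q) % per Q = (v' - thr Q) % per Q) :
    exc f q u v = exc f q u v' := by
  have hv' : thr Q ≤ v' := le_trans hv hvv'
  have hthr : thr Q = 3 * Fintype.card Q + 3 := rfl
  obtain ⟨i, r, hr, hir, hcyc⟩ := exists_cycle f q
  have hwc : wmax f q ≤ (Fintype.card Q : ℤ) := wmax_le_card hmove q
  rcases le_or_gt ((freeRun f q (i + r)).2 - (freeRun f q i).2) 0 with hD | hD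
  · -- drift ≤ 0 : the right levels v, v' are never reached
    have hub := global_ub f q hr hir hcyc hD
    apply exc_congr
    intro t
    unfold hitsP
    have h1 := hub t
    constructor
    · rintro (h | h)
      · exact Or.inl h
      · exfalso; omega
    · rintro (h | h)
      · exact Or.inl h
      · exfalso; omega
  · -- positive drift
    have hlb := global_lb f q hr hir hcyc (by omega)
    by_cases hLhit : wmin f q ≤ -(u : ℤ)
    · -- exits left, at a time ≤ card Q, same for both
      obtain ⟨t₀, ht₀, he₀⟩ := exists_wmin_idx f q
      obtain ⟨tw, htw, hew⟩ := ivt_down hmove q (by omega : -(u:ℤ) ≤ 0) t₀ (by omega)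
      have hexL : ∃ t, (freeRun f q t).2 = -(u : ℤ) := ⟨tw, hew⟩
      have htL1 : (freeRun f q (Nat.find hexL)).2 = -(u:ℤ) := Nat.find_spec hexL
      have htLcard : Nat.find hexL ≤ Fintype.card Q := le_trans (Nat.find_le hew) (by omega)
      have key : ∀ V : ℕ, thr Q ≤ V →
          exc f q u V = Exc.L (freeRun f q (Nat.find hexL)).1 (visUpTo f q (Nat.find hexL)) := by
        intro V hV
        have hex : ∃ t, hitsP f q u V t := ⟨Nat.find hexL, Or.inl htL1⟩
        unfold exc
        rw [dif_pos hex]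
        have hfind : Nat.find hex = Nat.find hexL := by
          rw [Nat.find_eq_iff]
          refine ⟨Or.inl htL1, ?_⟩
          intro m hm
          rintro (h | h)
          · exact Nat.find_min hexL hm h
          · have h2 : (freeRun f q m).2 ≤ wmax f q := le_wmax f q (by omega)
            omega
        rw [hfind, if_pos htL1]
      rw [key v hv, key v' hv']
    · -- exits right; data depends on the level only mod the drift
      have hnl : ∀ t, (freeRun f q t).2 ≠ -(u : ℤ) := by
        intro t h
        have := hlb t
        omega
      have hitAll : ∀ M : ℕ, ∃ t, (freeRun f q t).2 = (M : ℤ) := by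
        intro M
        have habs := abs_pos_le hmove q i
        rw [abs_le] at habs
        have hicard : (i : ℤ) ≤ (Fintype.card Q : ℤ) := by
          exact_mod_cast (by omega : i ≤ Fintype.card Q)
        have hD1 : (1:ℤ) ≤ (freeRun f q (i + r)).2 - (freeRun f q i).2 := hD
        have h2 : ((M + Fintype.card Q : ℕ) : ℤ) * 1 ≤
            ((M + Fintype.card Q : ℕ) : ℤ) * ((freeRun f q (i + r)).2 - (freeRun f q i).2) :=
          mul_le_mul_of_nonneg_left hD1 (by positivity)
        have h3 := affine_mul f q i r hcyc (M + Fintype.card Q) 0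
        have h1 : (M : ℤ) ≤ (freeRun f q (i + 0 + (M + Fintype.card Q) * r)).2 := by
          have h4 : (freeRun f q (i + 0 + (M + Fintype.card Q) * r)).2
              = (freeRun f q (i + 0)).2 +
                ((M + Fintype.card Q : ℕ) : ℤ) * ((freeRun f q (i + r)).2 - (freeRun f q i).2) := by
            rw [h3]
          rw [h4, show i + 0 = i from rfl]
          push_cast at h2 ⊢
          linarith
        obtain ⟨t', _, h⟩ := ivt_up hmove q (by positivity) _ h1
        exact ⟨t', h⟩
      have FHpos : ∀ M : ℕ, (freeRun f q (Nat.find (hitAll M))).2 = (M:ℤ) :=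
        fun M => Nat.find_spec (hitAll M)
      have FHlarge : ∀ M : ℕ, thr Q ≤ M → Fintype.card Q < Nat.find (hitAll M) := by
        intro M hM
        by_contra h
        push_neg at h
        have := le_wmax f q (t := Nat.find (hitAll M)) h
        have := FHpos M
        omega
      have hDr : (freeRun f q (i + r)).2 - (freeRun f q i).2 ≤ (r:ℤ) := by
        have := pos_add_le hmove q i r
        omega
      set dn := ((freeRun f q (i + r)).2 - (freeRun f q i).2).toNat with hdn
      have hdnD : ((dn : ℕ) : ℤ) = (freeRun f q (i + r)).2 - (freeRun f q i).2 := by omega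
      have hdn1 : 1 ≤ dn := by omega
      have hdnr : dn ≤ r := by omega
      have hdvd : dn ∣ per Q := Nat.dvd_factorial (by omega) (by omega)
      have step : ∀ M : ℕ, thr Q ≤ M →
          Nat.find (hitAll (M + dn)) = Nat.find (hitAll M) + r := by
        intro M hM
        have hge : i ≤ Nat.find (hitAll M) := by
          have := FHlarge M hM
          omega
        have haff := affine f q i r hcyc (Nat.find (hitAll M) - i)
        rw [show i + r + (Nat.find (hitAll M) - i) = Nat.find (hitAll M) + r by omega,
          show i + (Nat.find (hitAll M) - i) = Nat.find (hitAll M) by omega] at haff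
        have hposr : (freeRun f q (Nat.find (hitAll M) + r)).2 =
            (M : ℤ) + ((freeRun f q (i + r)).2 - (freeRun f q i).2) := by
          rw [haff]
          dsimp
          rw [FHpos M]
        rw [Nat.find_eq_iff]
        constructor
        · show (freeRun f q (Nat.find (hitAll M) + r)).2 = ((M + dn : ℕ) : ℤ)
          push_cast
          omega
        · intro m hm hpm
          have hm1 : Fintype.card Q < m := by
            by_contra h
            push_neg at h
            have := le_wmax f q h
            have hMv : ((M + dn : ℕ) : ℤ) = (freeRun f q m).2 := hpm.symm
            push_cast at hMv
            omega
          have hm2 : i + r ≤ m := by omega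
          have haff2 := affine f q i r hcyc (m - (i + r))
          rw [show i + r + (m - (i + r)) = m by omega,
            show i + (m - (i + r)) = m - r by omega] at haff2
          have hposm : (freeRun f q (m - r)).2 = (M : ℤ) := by
            have h2 : (freeRun f q m).2 =
                (freeRun f q (m - r)).2 + ((freeRun f q (i + r)).2 - (freeRun f q i).2) := by
              rw [haff2]
            have : (freeRun f q m).2 = ((M + dn : ℕ) : ℤ) := hpm
            push_cast at this
            omega
          have hfle : Nat.find (hitAll M) ≤ m - r := Nat.find_le hposm
          omega
      have iter : ∀ n (M : ℕ), thr Q ≤ M →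
          Nat.find (hitAll (M + n * dn)) = Nat.find (hitAll M) + n * r := by
        intro n
        induction n with
        | zero => intro M hM; simp
        | succ n ih =>
            intro M hM
            have h1 : M + (n + 1) * dn = (M + n * dn) + dn := by ring
            rw [h1, step (M + n * dn) (by omega), ih M hM]
            ring
      have stiter : ∀ n (M : ℕ), thr Q ≤ M →
          (freeRun f q (Nat.find (hitAll M) + n * r)).1 = (freeRun f q (Nat.find (hitAll M))).1 := by
        intro n M hM
        have hge : i ≤ Nat.find (hitAll M) := by
          have := FHlarge M hM
          omega
        have := affine_mul f q i r hcyc n (Nat.find (hitAll M) - i)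
        rw [show i + (Nat.find (hitAll M) - i) = Nat.find (hitAll M) by omega] at this
        rw [this]
      have hkdvd : per Q ∣ v' - v := by
        have h2 := (Nat.modEq_iff_dvd' (by omega : v - thr Q ≤ v' - thr Q)).1 hres
        have h3 : v' - thr Q - (v - thr Q) = v' - v := by omega
        rwa [h3] at h2
      obtain ⟨n₀, hn₀⟩ := dvd_trans hdvd hkdvd
      have hv'eq : v' = v + n₀ * dn := by rw [Nat.mul_comm]; omega
      have key : ∀ V : ℕ, thr Q ≤ V →
          exc f q u V = Exc.R (freeRun f q (Nat.find (hitAll V))).1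
            (visUpTo f q (Fintype.card Q)) := by
        intro V hV
        have hex : ∃ t, hitsP f q u V t := ⟨Nat.find (hitAll V), Or.inr (FHpos V)⟩
        unfold exc
        rw [dif_pos hex]
        have hfind : Nat.find hex = Nat.find (hitAll V) := by
          rw [Nat.find_eq_iff]
          refine ⟨Or.inr (FHpos V), ?_⟩
          intro m hm
          rintro (h | h)
          · exact hnl m h
          · exact Nat.find_min (hitAll V) hm h
        rw [hfind, if_neg (by have := FHpos V; omega)]
        congr 1
        exact vis_stable f q hr hir hcyc (le_of_lt (FHlarge V hV))
      rw [key v hv, key v' hv', hv'eq, iter n₀ v hv, stiter n₀ v hv]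

theorem excA (q : Q) {u v v' : ℕ} (hu : 1 ≤ u) (hv : thr Q ≤ v) (hv' : thr Q ≤ v')
    (hres : (v - thr Q) % per Q = (v' - thr Q) % per Q) :
    exc f q u v = exc f q u v' := by
  rcases le_total v v' with h | h
  · exact excA_le hmove q hu hv h hres
  · exact (excA_le hmove q hu hv' h hres.symm).symm

theorem excB (q : Q) {u u' v : ℕ} (hv : 1 ≤ v) (hu : thr Q ≤ u) (hu' : thr Q ≤ u')
    (hres : (u - thr Q) % per Q = (u' - thr Q) % per Q) :
    exc f q u v = exc f q u' v := by
  have h1t := one_le_thr (Q := Q)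
  rw [exc_mir f q (by omega : 1 ≤ u) hv, exc_mir f q (by omega : 1 ≤ u') hv]
  congr 1
  exact excA (hmove_mir hmove) q hv hu hu' hres

theorem excU (q : Q) {u v u' v' : ℕ} (hu : 1 ≤ u) (hv : 1 ≤ v) (hu' : 1 ≤ u') (hv' : 1 ≤ v')
    (hU : u = u' ∨ (thr Q ≤ u ∧ thr Q ≤ u' ∧ (u - thr Q) % per Q = (u' - thr Q) % per Q))
    (hV : v = v' ∨ (thr Q ≤ v ∧ thr Q ≤ v' ∧ (v - thr Q) % per Q = (v' - thr Q) % per Q)) :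
    exc f q u v = exc f q u' v' := by
  have h1 : exc f q u v = exc f q u v' := by
    rcases hV with rfl | ⟨h1, h2, h3⟩
    · rfl
    · exact excA hmove q hu h1 h2 h3
  rw [h1]
  rcases hU with rfl | ⟨h1', h2', h3'⟩
  · rfl
  · exact excB hmove q hv' h1' h2' h3'

end core

end Stmt12

set_option linter.unusedSectionVars false
set_option maxHeartbeats 1000000

namespace Stmt12
attribute [local instance] Classical.propDecidable

variable {Q : Type} [Fintype Q]

/-! ### tape run vs free runs -/

def fa (δ : Q → TapeSym → Q × ℤ) : Q → Q × ℤ := fun q => δ q TapeSym.a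
def fl (δ : Q → TapeSym → Q × ℤ) : Q → Q × ℤ := fun q => δ q TapeSym.lmark
def fr (δ : Q → TapeSym → Q × ℤ) : Q → Q × ℤ := fun q => δ q TapeSym.rmark

lemma trun_succ (δ : Q → TapeSym → Q × ℤ) (N : ℕ) (s : Q) (p : ℤ) (t : ℕ) :
    trun δ N s p (t + 1) = tstep δ N (trun δ N s p t) := by
  unfold trun
  rw [Function.iterate_succ_apply']

lemma trun_add (δ : Q → TapeSym → Q × ℤ) (N : ℕ) (s : Q) (p : ℤ) (a b : ℕ) :
    trun δ N s p (a + b) = trun δ N (trun δ N s p a).1 (trun δ N s p a).2 b := by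
  unfold trun
  rw [Nat.add_comm, Function.iterate_add_apply]

lemma symAt_a {N : ℕ} {p : ℤ} (h1 : 1 ≤ p) (h2 : p ≤ N) : symAt N p = TapeSym.a := by
  unfold symAt
  rw [if_neg (by omega), if_neg (by omega)]

lemma symAt_l {N : ℕ} {p : ℤ} (h : p ≤ 0) : symAt N p = TapeSym.lmark := by
  unfold symAt
  rw [if_pos h]

lemma symAt_r {N : ℕ} {p : ℤ} (h : (N : ℤ) + 1 ≤ p) : symAt N p = TapeSym.rmark := by
  unfold symAt
  rw [if_neg (by omega), if_pos h]

lemma corr_int (δ : Q → TapeSym → Q × ℤ) (N : ℕ) (q : Q) (x : ℤ) (t : ℕ)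
    (hx : ∀ t' < t, 1 ≤ x + (freeRun (fa δ) q t').2 ∧ x + (freeRun (fa δ) q t').2 ≤ N) :
    trun δ N q x t = ((freeRun (fa δ) q t).1, x + (freeRun (fa δ) q t).2) := by
  induction t with
  | zero =>
      simp [trun, freeRun_zero]
  | succ t ih =>
      rw [trun_succ, ih (fun t' h => hx t' (by omega))]
      obtain ⟨h1, h2⟩ := hx t (by omega)
      unfold tstep
      dsimp only
      rw [symAt_a h1 h2, freeRun_succ]
      unfold freeStep fa
      dsimp only
      exact Prod.ext rfl (by ring)

lemma corr_l (δ : Q → TapeSym → Q × ℤ) (N : ℕ) (q : Q) (t : ℕ)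
    (hx : ∀ t' < t, (freeRun (fl δ) q t').2 ≤ 0) :
    trun δ N q 0 t = ((freeRun (fl δ) q t).1, (freeRun (fl δ) q t).2) := by
  induction t with
  | zero => simp [trun, freeRun_zero]
  | succ t ih =>
      rw [trun_succ, ih (fun t' h => hx t' (by omega))]
      have h1 := hx t (by omega)
      unfold tstep
      dsimp only
      rw [symAt_l h1, freeRun_succ]
      unfold freeStep fl
      dsimp only

lemma corr_r (δ : Q → TapeSym → Q × ℤ) (N : ℕ) (q : Q) (t : ℕ)
    (hx : ∀ t' < t, 0 ≤ (freeRun (fr δ) q t').2) :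
    trun δ N q ((N : ℤ) + 1) t = ((freeRun (fr δ) q t).1, (N : ℤ) + 1 + (freeRun (fr δ) q t).2) := by
  induction t with
  | zero => simp [trun, freeRun_zero]
  | succ t ih =>
      rw [trun_succ, ih (fun t' h => hx t' (by omega))]
      have h1 := hx t (by omega)
      unfold tstep
      dsimp only
      rw [symAt_r (by omega), freeRun_succ]
      unfold freeStep fr
      dsimp only
      exact Prod.ext rfl (by ring)

/-! ### marker phases -/

noncomputable def lexQ (δ : Q → TapeSym → Q × ℤ) (q : Q) : Option Q :=
  if h : ∃ t, (freeRun (fl δ) q t).2 = 1 then some (freeRun (fl δ) q (Nat.find h)).1 else none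

noncomputable def lvis (δ : Q → TapeSym → Q × ℤ) (q : Q) : Set Q :=
  if h : ∃ t, (freeRun (fl δ) q t).2 = 1 then visUpTo (fl δ) q (Nat.find h)
  else Set.range fun t => (freeRun (fl δ) q t).1

noncomputable def rexQ (δ : Q → TapeSym → Q × ℤ) (q : Q) : Option Q :=
  if h : ∃ t, (freeRun (fr δ) q t).2 = -1 then some (freeRun (fr δ) q (Nat.find h)).1 else none

noncomputable def rvis (δ : Q → TapeSym → Q × ℤ) (q : Q) : Set Q :=
  if h : ∃ t, (freeRun (fr δ) q t).2 = -1 then visUpTo (fr δ) q (Nat.find h)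
  else Set.range fun t => (freeRun (fr δ) q t).1

section hdelta
variable {δ : Q → TapeSym → Q × ℤ}
  (hδ : ∀ q x, (δ q x).2 = -1 ∨ (δ q x).2 = 0 ∨ (δ q x).2 = 1)
include hδ

lemma hmove_fa : ∀ q' : Q, ((fa δ) q').2 = -1 ∨ ((fa δ) q').2 = 0 ∨ ((fa δ) q').2 = 1 :=
  fun q' => hδ q' TapeSym.a
lemma hmove_fl : ∀ q' : Q, ((fl δ) q').2 = -1 ∨ ((fl δ) q').2 = 0 ∨ ((fl δ) q').2 = 1 :=
  fun q' => hδ q' TapeSym.lmark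
lemma hmove_fr : ∀ q' : Q, ((fr δ) q').2 = -1 ∨ ((fr δ) q').2 = 0 ∨ ((fr δ) q').2 = 1 :=
  fun q' => hδ q' TapeSym.rmark

/-- Left-marker phase, exit case. -/
lemma lph_some (q : Q) (N : ℕ) {q1 : Q} (h : lexQ δ q = some q1) :
    ∃ m, 1 ≤ m ∧ trun δ N q 0 m = (q1, 1) ∧
      (∀ t ≤ m, (trun δ N q 0 t).1 ∈ lvis δ q) ∧
      (∀ a ∈ lvis δ q, ∃ t ≤ m, (trun δ N q 0 t).1 = a) := by
  unfold lexQ at h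
  by_cases hex : ∃ t, (freeRun (fl δ) q t).2 = 1
  swap
  · rw [dif_neg hex] at h
    exact absurd h (by simp)
  · rw [dif_pos hex] at h
    injection h with h
    subst h
    set m := Nat.find hex with hm
    have hspec : (freeRun (fl δ) q m).2 = 1 := Nat.find_spec hex
    have hpre : ∀ t' < m, (freeRun (fl δ) q t').2 ≤ 0 := by
      intro t' ht'
      by_contra hcon
      push_neg at hcon
      obtain ⟨t'', ht'', he''⟩ := ivt_up (hmove_fl hδ) q (by omega : (0:ℤ) ≤ 1) t' (by omega)
      have := Nat.find_le (h := hex) he''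
      omega
    have hcorr : ∀ t ≤ m, trun δ N q 0 t = ((freeRun (fl δ) q t).1, (freeRun (fl δ) q t).2) :=
      fun t ht => corr_l δ N q t (fun t' h' => hpre t' (by omega))
    have hm1 : 1 ≤ m := by
      rcases Nat.eq_zero_or_pos m with h0 | h0
      · rw [h0] at hspec
        simp [freeRun_zero] at hspec
      · exact h0
    refine ⟨m, hm1, ?_, ?_, ?_⟩
    · rw [hcorr m (le_refl m), hspec]
    · intro t ht
      rw [hcorr t ht]
      unfold lvis
      rw [dif_pos hex]
      exact ⟨t, ht, rfl⟩
    · intro a ha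
      unfold lvis at ha
      rw [dif_pos hex] at ha
      obtain ⟨t, ht, rfl⟩ := ha
      exact ⟨t, ht, by rw [hcorr t ht]⟩

/-- Left-marker phase, trapped case. -/
lemma lph_none (q : Q) (N : ℕ) (h : lexQ δ q = none) :
    (∀ t, (trun δ N q 0 t).1 ∈ lvis δ q) ∧
    (∀ a ∈ lvis δ q, ∃ t, (trun δ N q 0 t).1 = a) := by
  unfold lexQ at h
  by_cases hex : ∃ t, (freeRun (fl δ) q t).2 = 1
  · rw [dif_pos hex] at h
    exact absurd h (by simp)
  · have hpre : ∀ t', (freeRun (fl δ) q t').2 ≤ 0 := by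
      intro t'
      by_contra hcon
      push_neg at hcon
      obtain ⟨t'', _, he''⟩ := ivt_up (hmove_fl hδ) q (by omega : (0:ℤ) ≤ 1) t' (by omega)
      exact hex ⟨t'', he''⟩
    have hcorr : ∀ t, trun δ N q 0 t = ((freeRun (fl δ) q t).1, (freeRun (fl δ) q t).2) :=
      fun t => corr_l δ N q t (fun t' _ => hpre t')
    constructor
    · intro t
      rw [hcorr t]
      unfold lvis
      rw [dif_neg hex]
      exact ⟨t, rfl⟩
    · intro a ha
      unfold lvis at ha
      rw [dif_neg hex] at ha
      obtain ⟨t, rfl⟩ := ha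
      exact ⟨t, by rw [hcorr t]⟩

/-- Right-marker phase, exit case. -/
lemma rph_some (q : Q) (N : ℕ) {q1 : Q} (h : rexQ δ q = some q1) :
    ∃ m, 1 ≤ m ∧ trun δ N q ((N : ℤ) + 1) m = (q1, (N : ℤ)) ∧
      (∀ t ≤ m, (trun δ N q ((N : ℤ) + 1) t).1 ∈ rvis δ q) ∧
      (∀ a ∈ rvis δ q, ∃ t ≤ m, (trun δ N q ((N : ℤ) + 1) t).1 = a) := by
  unfold rexQ at h
  by_cases hex : ∃ t, (freeRun (fr δ) q t).2 = -1
  swap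
  · rw [dif_neg hex] at h
    exact absurd h (by simp)
  · rw [dif_pos hex] at h
    injection h with h
    subst h
    set m := Nat.find hex with hm
    have hspec : (freeRun (fr δ) q m).2 = -1 := Nat.find_spec hex
    have hpre : ∀ t' < m, 0 ≤ (freeRun (fr δ) q t').2 := by
      intro t' ht'
      by_contra hcon
      push_neg at hcon
      obtain ⟨t'', ht'', he''⟩ := ivt_down (hmove_fr hδ) q (by omega : (-1:ℤ) ≤ 0) t' (by omega)
      have := Nat.find_le (h := hex) he''
      omega
    have hcorr : ∀ t ≤ m, trun δ N q ((N:ℤ)+1) t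
        = ((freeRun (fr δ) q t).1, (N:ℤ) + 1 + (freeRun (fr δ) q t).2) :=
      fun t ht => corr_r δ N q t (fun t' h' => hpre t' (by omega))
    have hm1 : 1 ≤ m := by
      rcases Nat.eq_zero_or_pos m with h0 | h0
      · rw [h0] at hspec
        simp [freeRun_zero] at hspec
      · exact h0
    refine ⟨m, hm1, ?_, ?_, ?_⟩
    · rw [hcorr m (le_refl m), hspec]
      exact Prod.ext rfl (by ring)
    · intro t ht
      rw [hcorr t ht]
      unfold rvis
      rw [dif_pos hex]
      exact ⟨t, ht, rfl⟩
    · intro a ha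
      unfold rvis at ha
      rw [dif_pos hex] at ha
      obtain ⟨t, ht, rfl⟩ := ha
      exact ⟨t, ht, by rw [hcorr t ht]⟩

/-- Right-marker phase, trapped case. -/
lemma rph_none (q : Q) (N : ℕ) (h : rexQ δ q = none) :
    (∀ t, (trun δ N q ((N : ℤ) + 1) t).1 ∈ rvis δ q) ∧
    (∀ a ∈ rvis δ q, ∃ t, (trun δ N q ((N : ℤ) + 1) t).1 = a) := by
  unfold rexQ at h
  by_cases hex : ∃ t, (freeRun (fr δ) q t).2 = -1
  · rw [dif_pos hex] at h
    exact absurd h (by simp)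
  · have hpre : ∀ t', 0 ≤ (freeRun (fr δ) q t').2 := by
      intro t'
      by_contra hcon
      push_neg at hcon
      obtain ⟨t'', _, he''⟩ := ivt_down (hmove_fr hδ) q (by omega : (-1:ℤ) ≤ 0) t' (by omega)
      exact hex ⟨t'', he''⟩
    have hcorr : ∀ t, trun δ N q ((N:ℤ)+1) t
        = ((freeRun (fr δ) q t).1, (N:ℤ) + 1 + (freeRun (fr δ) q t).2) :=
      fun t => corr_r δ N q t (fun t' _ => hpre t')
    constructor
    · intro t
      rw [hcorr t]
      unfold rvis
      rw [dif_neg hex]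
      exact ⟨t, rfl⟩
    · intro a ha
      unfold rvis at ha
      rw [dif_neg hex] at ha
      obtain ⟨t, rfl⟩ := ha
      exact ⟨t, by rw [hcorr t]⟩

/-! ### interior excursions -/

lemma exc_pre (q : Q) (u v : ℕ) (hu : 1 ≤ u) (hv : 1 ≤ v) :
    ∀ t, (∀ t' ≤ t, ¬ hitsP (fa δ) q u v t') →
      -(u:ℤ) < (freeRun (fa δ) q t).2 ∧ (freeRun (fa δ) q t).2 < (v:ℤ) := by
  intro t
  induction t with
  | zero =>
      intro _
      rw [freeRun_zero]
      constructor <;> [omega; omega]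
  | succ t ih =>
      intro hnh
      obtain ⟨ih1, ih2⟩ := ih (fun t' h' => hnh t' (by omega))
      have h1 := pos_le_succ (hmove_fa hδ) q t
      have h2 := pos_ge_succ (hmove_fa hδ) q t
      have h3 := hnh (t+1) (le_refl _)
      unfold hitsP at h3
      push_neg at h3
      obtain ⟨h4, h5⟩ := h3
      constructor <;> omega

lemma exc_spec_L (N : ℕ) (q : Q) (u v : ℕ) (hu : 1 ≤ u) (hv : 1 ≤ v)
    (huv : u + v = N + 1) {q2 : Q} {vis2 : Set Q}
    (h : exc (fa δ) q u v = Exc.L q2 vis2) :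
    ∃ m, 1 ≤ m ∧ trun δ N q (u:ℤ) m = (q2, 0) ∧
      (∀ t ≤ m, (trun δ N q (u:ℤ) t).1 ∈ vis2) ∧
      (∀ a ∈ vis2, ∃ t ≤ m, (trun δ N q (u:ℤ) t).1 = a) := by
  unfold exc at h
  by_cases hex : ∃ t, hitsP (fa δ) q u v t
  swap
  · rw [dif_neg hex] at h
    exact absurd h (by simp)
  rw [dif_pos hex] at h
  by_cases hL : (freeRun (fa δ) q (Nat.find hex)).2 = -(u:ℤ)
  swap
  · rw [if_neg hL] at h
    exact absurd h (by simp)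
  · rw [if_pos hL] at h
    injection h with h1 h2
    subst h1; subst h2
    set m := Nat.find hex with hm
    have hpre : ∀ t < m, -(u:ℤ) < (freeRun (fa δ) q t).2 ∧ (freeRun (fa δ) q t).2 < (v:ℤ) :=
      fun t ht => exc_pre hδ q u v hu hv t (fun t' h' => Nat.find_min hex (by omega))
    have hcorr : ∀ t ≤ m, trun δ N q (u:ℤ) t
        = ((freeRun (fa δ) q t).1, (u:ℤ) + (freeRun (fa δ) q t).2) := by
      intro t ht
      apply corr_int
      intro t' ht'
      have := hpre t' (by omega)
      omega
    have hm1 : 1 ≤ m := by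
      rcases Nat.eq_zero_or_pos m with h0 | h0
      · rw [h0, freeRun_zero] at hL
        simp at hL
        omega
      · exact h0
    refine ⟨m, hm1, ?_, ?_, ?_⟩
    · rw [hcorr m (le_refl m), hL]
      exact Prod.ext rfl (by ring)
    · intro t ht
      rw [hcorr t ht]
      exact ⟨t, ht, rfl⟩
    · rintro a ⟨t, ht, rfl⟩
      exact ⟨t, ht, by rw [hcorr t ht]⟩

lemma exc_spec_R (N : ℕ) (q : Q) (u v : ℕ) (hu : 1 ≤ u) (hv : 1 ≤ v)
    (huv : u + v = N + 1) {q2 : Q} {vis2 : Set Q}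
    (h : exc (fa δ) q u v = Exc.R q2 vis2) :
    ∃ m, 1 ≤ m ∧ trun δ N q (u:ℤ) m = (q2, (N:ℤ) + 1) ∧
      (∀ t ≤ m, (trun δ N q (u:ℤ) t).1 ∈ vis2) ∧
      (∀ a ∈ vis2, ∃ t ≤ m, (trun δ N q (u:ℤ) t).1 = a) := by
  unfold exc at h
  by_cases hex : ∃ t, hitsP (fa δ) q u v t
  swap
  · rw [dif_neg hex] at h
    exact absurd h (by simp)
  rw [dif_pos hex] at h
  by_cases hL : (freeRun (fa δ) q (Nat.find hex)).2 = -(u:ℤ)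
  · rw [if_pos hL] at h
    exact absurd h (by simp)
  · rw [if_neg hL] at h
    injection h with h1 h2
    subst h1; subst h2
    set m := Nat.find hex with hm
    have hspec := Nat.find_spec hex
    unfold hitsP at hspec
    have hR : (freeRun (fa δ) q m).2 = (v:ℤ) := by
      rcases hspec with h' | h'
      · exact absurd h' hL
      · exact h'
    have hpre : ∀ t < m, -(u:ℤ) < (freeRun (fa δ) q t).2 ∧ (freeRun (fa δ) q t).2 < (v:ℤ) :=
      fun t ht => exc_pre hδ q u v hu hv t (fun t' h' => Nat.find_min hex (by omega))
    have hcorr : ∀ t ≤ m, trun δ N q (u:ℤ) t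
        = ((freeRun (fa δ) q t).1, (u:ℤ) + (freeRun (fa δ) q t).2) := by
      intro t ht
      apply corr_int
      intro t' ht'
      have := hpre t' (by omega)
      omega
    have hm1 : 1 ≤ m := by
      rcases Nat.eq_zero_or_pos m with h0 | h0
      · rw [h0, freeRun_zero] at hR
        simp at hR
        omega
      · exact h0
    refine ⟨m, hm1, ?_, ?_, ?_⟩
    · rw [hcorr m (le_refl m), hR]
      refine Prod.ext rfl ?_
      dsimp
      have : ((u:ℤ)) + v = (N:ℤ) + 1 := by exact_mod_cast congrArg (Nat.cast : ℕ → ℤ) huv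
      omega
    · intro t ht
      rw [hcorr t ht]
      exact ⟨t, ht, rfl⟩
    · rintro a ⟨t, ht, rfl⟩
      exact ⟨t, ht, by rw [hcorr t ht]⟩

lemma exc_spec_stay (N : ℕ) (q : Q) (u v : ℕ) (hu : 1 ≤ u) (hv : 1 ≤ v)
    (huv : u + v = N + 1) {vis2 : Set Q}
    (h : exc (fa δ) q u v = Exc.stay vis2) :
    (∀ t, (trun δ N q (u:ℤ) t).1 ∈ vis2) ∧
    (∀ a ∈ vis2, ∃ t, (trun δ N q (u:ℤ) t).1 = a) := by
  unfold exc at h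
  by_cases hex : ∃ t, hitsP (fa δ) q u v t
  · rw [dif_pos hex] at h
    by_cases hL : (freeRun (fa δ) q (Nat.find hex)).2 = -(u:ℤ)
    · rw [if_pos hL] at h
      exact absurd h (by simp)
    · rw [if_neg hL] at h
      exact absurd h (by simp)
  · rw [dif_neg hex] at h
    injection h with h1
    subst h1
    push_neg at hex
    have hpre : ∀ t, -(u:ℤ) < (freeRun (fa δ) q t).2 ∧ (freeRun (fa δ) q t).2 < (v:ℤ) :=
      fun t => exc_pre hδ q u v hu hv t (fun t' _ => hex t')
    have hcorr : ∀ t, trun δ N q (u:ℤ) t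
        = ((freeRun (fa δ) q t).1, (u:ℤ) + (freeRun (fa δ) q t).2) := by
      intro t
      apply corr_int
      intro t' _
      have := hpre t'
      omega
    constructor
    · intro t
      rw [hcorr t]
      exact ⟨t, rfl⟩
    · rintro a ⟨t, rfl⟩
      exact ⟨t, by rw [hcorr t]⟩

end hdelta

end Stmt12

set_option linter.unusedSectionVars false
set_option maxHeartbeats 1000000

namespace Stmt12
attribute [local instance] Classical.propDecidable

variable {Q : Type} [Fintype Q]

noncomputable def bounce (δ : Q → TapeSym → Q × ℤ) (N : ℕ) :
    Q × Bool → Option (Q × Bool) × Set Q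
  | (q, false) =>
    match lexQ δ q with
    | none => (none, lvis δ q)
    | some q1 =>
      match exc (fa δ) q1 1 N with
      | .L q2 vis2 => (some (q2, false), lvis δ q ∪ vis2)
      | .R q2 vis2 => (some (q2, true), lvis δ q ∪ vis2)
      | .stay vis2 => (none, lvis δ q ∪ vis2)
  | (q, true) =>
    match rexQ δ q with
    | none => (none, rvis δ q)
    | some q1 =>
      match exc (fa δ) q1 N 1 with
      | .L q2 vis2 => (some (q2, false), rvis δ q ∪ vis2)
      | .R q2 vis2 => (some (q2, true), rvis δ q ∪ vis2)
      | .stay vis2 => (none, rvis δ q ∪ vis2)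

def concPos (N : ℕ) (σ : Q × Bool) : ℤ := if σ.2 then (N : ℤ) + 1 else 0

section hdelta2
variable {δ : Q → TapeSym → Q × ℤ}
  (hδ : ∀ q x, (δ q x).2 = -1 ∨ (δ q x).2 = 0 ∨ (δ q x).2 = 1)
include hδ

lemma bounce_some {N : ℕ} (hN : 1 ≤ N) {σ σ' : Q × Bool}
    (h : (bounce δ N σ).1 = some σ') :
    ∃ m, 1 ≤ m ∧ trun δ N σ.1 (concPos N σ) m = (σ'.1, concPos N σ') ∧
      (∀ t ≤ m, (trun δ N σ.1 (concPos N σ) t).1 ∈ (bounce δ N σ).2) ∧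
      (∀ a ∈ (bounce δ N σ).2, ∃ t ≤ m, (trun δ N σ.1 (concPos N σ) t).1 = a) := by
  obtain ⟨q, side⟩ := σ
  cases side
  · -- left marker entry
    cases hlq : lexQ δ q with
    | none => simp [bounce, hlq] at h
    | some q1 =>
      obtain ⟨m1, hm11, hm1run, hm1vis, hm1vis'⟩ := lph_some hδ q N hlq
      cases hexc : exc (fa δ) q1 1 N with
      | stay vis2 => simp [bounce, hlq, hexc] at h
      | L q2 vis2 =>
        have hσ' : σ' = (q2, false) := by
          simp [bounce, hlq, hexc] at h
          exact h.symm
        subst hσ'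
        obtain ⟨m2, hm21, hm2run, hm2vis, hm2vis'⟩ :=
          exc_spec_L hδ N q1 1 N (le_refl 1) hN (by omega) hexc
        rw [Nat.cast_one] at hm2run hm2vis hm2vis'
        have hvis : (bounce δ N (q, false)).2 = lvis δ q ∪ vis2 := by
          simp [bounce, hlq, hexc]
        have hcomp : ∀ t, trun δ N q (concPos N (q, false)) (m1 + t) = trun δ N q1 1 t := by
          intro t
          have := trun_add δ N q (concPos N (q, false)) m1 t
          rw [show concPos N (q, false) = 0 from rfl] at this ⊢
          rw [this, hm1run]
        refine ⟨m1 + m2, by omega, ?_, ?_, ?_⟩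
        · rw [hcomp m2, hm2run]
          rfl
        · intro t ht
          rw [hvis]
          by_cases h' : t ≤ m1
          · exact Or.inl (by
              have := hm1vis t h'
              rw [show concPos N (q, false) = 0 from rfl]
              exact this)
          · have h2 : t = m1 + (t - m1) := by omega
            rw [h2, hcomp (t - m1)]
            exact Or.inr (hm2vis (t - m1) (by omega))
        · intro a ha
          rw [hvis] at ha
          rcases ha with ha | ha
          · obtain ⟨t, ht, he⟩ := hm1vis' a ha
            exact ⟨t, by omega, by rw [show concPos N (q, false) = 0 from rfl]; exact he⟩
          · obtain ⟨t, ht, he⟩ := hm2vis' a ha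
            exact ⟨m1 + t, by omega, by rw [hcomp t]; exact he⟩
      | R q2 vis2 =>
        have hσ' : σ' = (q2, true) := by
          simp [bounce, hlq, hexc] at h
          exact h.symm
        subst hσ'
        obtain ⟨m2, hm21, hm2run, hm2vis, hm2vis'⟩ :=
          exc_spec_R hδ N q1 1 N (le_refl 1) hN (by omega) hexc
        rw [Nat.cast_one] at hm2run hm2vis hm2vis'
        have hvis : (bounce δ N (q, false)).2 = lvis δ q ∪ vis2 := by
          simp [bounce, hlq, hexc]
        have hcomp : ∀ t, trun δ N q (concPos N (q, false)) (m1 + t) = trun δ N q1 1 t := by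
          intro t
          have := trun_add δ N q (concPos N (q, false)) m1 t
          rw [show concPos N (q, false) = 0 from rfl] at this ⊢
          rw [this, hm1run]
        refine ⟨m1 + m2, by omega, ?_, ?_, ?_⟩
        · rw [hcomp m2, hm2run]
          rfl
        · intro t ht
          rw [hvis]
          by_cases h' : t ≤ m1
          · exact Or.inl (by
              have := hm1vis t h'
              rw [show concPos N (q, false) = 0 from rfl]
              exact this)
          · have h2 : t = m1 + (t - m1) := by omega
            rw [h2, hcomp (t - m1)]
            exact Or.inr (hm2vis (t - m1) (by omega))
        · intro a ha
          rw [hvis] at ha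
          rcases ha with ha | ha
          · obtain ⟨t, ht, he⟩ := hm1vis' a ha
            exact ⟨t, by omega, by rw [show concPos N (q, false) = 0 from rfl]; exact he⟩
          · obtain ⟨t, ht, he⟩ := hm2vis' a ha
            exact ⟨m1 + t, by omega, by rw [hcomp t]; exact he⟩
  · -- right marker entry
    cases hlq : rexQ δ q with
    | none => simp [bounce, hlq] at h
    | some q1 =>
      obtain ⟨m1, hm11, hm1run, hm1vis, hm1vis'⟩ := rph_some hδ q N hlq
      cases hexc : exc (fa δ) q1 N 1 with
      | stay vis2 => simp [bounce, hlq, hexc] at h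
      | L q2 vis2 =>
        have hσ' : σ' = (q2, false) := by
          simp [bounce, hlq, hexc] at h
          exact h.symm
        subst hσ'
        obtain ⟨m2, hm21, hm2run, hm2vis, hm2vis'⟩ :=
          exc_spec_L hδ N q1 N 1 hN (le_refl 1) (by omega) hexc
        have hvis : (bounce δ N (q, true)).2 = rvis δ q ∪ vis2 := by
          simp [bounce, hlq, hexc]
        have hcomp : ∀ t, trun δ N q (concPos N (q, true)) (m1 + t) = trun δ N q1 (N:ℤ) t := by
          intro t
          have := trun_add δ N q (concPos N (q, true)) m1 t
          rw [show concPos N (q, true) = (N:ℤ) + 1 from rfl] at this ⊢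
          rw [this, hm1run]
        refine ⟨m1 + m2, by omega, ?_, ?_, ?_⟩
        · rw [hcomp m2, hm2run]
          rfl
        · intro t ht
          rw [hvis]
          by_cases h' : t ≤ m1
          · exact Or.inl (hm1vis t h')
          · have h2 : t = m1 + (t - m1) := by omega
            rw [h2, hcomp (t - m1)]
            exact Or.inr (hm2vis (t - m1) (by omega))
        · intro a ha
          rw [hvis] at ha
          rcases ha with ha | ha
          · obtain ⟨t, ht, he⟩ := hm1vis' a ha
            exact ⟨t, by omega, he⟩
          · obtain ⟨t, ht, he⟩ := hm2vis' a ha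
            exact ⟨m1 + t, by omega, by rw [hcomp t]; exact he⟩
      | R q2 vis2 =>
        have hσ' : σ' = (q2, true) := by
          simp [bounce, hlq, hexc] at h
          exact h.symm
        subst hσ'
        obtain ⟨m2, hm21, hm2run, hm2vis, hm2vis'⟩ :=
          exc_spec_R hδ N q1 N 1 hN (le_refl 1) (by omega) hexc
        have hvis : (bounce δ N (q, true)).2 = rvis δ q ∪ vis2 := by
          simp [bounce, hlq, hexc]
        have hcomp : ∀ t, trun δ N q (concPos N (q, true)) (m1 + t) = trun δ N q1 (N:ℤ) t := by
          intro t
          have := trun_add δ N q (concPos N (q, true)) m1 t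
          rw [show concPos N (q, true) = (N:ℤ) + 1 from rfl] at this ⊢
          rw [this, hm1run]
        refine ⟨m1 + m2, by omega, ?_, ?_, ?_⟩
        · rw [hcomp m2, hm2run]
          rfl
        · intro t ht
          rw [hvis]
          by_cases h' : t ≤ m1
          · exact Or.inl (hm1vis t h')
          · have h2 : t = m1 + (t - m1) := by omega
            rw [h2, hcomp (t - m1)]
            exact Or.inr (hm2vis (t - m1) (by omega))
        · intro a ha
          rw [hvis] at ha
          rcases ha with ha | ha
          · obtain ⟨t, ht, he⟩ := hm1vis' a ha
            exact ⟨t, by omega, he⟩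
          · obtain ⟨t, ht, he⟩ := hm2vis' a ha
            exact ⟨m1 + t, by omega, by rw [hcomp t]; exact he⟩

lemma bounce_none {N : ℕ} (hN : 1 ≤ N) {σ : Q × Bool}
    (h : (bounce δ N σ).1 = none) :
    (∀ t, (trun δ N σ.1 (concPos N σ) t).1 ∈ (bounce δ N σ).2) ∧
    (∀ a ∈ (bounce δ N σ).2, ∃ t, (trun δ N σ.1 (concPos N σ) t).1 = a) := by
  obtain ⟨q, side⟩ := σ
  cases side
  · cases hlq : lexQ δ q with
    | none =>
      have hvis : (bounce δ N (q, false)).2 = lvis δ q := by simp [bounce, hlq]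
      obtain ⟨h1, h2⟩ := lph_none hδ q N hlq
      rw [hvis]
      exact ⟨fun t => h1 t, fun a ha => h2 a ha⟩
    | some q1 =>
      obtain ⟨m1, hm11, hm1run, hm1vis, hm1vis'⟩ := lph_some hδ q N hlq
      cases hexc : exc (fa δ) q1 1 N with
      | L q2 vis2 => simp [bounce, hlq, hexc] at h
      | R q2 vis2 => simp [bounce, hlq, hexc] at h
      | stay vis2 =>
        obtain ⟨hs1, hs2⟩ := exc_spec_stay hδ N q1 1 N (le_refl 1) hN (by omega) hexc
        rw [Nat.cast_one] at hs1 hs2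
        have hvis : (bounce δ N (q, false)).2 = lvis δ q ∪ vis2 := by
          simp [bounce, hlq, hexc]
        have hcomp : ∀ t, trun δ N q (concPos N (q, false)) (m1 + t) = trun δ N q1 1 t := by
          intro t
          have := trun_add δ N q (concPos N (q, false)) m1 t
          rw [show concPos N (q, false) = 0 from rfl] at this ⊢
          rw [this, hm1run]
        rw [hvis]
        constructor
        · intro t
          by_cases h' : t ≤ m1
          · exact Or.inl (hm1vis t h')
          · have h2 : t = m1 + (t - m1) := by omega
            rw [show concPos N (q, false) = 0 from rfl, ← show concPos N (q, false) = 0 from rfl,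
              h2, hcomp (t - m1)]
            exact Or.inr (hs1 (t - m1))
        · intro a ha
          rcases ha with ha | ha
          · obtain ⟨t, ht, he⟩ := hm1vis' a ha
            exact ⟨t, he⟩
          · obtain ⟨t, he⟩ := hs2 a ha
            exact ⟨m1 + t, by rw [hcomp t]; exact he⟩
  · cases hlq : rexQ δ q with
    | none =>
      have hvis : (bounce δ N (q, true)).2 = rvis δ q := by simp [bounce, hlq]
      obtain ⟨h1, h2⟩ := rph_none hδ q N hlq
      rw [hvis]
      exact ⟨fun t => h1 t, fun a ha => h2 a ha⟩
    | some q1 =>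
      obtain ⟨m1, hm11, hm1run, hm1vis, hm1vis'⟩ := rph_some hδ q N hlq
      cases hexc : exc (fa δ) q1 N 1 with
      | L q2 vis2 => simp [bounce, hlq, hexc] at h
      | R q2 vis2 => simp [bounce, hlq, hexc] at h
      | stay vis2 =>
        obtain ⟨hs1, hs2⟩ := exc_spec_stay hδ N q1 N 1 hN (le_refl 1) (by omega) hexc
        have hvis : (bounce δ N (q, true)).2 = rvis δ q ∪ vis2 := by
          simp [bounce, hlq, hexc]
        have hcomp : ∀ t, trun δ N q (concPos N (q, true)) (m1 + t) = trun δ N q1 (N:ℤ) t := by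
          intro t
          have := trun_add δ N q (concPos N (q, true)) m1 t
          rw [show concPos N (q, true) = (N:ℤ) + 1 from rfl] at this ⊢
          rw [this, hm1run]
        rw [hvis]
        constructor
        · intro t
          by_cases h' : t ≤ m1
          · exact Or.inl (hm1vis t h')
          · have h2 : t = m1 + (t - m1) := by omega
            rw [h2, hcomp (t - m1)]
            exact Or.inr (hs1 (t - m1))
        · intro a ha
          rcases ha with ha | ha
          · obtain ⟨t, ht, he⟩ := hm1vis' a ha
            exact ⟨t, he⟩
          · obtain ⟨t, he⟩ := hs2 a ha
            exact ⟨m1 + t, by rw [hcomp t]; exact he⟩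

end hdelta2

end Stmt12

set_option linter.unusedSectionVars false
set_option maxHeartbeats 1000000

namespace Stmt12
attribute [local instance] Classical.propDecidable

variable {Q : Type} [Fintype Q]

noncomputable def initD (δ : Q → TapeSym → Q × ℤ) (s : Q) (N p : ℕ) :
    Option (Q × Bool) × Set Q :=
  if p = 0 then (some (s, false), {s})
  else if p = N + 1 then (some (s, true), {s})
  else match exc (fa δ) s p (N + 1 - p) with
    | .L q2 vis2 => (some (q2, false), vis2)
    | .R q2 vis2 => (some (q2, true), vis2)
    | .stay vis2 => (none, vis2)

noncomputable def seqB (δ : Q → TapeSym → Q × ℤ) (N : ℕ) (o : Option (Q × Bool)) :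
    ℕ → Option (Q × Bool) :=
  fun n => (fun o' => Option.bind o' (fun σ => (bounce δ N σ).1))^[n] o

lemma seqB_zero (δ : Q → TapeSym → Q × ℤ) (N : ℕ) (o : Option (Q × Bool)) :
    seqB δ N o 0 = o := rfl

lemma seqB_succ (δ : Q → TapeSym → Q × ℤ) (N : ℕ) (o : Option (Q × Bool)) (n : ℕ) :
    seqB δ N o (n + 1) = Option.bind (seqB δ N o n) (fun σ => (bounce δ N σ).1) := by
  unfold seqB
  rw [Function.iterate_succ_apply']

section hdelta3
variable {δ : Q → TapeSym → Q × ℤ}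
  (hδ : ∀ q x, (δ q x).2 = -1 ∨ (δ q x).2 = 0 ∨ (δ q x).2 = 1)
include hδ

lemma init_some {s : Q} {N p : ℕ} (hN : 1 ≤ N) (hp : p ≤ N + 1) {σ0 : Q × Bool}
    (h : (initD δ s N p).1 = some σ0) :
    ∃ m, trun δ N s (p : ℤ) m = (σ0.1, concPos N σ0) ∧
      (∀ t ≤ m, (trun δ N s (p : ℤ) t).1 ∈ (initD δ s N p).2) ∧
      (∀ a ∈ (initD δ s N p).2, ∃ t ≤ m, (trun δ N s (p : ℤ) t).1 = a) := by
  by_cases hp0 : p = 0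
  · subst hp0
    have hσ0 : σ0 = (s, false) := by
      simp [initD] at h
      exact h.symm
    subst hσ0
    have hvis : (initD δ s N 0).2 = {s} := by simp [initD]
    refine ⟨0, by simp [trun, concPos], ?_, ?_⟩
    · intro t ht
      rw [Nat.le_zero.1 ht, hvis]
      simp [trun]
    · intro a ha
      rw [hvis] at ha
      rw [Set.mem_singleton_iff] at ha
      subst ha
      exact ⟨0, le_refl _, by simp [trun]⟩
  · by_cases hp1 : p = N + 1
    · subst hp1
      have hσ0 : σ0 = (s, true) := by
        simp [initD] at h
        exact h.symm
      subst hσ0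
      have hvis : (initD δ s N (N+1)).2 = {s} := by simp [initD]
      refine ⟨0, by simp [trun, concPos], ?_, ?_⟩
      · intro t ht
        rw [Nat.le_zero.1 ht, hvis]
        simp [trun]
      · intro a ha
        rw [hvis] at ha
        rw [Set.mem_singleton_iff] at ha
        subst ha
        exact ⟨0, le_refl _, by simp [trun]⟩
    · have hu : 1 ≤ p := by omega
      have hv : 1 ≤ N + 1 - p := by omega
      have huv : p + (N + 1 - p) = N + 1 := by omega
      cases hexc : exc (fa δ) s p (N + 1 - p) with
      | stay vis2 =>
        rw [initD, if_neg hp0, if_neg hp1, hexc] at h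
        simp at h
      | L q2 vis2 =>
        have hσ0 : σ0 = (q2, false) := by
          rw [initD, if_neg hp0, if_neg hp1, hexc] at h
          simp at h
          exact h.symm
        subst hσ0
        have hvis : (initD δ s N p).2 = vis2 := by
          rw [initD, if_neg hp0, if_neg hp1, hexc]
        obtain ⟨m, _, hrun, hv1, hv2⟩ := exc_spec_L hδ N s p (N+1-p) hu hv huv hexc
        rw [hvis]
        exact ⟨m, hrun, hv1, hv2⟩
      | R q2 vis2 =>
        have hσ0 : σ0 = (q2, true) := by
          rw [initD, if_neg hp0, if_neg hp1, hexc] at h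
          simp at h
          exact h.symm
        subst hσ0
        have hvis : (initD δ s N p).2 = vis2 := by
          rw [initD, if_neg hp0, if_neg hp1, hexc]
        obtain ⟨m, _, hrun, hv1, hv2⟩ := exc_spec_R hδ N s p (N+1-p) hu hv huv hexc
        rw [hvis]
        exact ⟨m, hrun, hv1, hv2⟩

lemma init_none {s : Q} {N p : ℕ} (hN : 1 ≤ N) (hp : p ≤ N + 1)
    (h : (initD δ s N p).1 = none) :
    (∀ t, (trun δ N s (p : ℤ) t).1 ∈ (initD δ s N p).2) ∧
    (∀ a ∈ (initD δ s N p).2, ∃ t, (trun δ N s (p : ℤ) t).1 = a) := by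
  by_cases hp0 : p = 0
  · subst hp0; simp [initD] at h
  by_cases hp1 : p = N + 1
  · subst hp1; simp [initD] at h
  have hu : 1 ≤ p := by omega
  have hv : 1 ≤ N + 1 - p := by omega
  have huv : p + (N + 1 - p) = N + 1 := by omega
  cases hexc : exc (fa δ) s p (N + 1 - p) with
  | L q2 vis2 => rw [initD, if_neg hp0, if_neg hp1, hexc] at h; simp at h
  | R q2 vis2 => rw [initD, if_neg hp0, if_neg hp1, hexc] at h; simp at h
  | stay vis2 =>
    have hvis : (initD δ s N p).2 = vis2 := by
      rw [initD, if_neg hp0, if_neg hp1, hexc]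
    obtain ⟨h1, h2⟩ := exc_spec_stay hδ N s p (N+1-p) hu hv huv hexc
    rw [hvis]
    exact ⟨h1, h2⟩

theorem muteChar (s : Q) {N p : ℕ} (hN : 1 ≤ N) (hp : p ≤ N + 1) (B : Q → Prop) :
    (∀ t, ¬ B (trun δ N s (p : ℤ) t).1) ↔
      ((∀ a ∈ (initD δ s N p).2, ¬ B a) ∧
       ∀ n σ, seqB δ N (initD δ s N p).1 n = some σ → ∀ a ∈ (bounce δ N σ).2, ¬ B a) := by
  constructor
  · intro hmute
    have reach : ∀ n σ, seqB δ N (initD δ s N p).1 n = some σ →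
        ∃ τ, trun δ N s (p : ℤ) τ = (σ.1, concPos N σ) := by
      intro n
      induction n with
      | zero =>
          intro σ h0
          rw [seqB_zero] at h0
          obtain ⟨m, hrun, _, _⟩ := init_some hδ hN hp h0
          exact ⟨m, hrun⟩
      | succ n ih =>
          intro σ' h
          rw [seqB_succ] at h
          cases hn : seqB δ N (initD δ s N p).1 n with
          | none => rw [hn] at h; simp at h
          | some σ =>
            rw [hn] at h
            replace h : (bounce δ N σ).1 = some σ' := h
            obtain ⟨τ, hτ⟩ := ih σ hn
            obtain ⟨m, _, hrun, _, _⟩ := bounce_some hδ hN h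
            refine ⟨τ + m, ?_⟩
            rw [trun_add, hτ]
            exact hrun
    constructor
    · intro a ha
      cases hin : (initD δ s N p).1 with
      | some σ0 =>
          obtain ⟨m, _, _, hconv⟩ := init_some hδ hN hp hin
          obtain ⟨t, _, he⟩ := hconv a ha
          exact he ▸ hmute t
      | none =>
          obtain ⟨_, hconv⟩ := init_none hδ hN hp hin
          obtain ⟨t, he⟩ := hconv a ha
          exact he ▸ hmute t
    · intro n σ hσ a ha
      obtain ⟨τ, hτ⟩ := reach n σ hσ
      cases hb : (bounce δ N σ).1 with
      | some σ' =>
          obtain ⟨m, _, _, hvis, hconv⟩ := bounce_some hδ hN hb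
          obtain ⟨t, _, he⟩ := hconv a ha
          have h2 : trun δ N s (p:ℤ) (τ + t) = trun δ N σ.1 (concPos N σ) t := by
            rw [trun_add, hτ]
          have h3 := hmute (τ + t)
          rw [h2, he] at h3
          exact h3
      | none =>
          obtain ⟨_, hconv⟩ := bounce_none hδ hN hb
          obtain ⟨t, he⟩ := hconv a ha
          have h2 : trun δ N s (p:ℤ) (τ + t) = trun δ N σ.1 (concPos N σ) t := by
            rw [trun_add, hτ]
          have h3 := hmute (τ + t)
          rw [h2, he] at h3
          exact h3
  · rintro ⟨hinit, hph⟩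
    have CL : ∀ t n σ τ, seqB δ N (initD δ s N p).1 n = some σ →
        trun δ N s (p:ℤ) τ = (σ.1, concPos N σ) →
        ¬ B (trun δ N s (p:ℤ) (τ + t)).1 := by
      intro t
      induction t using Nat.strong_induction_on with
      | _ t ih =>
        intro n σ τ hσ hτ
        have hstep : trun δ N s (p:ℤ) (τ + t) = trun δ N σ.1 (concPos N σ) t := by
          rw [trun_add, hτ]
        cases hb : (bounce δ N σ).1 with
        | none =>
          obtain ⟨h1, _⟩ := bounce_none hδ hN hb
          rw [hstep]
          exact hph n σ hσ _ (h1 t)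
        | some σ' =>
          obtain ⟨m, hm1, hrun, hvis, _⟩ := bounce_some hδ hN hb
          by_cases hle : t ≤ m
          · rw [hstep]
            exact hph n σ hσ _ (hvis t hle)
          · have hσ' : seqB δ N (initD δ s N p).1 (n+1) = some σ' := by
              rw [seqB_succ, hσ]
              simp [hb]
            have hτ' : trun δ N s (p:ℤ) (τ + m) = (σ'.1, concPos N σ') := by
              rw [trun_add, hτ]
              exact hrun
            have heq : τ + t = (τ + m) + (t - m) := by omega
            rw [heq]
            exact ih (t - m) (by omega) (n+1) σ' (τ + m) hσ' hτ'
    intro t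
    cases hin : (initD δ s N p).1 with
    | none =>
      obtain ⟨h1, _⟩ := init_none hδ hN hp hin
      exact hinit _ (h1 t)
    | some σ0 =>
      obtain ⟨m, hrun, hvis, _⟩ := init_some hδ hN hp hin
      by_cases hle : t ≤ m
      · exact hinit _ (hvis t hle)
      · have heq : t = m + (t - m) := by omega
        rw [heq]
        exact CL (t - m) 0 σ0 m (by rw [seqB_zero]; exact hin) hrun

end hdelta3

end Stmt12

set_option linter.unusedSectionVars false
set_option maxHeartbeats 1000000

namespace Stmt12
attribute [local instance] Classical.propDecidable

variable {Q : Type} [Fintype Q]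

def TT (Q : Type) [Fintype Q] : ℕ := 2 * thr Q - 1

lemma thr_ge : 3 ≤ thr Q := by unfold thr; omega
lemma TT_ge_thr : thr Q ≤ TT Q := by have := thr_ge (Q := Q); unfold TT; omega
lemma TT_ge_one : 1 ≤ TT Q := by have := thr_ge (Q := Q); unfold TT; omega

noncomputable def inv1 (Q : Type) [Fintype Q] (m : ℕ) : ℕ ⊕ ℕ :=
  if m < thr Q then Sum.inl m else Sum.inr ((m - thr Q) % per Q)

lemma inv1_cases {a b : ℕ} (h : inv1 Q a = inv1 Q b) :
    a = b ∨ (thr Q ≤ a ∧ thr Q ≤ b ∧ (a - thr Q) % per Q = (b - thr Q) % per Q) := by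
  unfold inv1 at h
  by_cases h1 : a < thr Q <;> by_cases h2 : b < thr Q
  · rw [if_pos h1, if_pos h2] at h
    exact Or.inl (by injection h)
  · rw [if_pos h1, if_neg h2] at h
    exact absurd h (by simp)
  · rw [if_neg h1, if_pos h2] at h
    exact absurd h (by simp)
  · rw [if_neg h1, if_neg h2] at h
    exact Or.inr ⟨by omega, by omega, by injection h⟩

lemma res_iff {Θ Λ a b : ℕ} (ha : Θ ≤ a) (hb : Θ ≤ b) :
    (a - Θ) % Λ = (b - Θ) % Λ ↔ a % Λ = b % Λ := by
  constructor
  · intro h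
    have h2 : Nat.ModEq Λ (Θ + (a - Θ)) (Θ + (b - Θ)) := Nat.ModEq.add_left Θ h
    rwa [Nat.add_sub_cancel' ha, Nat.add_sub_cancel' hb] at h2
  · intro h
    have h2 : Nat.ModEq Λ (Θ + (a - Θ)) (Θ + (b - Θ)) := by
      rw [Nat.add_sub_cancel' ha, Nat.add_sub_cancel' hb]
      exact h
    exact Nat.ModEq.add_left_cancel' Θ h2

section hdelta4
variable {δ : Q → TapeSym → Q × ℤ}
  (hδ : ∀ q x, (δ q x).2 = -1 ∨ (δ q x).2 = 0 ∨ (δ q x).2 = 1)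
include hδ

theorem FACT (s : Q) (B : Q → Prop) {N p N' p' : ℕ}
    (hN : TT Q ≤ N) (hN' : TT Q ≤ N') (hp : p ≤ N + 1) (hp' : p' ≤ N' + 1)
    (h1 : inv1 Q p = inv1 Q p') (h2 : inv1 Q (N + 1 - p) = inv1 Q (N' + 1 - p')) :
    ((∀ t, ¬ B (trun δ N s (p : ℤ) t).1) ↔ (∀ t, ¬ B (trun δ N' s (p' : ℤ) t).1)) := by
  have hthr := thr_ge (Q := Q)
  have hTTthr := TT_ge_thr (Q := Q)
  have hN1 : 1 ≤ N := le_trans (TT_ge_one (Q := Q)) hN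
  have hN1' : 1 ≤ N' := le_trans (TT_ge_one (Q := Q)) hN'
  have hU := inv1_cases h1
  have hM := inv1_cases h2
  -- p ≡ p' and (N+1-p) ≡ (N'+1-p') mod per
  have hpmod : p % per Q = p' % per Q := by
    rcases hU with rfl | ⟨ha, hb, hc⟩
    · rfl
    · exact (res_iff ha hb).1 hc
  have hmmod : (N + 1 - p) % per Q = (N' + 1 - p') % per Q := by
    rcases hM with he | ⟨ha, hb, hc⟩
    · rw [he]
    · exact (res_iff ha hb).1 hc
  have hNmod : N % per Q = N' % per Q := by
    have hadd : Nat.ModEq (per Q) (p + (N + 1 - p)) (p' + (N' + 1 - p')) :=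
      Nat.ModEq.add hpmod hmmod
    have e1 : p + (N + 1 - p) = N + 1 := by omega
    have e2 : p' + (N' + 1 - p') = N' + 1 := by omega
    rw [e1, e2] at hadd
    exact Nat.ModEq.add_right_cancel' 1 hadd
  -- bounce functions agree
  have hexcN : ∀ q1 : Q, exc (fa δ) q1 1 N = exc (fa δ) q1 1 N' := by
    intro q1
    exact excU (hmove_fa hδ) q1 (le_refl 1) (by omega) (le_refl 1) (by omega)
      (Or.inl rfl)
      (Or.inr ⟨by omega, by omega, (res_iff (by omega) (by omega)).2 hNmod⟩)
  have hexcN' : ∀ q1 : Q, exc (fa δ) q1 N 1 = exc (fa δ) q1 N' 1 := by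
    intro q1
    exact excU (hmove_fa hδ) q1 (by omega) (le_refl 1) (by omega) (le_refl 1)
      (Or.inr ⟨by omega, by omega, (res_iff (by omega) (by omega)).2 hNmod⟩)
      (Or.inl rfl)
  have hbounce : bounce δ N = bounce δ N' := by
    funext σ
    obtain ⟨q, side⟩ := σ
    cases side
    · cases hlq : lexQ δ q with
      | none => simp [bounce, hlq]
      | some q1 => simp only [bounce, hlq]; rw [hexcN q1]
    · cases hlq : rexQ δ q with
      | none => simp [bounce, hlq]
      | some q1 => simp only [bounce, hlq]; rw [hexcN' q1]
  -- initial data agree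
  have hinit : initD δ s N p = initD δ s N' p' := by
    by_cases hp0 : p = 0
    · have hp0' : p' = 0 := by
        rcases hU with he | ⟨ha, _, _⟩
        · omega
        · omega
      rw [hp0, hp0']
      simp [initD]
    · have hp0' : p' ≠ 0 := by
        rcases hU with he | ⟨ha, hb, _⟩
        · omega
        · omega
      by_cases hpN : p = N + 1
      · have hpN' : p' = N' + 1 := by
          have hm0 : N + 1 - p = 0 := by omega
          rcases hM with he | ⟨ha, hb, _⟩
          · omega
          · omega
        have e1 : initD δ s N p = (some (s, true), {s}) := by
          unfold initD
          rw [if_neg hp0, if_pos hpN]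
        have e2 : initD δ s N' p' = (some (s, true), {s}) := by
          unfold initD
          rw [if_neg hp0', if_pos hpN']
        rw [e1, e2]
      · have hpN' : p' ≠ N' + 1 := by
          have hm0 : N + 1 - p ≠ 0 := by omega
          rcases hM with he | ⟨ha, hb, _⟩
          · omega
          · omega
        have hexcI : exc (fa δ) s p (N + 1 - p) = exc (fa δ) s p' (N' + 1 - p') := by
          apply excU (hmove_fa hδ) s (by omega) (by omega) (by omega) (by omega)
          · rcases hU with he | ⟨ha, hb, hc⟩
            · exact Or.inl he
            · exact Or.inr ⟨ha, hb, hc⟩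
          · rcases hM with he | ⟨ha, hb, hc⟩
            · exact Or.inl he
            · exact Or.inr ⟨ha, hb, hc⟩
        unfold initD
        rw [if_neg hp0, if_neg hp0', if_neg hpN, if_neg hpN', hexcI]
  rw [muteChar hδ s hN1 hp B, muteChar hδ s hN1' hp' B, hinit, hbounce]
  have hseq : ∀ o n, seqB δ N o n = seqB δ N' o n := by
    intro o n
    unfold seqB
    rw [hbounce]
  constructor
  · rintro ⟨ha, hb⟩
    exact ⟨ha, fun n σ h => hb n σ (by rw [hseq]; exact h)⟩
  · rintro ⟨ha, hb⟩
    exact ⟨ha, fun n σ h => hb n σ (by rw [← hseq]; exact h)⟩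

end hdelta4

end Stmt12

set_option linter.unusedSectionVars false
set_option maxHeartbeats 1000000

namespace Stmt12
attribute [local instance] Classical.propDecidable

lemma isLinear_singleton {k : ℕ} (v : Fin k → ℕ) : IsLinearSet' {v} := by
  refine ⟨0, v, Fin.elim0, ?_⟩
  ext w
  constructor
  · rintro rfl
    exact ⟨Fin.elim0, by simp⟩
  · rintro ⟨c, rfl⟩
    simp

lemma isSemilinear_empty {k : ℕ} : IsSemilinearSet' (∅ : Set (Fin k → ℕ)) := by
  refine ⟨0, Fin.elim0, fun i => i.elim0, ?_⟩
  simp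

lemma isSemilinear_singleton {k : ℕ} (v : Fin k → ℕ) : IsSemilinearSet' {v} := by
  refine ⟨1, fun _ => {v}, fun _ => isLinear_singleton v, ?_⟩
  simp

lemma isSemilinear_of_isLinear {k : ℕ} {S : Set (Fin k → ℕ)} (h : IsLinearSet' S) :
    IsSemilinearSet' S := by
  refine ⟨1, fun _ => S, fun _ => h, ?_⟩
  exact (Set.iUnion_const S).symm

lemma isSemilinear_union {k : ℕ} {S T : Set (Fin k → ℕ)}
    (hS : IsSemilinearSet' S) (hT : IsSemilinearSet' T) : IsSemilinearSet' (S ∪ T) := by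
  obtain ⟨m, f, hf, rfl⟩ := hS
  obtain ⟨m', f', hf', rfl⟩ := hT
  refine ⟨m + m', fun j => if h : (j : ℕ) < m then f ⟨j, h⟩ else f' ⟨(j : ℕ) - m, by omega⟩,
    ?_, ?_⟩
  · intro j
    dsimp only
    by_cases h : (j : ℕ) < m
    · rw [dif_pos h]; exact hf _
    · rw [dif_neg h]; exact hf' _
  · ext x
    simp only [Set.mem_union, Set.mem_iUnion]
    constructor
    · rintro (⟨i, hi⟩ | ⟨i, hi⟩)
      · refine ⟨⟨i, by omega⟩, ?_⟩
        dsimp only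
        rw [dif_pos (by simpa using i.isLt)]
        simpa using hi
      · refine ⟨⟨m + i, by omega⟩, ?_⟩
        dsimp only
        rw [dif_neg (by simp)]
        convert hi using 2
        ext
        simp
    · rintro ⟨j, hj⟩
      by_cases h : (j : ℕ) < m
      · rw [dif_pos h] at hj
        exact Or.inl ⟨_, hj⟩
      · rw [dif_neg h] at hj
        exact Or.inr ⟨_, hj⟩

lemma isSemilinear_biUnion {k : ℕ} {ι : Type} (F : Finset ι) (s : ι → Set (Fin k → ℕ))
    (h : ∀ i, IsSemilinearSet' (s i)) : IsSemilinearSet' (⋃ i ∈ F, s i) := by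
  classical
  induction F using Finset.induction_on with
  | empty => simpa using isSemilinear_empty
  | insert _ _ ha ih =>
      rw [Finset.set_biUnion_insert]
      exact isSemilinear_union (h _) ih

lemma isSemilinear_iUnion_fin {k : ℕ} {ι : Type} [Fintype ι] (s : ι → Set (Fin k → ℕ))
    (h : ∀ i, IsSemilinearSet' (s i)) : IsSemilinearSet' (⋃ i, s i) := by
  have h2 := isSemilinear_biUnion (Finset.univ : Finset ι) s h
  have h3 : (⋃ i ∈ (Finset.univ : Finset ι), s i) = ⋃ i, s i := by
    ext x
    simp
  rwa [h3] at h2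

lemma isSemilinear_finite {k : ℕ} {S : Set (Fin k → ℕ)} (hS : S.Finite) :
    IsSemilinearSet' S := by
  refine Set.Finite.induction_on (motive := fun S _ => IsSemilinearSet' S) S hS isSemilinear_empty ?_
  intro a s _ _ ih
  rw [Set.insert_eq]
  exact isSemilinear_union (isSemilinear_singleton _) ih

lemma isLinear_one_param {k : ℕ} (a b : Fin k → ℕ) :
    IsLinearSet' {v : Fin k → ℕ | ∃ j : ℕ, v = a + j • b} := by
  refine ⟨1, a, fun _ => b, ?_⟩
  ext w
  constructor
  · rintro ⟨j, rfl⟩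
    exact ⟨fun _ => j, by simp⟩
  · rintro ⟨c, rfl⟩
    exact ⟨c 0, by simp⟩

lemma isLinear_two_param {k : ℕ} (a b₁ b₂ : Fin k → ℕ) :
    IsLinearSet' {v : Fin k → ℕ | ∃ j₁ j₂ : ℕ, v = a + j₁ • b₁ + j₂ • b₂} := by
  refine ⟨2, a, ![b₁, b₂], ?_⟩
  ext w
  constructor
  · rintro ⟨j₁, j₂, rfl⟩
    refine ⟨![j₁, j₂], ?_⟩
    simp [Fin.sum_univ_two, add_assoc]
  · rintro ⟨c, rfl⟩
    refine ⟨c 0, c 1, ?_⟩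
    simp [Fin.sum_univ_two, add_assoc]

lemma mod_param {Θ Λ ρ : ℕ} (hρ : ρ < Λ) (x : ℕ) :
    (Θ ≤ x ∧ (x - Θ) % Λ = ρ) ↔ ∃ j, x = Θ + ρ + j * Λ := by
  constructor
  · rintro ⟨h1, h2⟩
    refine ⟨(x - Θ) / Λ, ?_⟩
    have h3 := Nat.div_add_mod (x - Θ) Λ
    rw [h2, Nat.mul_comm] at h3
    omega
  · rintro ⟨j, rfl⟩
    refine ⟨by omega, ?_⟩
    have h3 : Θ + ρ + j * Λ - Θ = ρ + j * Λ := by omega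
    rw [h3, Nat.add_mul_mod_self_right, Nat.mod_eq_of_lt hρ]

end Stmt12

set_option linter.unusedSectionVars false
set_option maxHeartbeats 1000000

namespace Stmt12
attribute [local instance] Classical.propDecidable

variable {Q : Type} [Fintype Q]

def cval : Fin (thr Q) ⊕ Fin (per Q) → ℕ ⊕ ℕ
  | .inl e => .inl (e : ℕ)
  | .inr ρ => .inr (ρ : ℕ)

def ClassSet (c : (Fin (thr Q) ⊕ Fin (per Q)) × (Fin (thr Q) ⊕ Fin (per Q))) :
    Set (Fin 2 → ℕ) :=
  {v | TT Q ≤ v 0 ∧ v 1 ≤ v 0 + 1 ∧ inv1 Q (v 1) = cval c.1 ∧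
    inv1 Q (v 0 + 1 - v 1) = cval c.2}

lemma fin2_ext {w w' : Fin 2 → ℕ} (h0 : w 0 = w' 0) (h1 : w 1 = w' 1) : w = w' := by
  funext i
  fin_cases i
  · exact h0
  · exact h1

lemma inv1_inl {m e : ℕ} (h : inv1 Q m = Sum.inl e) : m = e ∧ m < thr Q := by
  unfold inv1 at h
  by_cases h1 : m < thr Q
  · rw [if_pos h1] at h
    exact ⟨by injection h, h1⟩
  · rw [if_neg h1] at h
    exact absurd h (by simp)

lemma inv1_inr {m ρ : ℕ} (h : inv1 Q m = Sum.inr ρ) :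
    thr Q ≤ m ∧ (m - thr Q) % per Q = ρ := by
  unfold inv1 at h
  by_cases h1 : m < thr Q
  · rw [if_pos h1] at h
    exact absurd h (by simp)
  · rw [if_neg h1] at h
    exact ⟨by omega, by injection h⟩

lemma inv1_of_lt {m : ℕ} (h : m < thr Q) : inv1 Q m = Sum.inl m := by
  unfold inv1
  rw [if_pos h]

lemma inv1_of_ge {m : ℕ} (h : thr Q ≤ m) : inv1 Q m = Sum.inr ((m - thr Q) % per Q) := by
  unfold inv1
  rw [if_neg (by omega)]

lemma cval_exists (m : ℕ) : ∃ c : Fin (thr Q) ⊕ Fin (per Q), inv1 Q m = cval c := by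
  by_cases h : m < thr Q
  · exact ⟨Sum.inl ⟨m, h⟩, by rw [inv1_of_lt h]; rfl⟩
  · refine ⟨Sum.inr ⟨(m - thr Q) % per Q,
      Nat.mod_lt _ (by have := one_le_per (Q := Q); omega)⟩, ?_⟩
    rw [inv1_of_ge (by omega)]
    rfl

lemma TT_eq : TT Q = 2 * thr Q - 1 := rfl

theorem classSet_semilinear
    (c : (Fin (thr Q) ⊕ Fin (per Q)) × (Fin (thr Q) ⊕ Fin (per Q))) :
    IsSemilinearSet' (ClassSet c) := by
  have hthr := thr_ge (Q := Q)
  have hper := one_le_per (Q := Q)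
  have hTT := TT_eq (Q := Q)
  obtain ⟨c1, c2⟩ := c
  rcases c1 with e₁ | ρ₁ <;> rcases c2 with e₂ | ρ₂
  · -- both small: empty
    have he₁ := e₁.isLt
    have he₂ := e₂.isLt
    have : ClassSet (Sum.inl e₁, Sum.inl e₂) = ∅ := by
      rw [Set.eq_empty_iff_forall_notMem]
      rintro v ⟨h0, h1, h2, h3⟩
      obtain ⟨h4, h5⟩ := inv1_inl h2
      obtain ⟨h6, h7⟩ := inv1_inl h3
      omega
    rw [this]
    exact isSemilinear_empty
  · -- v1 = e₁ fixed, right distance periodic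
    have he₁ := e₁.isLt
    have hρ₂ := ρ₂.isLt
    have hex : ∃ n : ℕ, TT Q ≤ n ∧ thr Q ≤ n + 1 - (e₁:ℕ) ∧
        (n + 1 - (e₁:ℕ) - thr Q) % per Q = (ρ₂:ℕ) := by
      refine ⟨thr Q + (e₁:ℕ) + (ρ₂:ℕ) + (TT Q + 1) * per Q - 1, ?_, ?_, ?_⟩
      · have := Nat.le_mul_of_pos_right (TT Q + 1) (by omega : 0 < per Q)
        omega
      · omega
      · have hk : thr Q + (e₁:ℕ) + (ρ₂:ℕ) + (TT Q + 1) * per Q - 1 + 1 - (e₁:ℕ) - thr Q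
            = (ρ₂:ℕ) + (TT Q + 1) * per Q := by omega
        rw [hk, Nat.add_mul_mod_self_right, Nat.mod_eq_of_lt hρ₂]
    have hspec := Nat.find_spec hex
    set N₀ := Nat.find hex with hN₀
    obtain ⟨hs0, hs1, hs2⟩ := hspec
    obtain ⟨j₀, hj₀⟩ := (mod_param hρ₂ (N₀ + 1 - (e₁:ℕ))).1 ⟨hs1, hs2⟩
    have hcs : ClassSet (Sum.inl e₁, Sum.inr ρ₂) =
        {v : Fin 2 → ℕ | ∃ j : ℕ, v = ![N₀, (e₁:ℕ)] + j • ![per Q, 0]} := by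
      ext v
      constructor
      · rintro ⟨h0, h1, h2, h3⟩
        obtain ⟨h4, h5⟩ := inv1_inl h2
        obtain ⟨h6, h7⟩ := inv1_inr h3
        have hvP : TT Q ≤ v 0 ∧ thr Q ≤ v 0 + 1 - (e₁:ℕ) ∧
            (v 0 + 1 - (e₁:ℕ) - thr Q) % per Q = (ρ₂:ℕ) := by
          refine ⟨h0, ?_, ?_⟩
          · omega
          · rw [show v 0 + 1 - (e₁:ℕ) = v 0 + 1 - v 1 by omega]
            exact h7
        have hle : N₀ ≤ v 0 := Nat.find_le hvP
        obtain ⟨j₁, hj₁⟩ := (mod_param hρ₂ (v 0 + 1 - (e₁:ℕ))).1 ⟨hvP.2.1, hvP.2.2⟩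
        have hjle : j₀ ≤ j₁ := by
          by_contra hcon
          push_neg at hcon
          have := (Nat.mul_lt_mul_right (by omega : 0 < per Q)).mpr hcon
          omega
        refine ⟨j₁ - j₀, ?_⟩
        have hsm : (j₁ - j₀) * per Q = j₁ * per Q - j₀ * per Q := Nat.sub_mul _ _ _
        apply fin2_ext
        · simp only [Pi.add_apply, Pi.smul_apply, smul_eq_mul, Matrix.cons_val_zero]
          omega
        · simp only [Pi.add_apply, Pi.smul_apply, smul_eq_mul, Matrix.cons_val_one,
            Matrix.head_cons, Matrix.cons_val_zero]
          omega
      · rintro ⟨j, rfl⟩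
        have hv0 : (![N₀, (e₁:ℕ)] + j • ![per Q, 0]) 0 = N₀ + j * per Q := by
          simp
        have hv1 : (![N₀, (e₁:ℕ)] + j • ![per Q, 0]) 1 = (e₁:ℕ) := by
          simp
        refine ⟨?_, ?_, ?_, ?_⟩
        · rw [hv0]; omega
        · rw [hv0, hv1]; omega
        · rw [hv1, inv1_of_lt he₁]; rfl
        · rw [hv0, hv1]
          have hx : N₀ + j * per Q + 1 - (e₁:ℕ) = thr Q + (ρ₂:ℕ) + (j₀ + j) * per Q := by
            have : (j₀ + j) * per Q = j₀ * per Q + j * per Q := by ring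
            omega
          obtain ⟨hb1, hb2⟩ := (mod_param hρ₂ (N₀ + j * per Q + 1 - (e₁:ℕ))).2 ⟨j₀ + j, hx⟩
          rw [inv1_of_ge hb1, hb2]
          rfl
    rw [hcs]
    exact isSemilinear_of_isLinear (isLinear_one_param _ _)
  · -- v1 periodic, right distance = e₂ fixed
    have hρ₁ := ρ₁.isLt
    have he₂ := e₂.isLt
    have hex : ∃ n : ℕ, thr Q ≤ n ∧ (n - thr Q) % per Q = (ρ₁:ℕ) ∧
        TT Q ≤ n + (e₂:ℕ) - 1 := by
      refine ⟨thr Q + (ρ₁:ℕ) + (TT Q + 1) * per Q, by omega, ?_, ?_⟩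
      · have hk : thr Q + (ρ₁:ℕ) + (TT Q + 1) * per Q - thr Q
            = (ρ₁:ℕ) + (TT Q + 1) * per Q := by omega
        rw [hk, Nat.add_mul_mod_self_right, Nat.mod_eq_of_lt hρ₁]
      · have := Nat.le_mul_of_pos_right (TT Q + 1) (by omega : 0 < per Q)
        omega
    have hspec := Nat.find_spec hex
    set P₀ := Nat.find hex with hP₀
    obtain ⟨hs0, hs1, hs2⟩ := hspec
    obtain ⟨j₀, hj₀⟩ := (mod_param hρ₁ P₀).1 ⟨hs0, hs1⟩
    have hcs : ClassSet (Sum.inr ρ₁, Sum.inl e₂) =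
        {v : Fin 2 → ℕ | ∃ j : ℕ, v = ![P₀ + (e₂:ℕ) - 1, P₀] + j • ![per Q, per Q]} := by
      ext v
      constructor
      · rintro ⟨h0, h1, h2, h3⟩
        obtain ⟨h4, h5⟩ := inv1_inr h2
        obtain ⟨h6, h7⟩ := inv1_inl h3
        have hvP : thr Q ≤ v 1 ∧ (v 1 - thr Q) % per Q = (ρ₁:ℕ) ∧
            TT Q ≤ v 1 + (e₂:ℕ) - 1 := by
          refine ⟨h4, h5, ?_⟩
          omega
        have hle : P₀ ≤ v 1 := Nat.find_le hvP
        obtain ⟨j₁, hj₁⟩ := (mod_param hρ₁ (v 1)).1 ⟨h4, h5⟩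
        have hjle : j₀ ≤ j₁ := by
          by_contra hcon
          push_neg at hcon
          have := (Nat.mul_lt_mul_right (by omega : 0 < per Q)).mpr hcon
          omega
        refine ⟨j₁ - j₀, ?_⟩
        have hsm : (j₁ - j₀) * per Q = j₁ * per Q - j₀ * per Q := Nat.sub_mul _ _ _
        apply fin2_ext
        · simp only [Pi.add_apply, Pi.smul_apply, smul_eq_mul, Matrix.cons_val_zero]
          omega
        · simp only [Pi.add_apply, Pi.smul_apply, smul_eq_mul, Matrix.cons_val_one,
            Matrix.head_cons, Matrix.cons_val_zero]
          omega
      · rintro ⟨j, rfl⟩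
        have hv0 : (![P₀ + (e₂:ℕ) - 1, P₀] + j • ![per Q, per Q]) 0
            = P₀ + (e₂:ℕ) - 1 + j * per Q := by simp
        have hv1 : (![P₀ + (e₂:ℕ) - 1, P₀] + j • ![per Q, per Q]) 1
            = P₀ + j * per Q := by simp
        refine ⟨?_, ?_, ?_, ?_⟩
        · rw [hv0]; omega
        · rw [hv0, hv1]; omega
        · rw [hv1]
          have hx : P₀ + j * per Q = thr Q + (ρ₁:ℕ) + (j₀ + j) * per Q := by
            have : (j₀ + j) * per Q = j₀ * per Q + j * per Q := by ring
            omega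
          obtain ⟨hb1, hb2⟩ := (mod_param hρ₁ (P₀ + j * per Q)).2 ⟨j₀ + j, hx⟩
          rw [inv1_of_ge hb1, hb2]
          rfl
        · rw [hv0, hv1]
          have hx : P₀ + (e₂:ℕ) - 1 + j * per Q + 1 - (P₀ + j * per Q) = (e₂:ℕ) := by
            omega
          rw [hx, inv1_of_lt he₂]
          rfl
    rw [hcs]
    exact isSemilinear_of_isLinear (isLinear_one_param _ _)
  · -- both periodic
    have hρ₁ := ρ₁.isLt
    have hρ₂ := ρ₂.isLt
    have hcs : ClassSet (Sum.inr ρ₁, Sum.inr ρ₂) =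
        {v : Fin 2 → ℕ | ∃ j₁ j₂ : ℕ,
          v = ![2 * thr Q - 1 + (ρ₁:ℕ) + (ρ₂:ℕ), thr Q + (ρ₁:ℕ)]
            + j₁ • ![per Q, per Q] + j₂ • ![per Q, 0]} := by
      ext v
      constructor
      · rintro ⟨h0, h1, h2, h3⟩
        obtain ⟨h4, h5⟩ := inv1_inr h2
        obtain ⟨h6, h7⟩ := inv1_inr h3
        obtain ⟨j₁, hj₁⟩ := (mod_param hρ₁ (v 1)).1 ⟨h4, h5⟩
        obtain ⟨j₂, hj₂⟩ := (mod_param hρ₂ (v 0 + 1 - v 1)).1 ⟨h6, h7⟩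
        refine ⟨j₁, j₂, ?_⟩
        apply fin2_ext
        · simp only [Pi.add_apply, Pi.smul_apply, smul_eq_mul, Matrix.cons_val_zero]
          omega
        · simp only [Pi.add_apply, Pi.smul_apply, smul_eq_mul, Matrix.cons_val_one,
            Matrix.head_cons, Matrix.cons_val_zero]
          omega
      · rintro ⟨j₁, j₂, rfl⟩
        have hv0 : (![2 * thr Q - 1 + (ρ₁:ℕ) + (ρ₂:ℕ), thr Q + (ρ₁:ℕ)]
            + j₁ • ![per Q, per Q] + j₂ • ![per Q, 0]) 0
            = 2 * thr Q - 1 + (ρ₁:ℕ) + (ρ₂:ℕ) + j₁ * per Q + j₂ * per Q := by simp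
        have hv1 : (![2 * thr Q - 1 + (ρ₁:ℕ) + (ρ₂:ℕ), thr Q + (ρ₁:ℕ)]
            + j₁ • ![per Q, per Q] + j₂ • ![per Q, 0]) 1
            = thr Q + (ρ₁:ℕ) + j₁ * per Q := by simp
        refine ⟨?_, ?_, ?_, ?_⟩
        · rw [hv0]; omega
        · rw [hv0, hv1]; omega
        · rw [hv1]
          have hx : thr Q + (ρ₁:ℕ) + j₁ * per Q = thr Q + (ρ₁:ℕ) + j₁ * per Q := rfl
          obtain ⟨hb1, hb2⟩ := (mod_param hρ₁ (thr Q + (ρ₁:ℕ) + j₁ * per Q)).2 ⟨j₁, hx⟩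
          rw [inv1_of_ge hb1, hb2]
          rfl
        · rw [hv0, hv1]
          have hx : 2 * thr Q - 1 + (ρ₁:ℕ) + (ρ₂:ℕ) + j₁ * per Q + j₂ * per Q + 1
              - (thr Q + (ρ₁:ℕ) + j₁ * per Q) = thr Q + (ρ₂:ℕ) + j₂ * per Q := by
            have hthr := thr_ge (Q := Q)
            omega
          rw [hx]
          obtain ⟨hb1, hb2⟩ := (mod_param hρ₂ (thr Q + (ρ₂:ℕ) + j₂ * per Q)).2 ⟨j₂, rfl⟩
          rw [inv1_of_ge hb1, hb2]
          rfl
    rw [hcs]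
    exact isSemilinear_of_isLinear (isLinear_two_param _ _ _)

lemma amp_lt {f : Q → Q × ℤ} (hmove : ∀ q', (f q').2 = -1 ∨ (f q').2 = 0 ∨ (f q').2 = 1)
    (q : Q) {n : ℕ} (hn : TT Q ≤ n) : amplitude f q < (n : ℤ) := by
  have h1 : amplitude f q = wmax f q - wmin f q := rfl
  have h2 := wmax_le_card hmove q
  have h3 := neg_card_le_wmin hmove q
  have h4 : 2 * Fintype.card Q < TT Q := by
    have : thr Q = 3 * Fintype.card Q + 3 := rfl
    rw [TT_eq]
    omega
  have h5 : (TT Q : ℤ) ≤ (n : ℤ) := by exact_mod_cast hn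
  have h6 : (2 * Fintype.card Q : ℤ) < (TT Q : ℤ) := by exact_mod_cast h4
  push_cast at h6 ⊢
  omega

end Stmt12


set_option maxHeartbeats 1000000

open Stmt12

/-- for a fixed state `s`, the set Mute of pairs `(N, p)` such that the
automaton, started in `(s, p)` on the tape `{0,…,N+1}` with `N` exceeding all
amplitudes, never enters a broadcasting state, is Presburger-definable (semilinear). -/
theorem stmt12 {Q : Type} [Fintype Q] (δ : Q → TapeSym → Q × ℤ)
    (hδ : ∀ q x, (δ q x).2 = -1 ∨ (δ q x).2 = 0 ∨ (δ q x).2 = 1)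
    (B : Q → Prop) (s : Q) :
    IsSemilinearSet' {v : Fin 2 → ℕ |
      (∀ q : Q, amplitude (fun q => δ q TapeSym.a) q < (v 0 : ℤ)) ∧
      v 1 ≤ v 0 + 1 ∧
      ∀ t : ℕ, ¬ B (trun δ (v 0) s (v 1) t).1} := by
  classical
  set SS := {v : Fin 2 → ℕ |
      (∀ q : Q, amplitude (fun q => δ q TapeSym.a) q < (v 0 : ℤ)) ∧
      v 1 ≤ v 0 + 1 ∧
      ∀ t : ℕ, ¬ B (trun δ (v 0) s (v 1) t).1} with hSS
  have key : SS = (SS ∩ {v | v 0 < TT Q}) ∪ ⋃ c : (Fin (thr Q) ⊕ Fin (per Q)) × (Fin (thr Q) ⊕ Fin (per Q)), (SS ∩ ClassSet c) := by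
    ext v
    constructor
    · intro hv
      by_cases h : v 0 < TT Q
      · exact Or.inl ⟨hv, h⟩
      · push_neg at h
        obtain ⟨c1, hc1⟩ := cval_exists (Q := Q) (v 1)
        obtain ⟨c2, hc2⟩ := cval_exists (Q := Q) (v 0 + 1 - v 1)
        have hv' : v ∈ SS := hv
        rw [hSS] at hv'
        exact Or.inr (Set.mem_iUnion.2 ⟨(c1, c2), hv, h, hv'.2.1, hc1, hc2⟩)
    · rintro (⟨hv, _⟩ | hv)
      · exact hv
      · obtain ⟨c, hvc⟩ := Set.mem_iUnion.1 hv
        exact hvc.1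
  rw [key]
  apply isSemilinear_union
  · apply isSemilinear_finite
    have hsub : SS ∩ {v | v 0 < TT Q} ⊆
        ↑((Finset.range (TT Q) ×ˢ Finset.range (TT Q + 1)).image
          fun ab => (![ab.1, ab.2] : Fin 2 → ℕ)) := by
      rintro v ⟨hv, h2⟩
      replace h2 : v 0 < TT Q := h2
      rw [hSS] at hv
      obtain ⟨_, h1, _⟩ := hv
      simp only [Finset.coe_image, Set.mem_image, Finset.mem_coe, Finset.mem_product,
        Finset.mem_range]
      refine ⟨(v 0, v 1), ⟨h2, by omega⟩, ?_⟩
      apply fin2_ext <;> simp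
    exact Set.Finite.subset (Finset.finite_toSet _) hsub
  · apply isSemilinear_iUnion_fin
    intro c
    by_cases hne : (SS ∩ ClassSet c).Nonempty
    · obtain ⟨w, hwS, hwC⟩ := hne
      rw [hSS] at hwS
      have heq : SS ∩ ClassSet c = ClassSet c := by
        apply Set.inter_eq_self_of_subset_right
        intro v hv
        obtain ⟨hv0, hv1, hc1, hc2⟩ := hv
        rw [hSS]
        refine ⟨?_, hv1, ?_⟩
        · intro q
          exact amp_lt (fun q' => hδ q' TapeSym.a) q hv0
        · have hF := FACT hδ s B hwC.1 hv0 hwC.2.1 hv1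
            (hwC.2.2.1.trans hc1.symm) (hwC.2.2.2.trans hc2.symm)
          exact hF.1 hwS.2.2
      rw [heq]
      exact classSet_semilinear c
    · rw [Set.not_nonempty_iff_eq_empty.1 hne]
      exact isSemilinear_empty
end

section
/- Let f : ℕ → {0,…,·}ⁿ be a position function whose graph {(N, f(N))} is Presburger-definable, and let σ be a global state of a deterministic multiautomaton. Then the set of N such that, starting from configuration (σ, f(N)), the multiautomaton reaches a broadcasting configuration, is a Presburger-definable (hence eventually periodic) subset of ℕ; moreover, for each global state τ there is at most one Presburger-definable position function g such that every such N whose first broadcasting configuration has global state τ has positions g(N) at that moment. -/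
/-- A linear subset of ℕᵏ. -/
def IsLinearSetNat {k : ℕ} (S : Set (Fin k → ℕ)) : Prop :=
  ∃ (m : ℕ) (a : Fin k → ℕ) (b : Fin m → Fin k → ℕ),
    S = {v | ∃ c : Fin m → ℕ, v = a + ∑ j, c j • b j}

/-- A semilinear (equivalently, Presburger-definable) subset of ℕᵏ. -/
def IsSemilinearSetNat {k : ℕ} (S : Set (Fin k → ℕ)) : Prop :=
  ∃ (m : ℕ) (f : Fin m → Set (Fin k → ℕ)),
    (∀ i, IsLinearSetNat (f i)) ∧ S = ⋃ i, f i

open scoped Classical in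
/-- One synchronous step of a multiautomaton: each component sees the vector of
messages (the states of the broadcasting components) and its own scanned symbol. -/
noncomputable def gstep {n : ℕ} {Q : Type}
    (δ : Fin n → Q → TapeSym → (Fin n → Option Q) → Q × ℤ)
    (B : Fin n → Q → Prop) (N : ℕ) (c : Fin n → Q × ℤ) : Fin n → Q × ℤ :=
  fun i =>
    let m : Fin n → Option Q := fun j => if B j (c j).1 then some (c j).1 else none
    ((δ i (c i).1 (symAt N (c i).2) m).1, (c i).2 + (δ i (c i).1 (symAt N (c i).2) m).2)

/-- The synchronous run of the multiautomaton after `t` steps. -/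
noncomputable def grun {n : ℕ} {Q : Type}
    (δ : Fin n → Q → TapeSym → (Fin n → Option Q) → Q × ℤ)
    (B : Fin n → Q → Prop) (N : ℕ) (c0 : Fin n → Q × ℤ) (t : ℕ) : Fin n → Q × ℤ :=
  (gstep δ B N)^[t] c0

/-- A global configuration is broadcasting if some component is in a broadcasting state. -/
def Broadcasting {n : ℕ} {Q : Type} (B : Fin n → Q → Prop) (c : Fin n → Q × ℤ) : Prop :=
  ∃ i, B i (c i).1

namespace S13

variable {Q : Type}

/-- One step of a run on an arbitrary ℤ-indexed tape. -/
def zstep (δ : Q → TapeSym → Q × ℤ) (sym : ℤ → TapeSym) (c : Q × ℤ) : Q × ℤ :=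
  ((δ c.1 (sym c.2)).1, c.2 + (δ c.1 (sym c.2)).2)

def zrun (δ : Q → TapeSym → Q × ℤ) (sym : ℤ → TapeSym) (c : Q × ℤ) (t : ℕ) : Q × ℤ :=
  (zstep δ sym)^[t] c

lemma zrun_zero (δ : Q → TapeSym → Q × ℤ) (sym : ℤ → TapeSym) (c : Q × ℤ) :
    zrun δ sym c 0 = c := rfl

lemma zrun_succ (δ : Q → TapeSym → Q × ℤ) (sym : ℤ → TapeSym) (c : Q × ℤ) (t : ℕ) :
    zrun δ sym c (t + 1) = zstep δ sym (zrun δ sym c t) :=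
  Function.iterate_succ_apply' _ _ _

lemma zrun_add (δ : Q → TapeSym → Q × ℤ) (sym : ℤ → TapeSym) (c : Q × ℤ) (t u : ℕ) :
    zrun δ sym c (t + u) = zrun δ sym (zrun δ sym c t) u := by
  simp [zrun, Nat.add_comm t u, Function.iterate_add_apply]

/-- Exit criterion set for the behaviour of the prefix strictly below cut `c`,
    entered at cell `c-1`. -/
def ExitT (δ : Q → TapeSym → Q × ℤ) (sym : ℤ → TapeSym) (c : ℤ) (q : Q) : Prop :=
  ∃ t, c ≤ (zrun δ sym (q, c - 1) t).2

open scoped Classical in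
noncomputable def behF (δ : Q → TapeSym → Q × ℤ) (sym : ℤ → TapeSym) (c : ℤ) (q : Q) :
    Option Q :=
  if h : ExitT δ sym c q then some ((zrun δ sym (q, c - 1) (Nat.find h)).1) else none

/-- Whether a `B`-state is visited strictly before exiting the prefix. -/
def behB (δ : Q → TapeSym → Q × ℤ) (B : Q → Prop) (sym : ℤ → TapeSym) (c : ℤ) (q : Q) :
    Prop :=
  ∃ t, (∀ u ≤ t, (zrun δ sym (q, c - 1) u).2 < c) ∧ B (zrun δ sym (q, c - 1) t).1

/-- If two tapes agree (up to a shift) strictly below the cuts, the shifted runs from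
the entry cells agree as long as run 1 has stayed strictly below the cut. -/
lemma shift_run (δ : Q → TapeSym → Q × ℤ) (sym sym' : ℤ → TapeSym) (c c' : ℤ)
    (hs : ∀ x : ℤ, x ≤ c - 1 → sym' (x + (c' - c)) = sym x) (q : Q) (t : ℕ)
    (hb : ∀ w < t, (zrun δ sym (q, c - 1) w).2 < c) :
    zrun δ sym' (q, c' - 1) t
      = ((zrun δ sym (q, c - 1) t).1, (zrun δ sym (q, c - 1) t).2 + (c' - c)) := by
  induction t with
  | zero =>
    simp only [zrun_zero, Prod.mk.injEq]
    exact ⟨trivial, by omega⟩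
  | succ t ih =>
    have ih' := ih (fun w hw => hb w (Nat.lt_succ_of_lt hw))
    have hpos : (zrun δ sym (q, c - 1) t).2 < c := hb t (Nat.lt_succ_self t)
    have hsym : sym' ((zrun δ sym (q, c - 1) t).2 + (c' - c)) = sym (zrun δ sym (q, c - 1) t).2 :=
      hs _ (by omega)
    rw [zrun_succ, zrun_succ, ih']
    simp only [zstep, hsym, Prod.mk.injEq]
    exact ⟨trivial, by omega⟩

/-- `behF` depends only on the tape strictly below the cut, up to shift. -/
lemma behF_shift (δ : Q → TapeSym → Q × ℤ) (sym sym' : ℤ → TapeSym) (c c' : ℤ)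
    (hs : ∀ x : ℤ, x ≤ c - 1 → sym' (x + (c' - c)) = sym x) (q : Q) :
    behF δ sym' c' q = behF δ sym c q := by
  by_cases h : ExitT δ sym c q
  · have e := Nat.find h
    have he : c ≤ (zrun δ sym (q, c - 1) (Nat.find h)).2 := Nat.find_spec h
    have hmin : ∀ w < Nat.find h, (zrun δ sym (q, c - 1) w).2 < c := by
      intro w hw
      have := Nat.find_min h hw
      omega
    have hcorr := shift_run δ sym sym' c c' hs q (Nat.find h) hmin
    have h' : ExitT δ sym' c' q := ⟨Nat.find h, by rw [hcorr]; simpa using by omega⟩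
    have hmin' : ∀ w < Nat.find h, (zrun δ sym' (q, c' - 1) w).2 < c' := by
      intro w hw
      have hc := shift_run δ sym sym' c c' hs q w (fun u hu => hmin u (hu.trans hw))
      rw [hc]
      have := hmin w hw
      omega
    have hfind : Nat.find h' = Nat.find h := by
      apply le_antisymm
      · exact Nat.find_le (by rw [hcorr]; simpa using by omega)
      · by_contra hlt
        push_neg at hlt
        exact absurd (Nat.find_spec h') (by have := hmin' _ hlt; omega)
    classical
    rw [behF, behF]
    rw [dif_pos h', dif_pos h, hfind, hcorr]
  · have h' : ¬ ExitT δ sym' c' q := by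
      intro ⟨t, ht⟩
      have hall : ∀ w, (zrun δ sym (q, c - 1) w).2 < c := by
        intro w; by_contra hw; exact h ⟨w, by omega⟩
      have := shift_run δ sym sym' c c' hs q t (fun w _ => hall w)
      rw [this] at ht
      have := hall t
      simp at ht
      omega
    classical
    rw [behF, behF]
    rw [dif_neg h', dif_neg h]

/-- `behB` depends only on the tape strictly below the cut, up to shift. -/
lemma behB_shift (δ : Q → TapeSym → Q × ℤ) (B : Q → Prop) (sym sym' : ℤ → TapeSym) (c c' : ℤ)
    (hs : ∀ x : ℤ, x ≤ c - 1 → sym' (x + (c' - c)) = sym x) (q : Q) :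
    (behB δ B sym' c' q ↔ behB δ B sym c q) := by
  have hs' : ∀ x : ℤ, x ≤ c' - 1 → sym (x + (c - c')) = sym' x := by
    intro x hx
    have := hs (x + (c - c')) (by omega)
    rw [show x + (c - c') + (c' - c) = x by ring] at this
    rw [← this]
  constructor
  · rintro ⟨t, hw, hBt⟩
    refine ⟨t, ?_, ?_⟩
    · intro u hu
      have hc := shift_run δ sym' sym c' c hs' q u (fun w hwlt => hw w (le_of_lt (hwlt.trans_le hu)))
      rw [hc]
      have := hw u hu
      omega
    · have hc := shift_run δ sym' sym c' c hs' q t (fun w hwlt => hw w (le_of_lt hwlt))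
      rw [hc]; exact hBt
  · rintro ⟨t, hw, hBt⟩
    refine ⟨t, ?_, ?_⟩
    · intro u hu
      have hc := shift_run δ sym sym' c c' hs q u (fun w hwlt => hw w (le_of_lt (hwlt.trans_le hu)))
      rw [hc]
      have := hw u hu
      omega
    · have hc := shift_run δ sym sym' c c' hs q t (fun w hwlt => hw w (le_of_lt hwlt))
      rw [hc]; exact hBt

/-- Step displacement bounds. -/
lemma pos_step (δ : Q → TapeSym → Q × ℤ)
    (hδ : ∀ q x, (δ q x).2 = -1 ∨ (δ q x).2 = 0 ∨ (δ q x).2 = 1)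
    (sym : ℤ → TapeSym) (c : Q × ℤ) (t : ℕ) :
    (zrun δ sym c t).2 - 1 ≤ (zrun δ sym c (t + 1)).2 ∧
      (zrun δ sym c (t + 1)).2 ≤ (zrun δ sym c t).2 + 1 := by
  rw [zrun_succ]
  rcases hδ (zrun δ sym c t).1 (sym (zrun δ sym c t).2) with h | h | h <;>
    simp [zstep, h] <;> omega

/-- Two configurations on the two tapes are matched. -/
def Matched (c₁ c₂ : ℤ) (u v : Q × ℤ) : Prop :=
  u.1 = v.1 ∧ c₁ ≤ u.2 ∧ v.2 = u.2 + (c₂ - c₁)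

/-- Characterization of `behB` when the prefix is exited, as B-visits before exit. -/
lemma behB_of_exit (δ : Q → TapeSym → Q × ℤ) (B : Q → Prop) (sym : ℤ → TapeSym) (c : ℤ)
    (q : Q) (e : ℕ) (he : c ≤ (zrun δ sym (q, c - 1) e).2)
    (hmin : ∀ w < e, (zrun δ sym (q, c - 1) w).2 < c) :
    behB δ B sym c q ↔ ∃ w < e, B (zrun δ sym (q, c - 1) w).1 := by
  constructor
  · rintro ⟨t, hwin, hBt⟩
    refine ⟨t, ?_, hBt⟩
    by_contra hte
    push_neg at hte
    have := hwin e hte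
    omega
  · rintro ⟨w, hwe, hBw⟩
    exact ⟨w, fun u hu => hmin u (lt_of_le_of_lt hu hwe), hBw⟩

/-- Characterization of `behB` when the prefix is never exited. -/
lemma behB_of_noexit (δ : Q → TapeSym → Q × ℤ) (B : Q → Prop) (sym : ℤ → TapeSym) (c : ℤ)
    (q : Q) (hne : ¬ ExitT δ sym c q) :
    behB δ B sym c q ↔ ∃ w, B (zrun δ sym (q, c - 1) w).1 := by
  have hall : ∀ w, (zrun δ sym (q, c - 1) w).2 < c := by
    intro w; by_contra hw; exact hne ⟨w, by omega⟩
  exact ⟨fun ⟨t, _, hBt⟩ => ⟨t, hBt⟩, fun ⟨t, hBt⟩ => ⟨t, fun u _ => hall u, hBt⟩⟩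

section Master

variable (δ : Q → TapeSym → Q × ℤ) (B : Q → Prop) (sym₁ sym₂ : ℤ → TapeSym) (c₁ c₂ : ℤ)

/-- The one-round simulation lemma. -/
lemma round
    (hδ : ∀ q x, (δ q x).2 = -1 ∨ (δ q x).2 = 0 ∨ (δ q x).2 = 1)
    (hsym : ∀ x, c₁ ≤ x → sym₂ (x + (c₂ - c₁)) = sym₁ x)
    (hF : ∀ q, behF δ sym₁ c₁ q = behF δ sym₂ c₂ q)
    (hB : ∀ q, behB δ B sym₁ c₁ q ↔ behB δ B sym₂ c₂ q)
    (u v : Q × ℤ) (h : Matched c₁ c₂ u v) :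
    (∃ Δ₁ Δ₂ : ℕ, 1 ≤ Δ₁ ∧ 1 ≤ Δ₂ ∧
        Matched c₁ c₂ (zrun δ sym₁ u Δ₁) (zrun δ sym₂ v Δ₂) ∧
        (∀ w, 0 < w → w < Δ₁ → (zrun δ sym₁ u w).2 < c₁) ∧
        (∀ w, 0 < w → w < Δ₂ → (zrun δ sym₂ v w).2 < c₂) ∧
        ((∃ w, 0 < w ∧ w < Δ₁ ∧ B (zrun δ sym₁ u w).1) ↔
          (∃ w, 0 < w ∧ w < Δ₂ ∧ B (zrun δ sym₂ v w).1)))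
    ∨ ((∀ w, 0 < w → (zrun δ sym₁ u w).2 < c₁) ∧
       (∀ w, 0 < w → (zrun δ sym₂ v w).2 < c₂) ∧
       ((∃ w, B (zrun δ sym₁ u w).1) ↔ (∃ w, B (zrun δ sym₂ v w).1))) := by
  classical
  obtain ⟨hq, hx, hv⟩ := h
  have hsymv : sym₂ v.2 = sym₁ u.2 := by rw [hv]; exact hsym u.2 hx
  set q' := (δ u.1 (sym₁ u.2)).1 with hq'
  set d := (δ u.1 (sym₁ u.2)).2 with hd
  have hstep1 : zstep δ sym₁ u = (q', u.2 + d) := rfl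
  have hstep2 : zstep δ sym₂ v = (q', v.2 + d) := by
    simp [zstep, hsymv, ← hq]; exact ⟨hq'.symm, hd.symm⟩
  by_cases hdge : c₁ ≤ u.2 + d
  · left
    refine ⟨1, 1, le_refl 1, le_refl 1, ?_, by omega, by omega, ?_⟩
    · show Matched c₁ c₂ (zstep δ sym₁ u) (zstep δ sym₂ v)
      rw [hstep1, hstep2]
      exact ⟨rfl, hdge, by omega⟩
    · constructor <;> · rintro ⟨w, hw0, hw1, -⟩; omega
  · -- excursion into the prefix
    have hud : u.2 = c₁ ∧ d = -1 := by
      rcases hδ u.1 (sym₁ u.2) with h' | h' | h' <;> rw [← hd] at h' <;> omega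
    have h1 : zstep δ sym₁ u = (q', c₁ - 1) := by
      rw [hstep1, hud.1, hud.2]; congr 1
    have h2 : zstep δ sym₂ v = (q', c₂ - 1) := by
      rw [hstep2, hud.2, hv, hud.1]; congr 1; ring
    have hone1 : zrun δ sym₁ u 1 = (q', c₁ - 1) := by
      rw [zrun, Function.iterate_one]; exact h1
    have hone2 : zrun δ sym₂ v 1 = (q', c₂ - 1) := by
      rw [zrun, Function.iterate_one]; exact h2
    have hrun1 : ∀ w, zrun δ sym₁ u (1 + w) = zrun δ sym₁ (q', c₁ - 1) w := by
      intro w; rw [zrun_add, hone1]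
    have hrun2 : ∀ w, zrun δ sym₂ v (1 + w) = zrun δ sym₂ (q', c₂ - 1) w := by
      intro w; rw [zrun_add, hone2]
    by_cases hex : ExitT δ sym₁ c₁ q'
    · left
      have hex2 : ExitT δ sym₂ c₂ q' := by
        by_contra hne
        have := hF q'
        rw [behF, behF, dif_pos hex, dif_neg hne] at this
        cases this
      set e₁ := Nat.find hex with he₁
      set e₂ := Nat.find hex2 with he₂
      have hspec1 : c₁ ≤ (zrun δ sym₁ (q', c₁ - 1) e₁).2 := Nat.find_spec hex
      have hspec2 : c₂ ≤ (zrun δ sym₂ (q', c₂ - 1) e₂).2 := Nat.find_spec hex2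
      have hmin1 : ∀ w < e₁, (zrun δ sym₁ (q', c₁ - 1) w).2 < c₁ := by
        intro w hw; have := Nat.find_min hex hw; omega
      have hmin2 : ∀ w < e₂, (zrun δ sym₂ (q', c₂ - 1) w).2 < c₂ := by
        intro w hw; have := Nat.find_min hex2 hw; omega
      have hstates : (zrun δ sym₁ (q', c₁ - 1) e₁).1 = (zrun δ sym₂ (q', c₂ - 1) e₂).1 := by
        have := hF q'
        rw [behF, behF, dif_pos hex, dif_pos hex2] at this
        exact Option.some.inj this
      have he₁pos : 0 < e₁ := by
        rcases Nat.eq_zero_or_pos e₁ with h0 | h0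
        · exfalso; rw [h0] at hspec1; simp only [zrun_zero] at hspec1; omega
        · exact h0
      have he₂pos : 0 < e₂ := by
        rcases Nat.eq_zero_or_pos e₂ with h0 | h0
        · exfalso; rw [h0] at hspec2; simp only [zrun_zero] at hspec2; omega
        · exact h0
      have hexit1 : (zrun δ sym₁ (q', c₁ - 1) e₁).2 = c₁ := by
        have hstep := (pos_step δ hδ sym₁ (q', c₁ - 1) (e₁ - 1)).2
        have hlt := hmin1 (e₁ - 1) (by omega)
        have heq : e₁ - 1 + 1 = e₁ := by omega
        rw [heq] at hstep
        omega
      have hexit2 : (zrun δ sym₂ (q', c₂ - 1) e₂).2 = c₂ := by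
        have hstep := (pos_step δ hδ sym₂ (q', c₂ - 1) (e₂ - 1)).2
        have hlt := hmin2 (e₂ - 1) (by omega)
        have heq : e₂ - 1 + 1 = e₂ := by omega
        rw [heq] at hstep
        omega
      refine ⟨1 + e₁, 1 + e₂, by omega, by omega, ?_, ?_, ?_, ?_⟩
      · rw [hrun1, hrun2]
        exact ⟨hstates, by omega, by omega⟩
      · intro w hw0 hw1
        obtain ⟨w', rfl⟩ : ∃ w', w = 1 + w' := ⟨w - 1, by omega⟩
        rw [hrun1]
        exact hmin1 w' (by omega)
      · intro w hw0 hw1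
        obtain ⟨w', rfl⟩ : ∃ w', w = 1 + w' := ⟨w - 1, by omega⟩
        rw [hrun2]
        exact hmin2 w' (by omega)
      · have hb1 : (∃ w, 0 < w ∧ w < 1 + e₁ ∧ B (zrun δ sym₁ u w).1) ↔
            behB δ B sym₁ c₁ q' := by
          rw [behB_of_exit δ B sym₁ c₁ q' e₁ hspec1 hmin1]
          constructor
          · rintro ⟨w, hw0, hw1, hBw⟩
            obtain ⟨w', rfl⟩ : ∃ w', w = 1 + w' := ⟨w - 1, by omega⟩
            rw [hrun1] at hBw
            exact ⟨w', by omega, hBw⟩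
          · rintro ⟨w', hw', hBw⟩
            refine ⟨1 + w', by omega, by omega, ?_⟩
            rw [hrun1]
            exact hBw
        have hb2 : (∃ w, 0 < w ∧ w < 1 + e₂ ∧ B (zrun δ sym₂ v w).1) ↔
            behB δ B sym₂ c₂ q' := by
          rw [behB_of_exit δ B sym₂ c₂ q' e₂ hspec2 hmin2]
          constructor
          · rintro ⟨w, hw0, hw1, hBw⟩
            obtain ⟨w', rfl⟩ : ∃ w', w = 1 + w' := ⟨w - 1, by omega⟩
            rw [hrun2] at hBw
            exact ⟨w', by omega, hBw⟩
          · rintro ⟨w', hw', hBw⟩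
            refine ⟨1 + w', by omega, by omega, ?_⟩
            rw [hrun2]
            exact hBw
        rw [hb1, hb2]
        exact hB q'
    · right
      have hex2 : ¬ ExitT δ sym₂ c₂ q' := by
        intro hne
        have := hF q'
        rw [behF, behF, dif_neg hex, dif_pos hne] at this
        cases this
      have hall1 : ∀ w, (zrun δ sym₁ (q', c₁ - 1) w).2 < c₁ := by
        intro w; by_contra hw; exact hex ⟨w, by omega⟩
      have hall2 : ∀ w, (zrun δ sym₂ (q', c₂ - 1) w).2 < c₂ := by
        intro w; by_contra hw; exact hex2 ⟨w, by omega⟩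
      refine ⟨?_, ?_, ?_⟩
      · intro w hw0
        obtain ⟨w', rfl⟩ : ∃ w', w = 1 + w' := ⟨w - 1, by omega⟩
        rw [hrun1]; exact hall1 w'
      · intro w hw0
        obtain ⟨w', rfl⟩ : ∃ w', w = 1 + w' := ⟨w - 1, by omega⟩
        rw [hrun2]; exact hall2 w'
      · have hb1 : (∃ w, B (zrun δ sym₁ u w).1) ↔ (B u.1 ∨ behB δ B sym₁ c₁ q') := by
          rw [behB_of_noexit δ B sym₁ c₁ q' hex]
          constructor
          · rintro ⟨w, hBw⟩
            rcases Nat.eq_zero_or_pos w with h0 | h0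
            · left; rw [h0] at hBw; exact hBw
            · right
              obtain ⟨w', rfl⟩ : ∃ w', w = 1 + w' := ⟨w - 1, by omega⟩
              rw [hrun1] at hBw
              exact ⟨w', hBw⟩
          · rintro (hB0 | ⟨w', hBw⟩)
            · exact ⟨0, hB0⟩
            · refine ⟨1 + w', ?_⟩; rw [hrun1]; exact hBw
        have hb2 : (∃ w, B (zrun δ sym₂ v w).1) ↔ (B v.1 ∨ behB δ B sym₂ c₂ q') := by
          rw [behB_of_noexit δ B sym₂ c₂ q' hex2]
          constructor
          · rintro ⟨w, hBw⟩
            rcases Nat.eq_zero_or_pos w with h0 | h0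
            · left; rw [h0] at hBw; exact hBw
            · right
              obtain ⟨w', rfl⟩ : ∃ w', w = 1 + w' := ⟨w - 1, by omega⟩
              rw [hrun2] at hBw
              exact ⟨w', hBw⟩
          · rintro (hB0 | ⟨w', hBw⟩)
            · exact ⟨0, hB0⟩
            · refine ⟨1 + w', ?_⟩; rw [hrun2]; exact hBw
        rw [hb1, hb2, hq]
        exact or_congr Iff.rfl (hB q')

lemma hsym_symm (hsym : ∀ x, c₁ ≤ x → sym₂ (x + (c₂ - c₁)) = sym₁ x) :
    ∀ x, c₂ ≤ x → sym₁ (x + (c₁ - c₂)) = sym₂ x := by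
  intro x hx
  have h := hsym (x + (c₁ - c₂)) (by omega)
  rw [show x + (c₁ - c₂) + (c₂ - c₁) = x by ring] at h
  rw [← h]

lemma Matched.symm' {u v : Q × ℤ} (h : Matched c₁ c₂ u v) : Matched c₂ c₁ v u :=
  ⟨h.1.symm, by have := h.2.1; have := h.2.2; omega, by have := h.2.2; omega⟩

variable (hδ : ∀ q x, (δ q x).2 = -1 ∨ (δ q x).2 = 0 ∨ (δ q x).2 = 1)
  (hsym : ∀ x, c₁ ≤ x → sym₂ (x + (c₂ - c₁)) = sym₁ x)
  (hF : ∀ q, behF δ sym₁ c₁ q = behF δ sym₂ c₂ q)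
  (hB : ∀ q, behB δ B sym₁ c₁ q ↔ behB δ B sym₂ c₂ q)

include hδ hsym hF hB

lemma hit_transfer :
    ∀ n : ℕ, ∀ u v, Matched c₁ c₂ u v → ∀ w ≤ n, B (zrun δ sym₁ u w).1 →
      ∃ w', B (zrun δ sym₂ v w').1 := by
  intro n
  induction n using Nat.strong_induction_on with
  | _ n ih =>
    intro u v hm w hwn hBw
    rcases Nat.eq_zero_or_pos w with rfl | hw0
    · refine ⟨0, ?_⟩
      rw [zrun_zero]; rw [zrun_zero] at hBw; rw [← hm.1]; exact hBw
    rcases round δ B sym₁ sym₂ c₁ c₂ hδ hsym hF hB u v hm with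
      ⟨Δ₁, Δ₂, hΔ₁, hΔ₂, hm', hint1, hint2, hbit⟩ | ⟨hno1, hno2, hbit⟩
    · by_cases hwΔ : w < Δ₁
      · obtain ⟨w', hw'0, hw'Δ, hBw'⟩ := hbit.mp ⟨w, hw0, hwΔ, hBw⟩
        exact ⟨w', hBw'⟩
      · push_neg at hwΔ
        have hBw' : B (zrun δ sym₁ (zrun δ sym₁ u Δ₁) (w - Δ₁)).1 := by
          rw [← zrun_add, show Δ₁ + (w - Δ₁) = w by omega]
          exact hBw
        obtain ⟨w'', hB''⟩ := ih (n - Δ₁) (by omega) _ _ hm' (w - Δ₁) (by omega) hBw'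
        refine ⟨Δ₂ + w'', ?_⟩
        rw [zrun_add]; exact hB''
    · obtain ⟨w', hBw'⟩ := hbit.mp ⟨w, hBw⟩
      exact ⟨w', hBw'⟩

lemma exit_transfer :
    ∀ n : ℕ, ∀ u v, Matched c₁ c₂ u v → ∀ e ≤ n,
      c₁ + 1 ≤ (zrun δ sym₁ u e).2 →
      (∀ w < e, (zrun δ sym₁ u w).2 < c₁ + 1) →
      ∃ e', (zrun δ sym₂ v e').1 = (zrun δ sym₁ u e).1 ∧
        (zrun δ sym₂ v e').2 = (zrun δ sym₁ u e).2 + (c₂ - c₁) ∧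
        (∀ w < e', (zrun δ sym₂ v w).2 < c₂ + 1) ∧
        ((∃ w < e, B (zrun δ sym₁ u w).1) ↔ (∃ w < e', B (zrun δ sym₂ v w).1)) := by
  intro n
  induction n using Nat.strong_induction_on with
  | _ n ih =>
    intro u v hm e hen hexit hmin
    rcases Nat.eq_zero_or_pos e with rfl | he0
    · refine ⟨0, hm.1.symm, ?_, by omega, ?_⟩
      · rw [zrun_zero, zrun_zero]; exact hm.2.2
      · constructor <;> (rintro ⟨w, hw, -⟩; omega)
    rcases round δ B sym₁ sym₂ c₁ c₂ hδ hsym hF hB u v hm with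
      ⟨Δ₁, Δ₂, hΔ₁, hΔ₂, hm', hint1, hint2, hbit⟩ | ⟨hno1, hno2, hbit⟩
    · have hΔe : Δ₁ ≤ e := by
        by_contra hlt
        push_neg at hlt
        have := hint1 e he0 hlt
        omega
      have hexit' : c₁ + 1 ≤ (zrun δ sym₁ (zrun δ sym₁ u Δ₁) (e - Δ₁)).2 := by
        rw [← zrun_add, show Δ₁ + (e - Δ₁) = e by omega]; exact hexit
      have hmin' : ∀ w < e - Δ₁, (zrun δ sym₁ (zrun δ sym₁ u Δ₁) w).2 < c₁ + 1 := by
        intro w hw; rw [← zrun_add]; exact hmin _ (by omega)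
      obtain ⟨e'', h1, h2, h3, h4⟩ :=
        ih (n - Δ₁) (by omega) _ _ hm' (e - Δ₁) (by omega) hexit' hmin'
      have heq1 : Δ₁ + (e - Δ₁) = e := by omega
      refine ⟨Δ₂ + e'', ?_, ?_, ?_, ?_⟩
      · rw [zrun_add, h1, ← zrun_add, heq1]
      · rw [zrun_add, h2, ← zrun_add, heq1]
      · intro w hw
        rcases Nat.eq_zero_or_pos w with rfl | hw0
        · rw [zrun_zero]
          have ha := hmin 0 he0
          rw [zrun_zero] at ha
          have hb := hm.2.1
          have hc := hm.2.2
          omega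
        · by_cases hwΔ : w < Δ₂
          · have := hint2 w hw0 hwΔ; omega
          · push_neg at hwΔ
            have := h3 (w - Δ₂) (by omega)
            rw [← zrun_add, show Δ₂ + (w - Δ₂) = w by omega] at this
            exact this
      · have hL : (∃ w < e, B (zrun δ sym₁ u w).1) ↔
            (B u.1 ∨ (∃ w, 0 < w ∧ w < Δ₁ ∧ B (zrun δ sym₁ u w).1) ∨
             (∃ w < e - Δ₁, B (zrun δ sym₁ (zrun δ sym₁ u Δ₁) w).1)) := by
          constructor
          · rintro ⟨w, hw, hBw⟩
            rcases Nat.eq_zero_or_pos w with rfl | hw0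
            · left; rw [zrun_zero] at hBw; exact hBw
            · by_cases hwΔ : w < Δ₁
              · exact Or.inr (Or.inl ⟨w, hw0, hwΔ, hBw⟩)
              · push_neg at hwΔ
                refine Or.inr (Or.inr ⟨w - Δ₁, by omega, ?_⟩)
                rw [← zrun_add, show Δ₁ + (w - Δ₁) = w by omega]; exact hBw
          · rintro (hB0 | ⟨w, hw0, hwΔ, hBw⟩ | ⟨w, hw, hBw⟩)
            · exact ⟨0, he0, by rw [zrun_zero]; exact hB0⟩
            · exact ⟨w, by omega, hBw⟩
            · refine ⟨Δ₁ + w, by omega, ?_⟩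
              rw [zrun_add]; exact hBw
        have hR : (∃ w < Δ₂ + e'', B (zrun δ sym₂ v w).1) ↔
            (B v.1 ∨ (∃ w, 0 < w ∧ w < Δ₂ ∧ B (zrun δ sym₂ v w).1) ∨
             (∃ w < e'', B (zrun δ sym₂ (zrun δ sym₂ v Δ₂) w).1)) := by
          constructor
          · rintro ⟨w, hw, hBw⟩
            rcases Nat.eq_zero_or_pos w with rfl | hw0
            · left; rw [zrun_zero] at hBw; exact hBw
            · by_cases hwΔ : w < Δ₂
              · exact Or.inr (Or.inl ⟨w, hw0, hwΔ, hBw⟩)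
              · push_neg at hwΔ
                refine Or.inr (Or.inr ⟨w - Δ₂, by omega, ?_⟩)
                rw [← zrun_add, show Δ₂ + (w - Δ₂) = w by omega]; exact hBw
          · rintro (hB0 | ⟨w, hw0, hwΔ, hBw⟩ | ⟨w, hw, hBw⟩)
            · exact ⟨0, by omega, by rw [zrun_zero]; exact hB0⟩
            · exact ⟨w, by omega, hBw⟩
            · refine ⟨Δ₂ + w, by omega, ?_⟩
              rw [zrun_add]; exact hBw
        rw [hL, hR, hm.1]
        exact or_congr Iff.rfl (or_congr hbit h4)
    · exfalso
      have := hno1 e he0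
      omega

lemma behBext_transfer :
    ∀ n : ℕ, ∀ u v, Matched c₁ c₂ u v → u.2 ≤ c₁ →
      ∀ t ≤ n, (∀ w ≤ t, (zrun δ sym₁ u w).2 < c₁ + 1) → B (zrun δ sym₁ u t).1 →
      ∃ t', (∀ w ≤ t', (zrun δ sym₂ v w).2 < c₂ + 1) ∧ B (zrun δ sym₂ v t').1 := by
  intro n
  induction n using Nat.strong_induction_on with
  | _ n ih =>
    intro u v hm hu2 t htn hwin hBt
    rcases Nat.eq_zero_or_pos t with rfl | ht0
    · refine ⟨0, ?_, ?_⟩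
      · intro w hw
        rw [Nat.le_zero.mp hw, zrun_zero]
        have := hm.2.2; omega
      · rw [zrun_zero]; rw [zrun_zero] at hBt; rw [← hm.1]; exact hBt
    rcases round δ B sym₁ sym₂ c₁ c₂ hδ hsym hF hB u v hm with
      ⟨Δ₁, Δ₂, hΔ₁, hΔ₂, hm', hint1, hint2, hbit⟩ | ⟨hno1, hno2, hbit⟩
    · by_cases htΔ : t < Δ₁
      · obtain ⟨w', hw'0, hw'Δ, hBw'⟩ := hbit.mp ⟨t, ht0, htΔ, hBt⟩
        refine ⟨w', ?_, hBw'⟩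
        intro w hw
        rcases Nat.eq_zero_or_pos w with rfl | hw0
        · rw [zrun_zero]; have := hm.2.2; omega
        · have := hint2 w hw0 (by omega); omega
      · push_neg at htΔ
        have hu2' : (zrun δ sym₁ u Δ₁).2 ≤ c₁ := by
          have := hwin Δ₁ (by omega); omega
        have hwin' : ∀ w ≤ t - Δ₁, (zrun δ sym₁ (zrun δ sym₁ u Δ₁) w).2 < c₁ + 1 := by
          intro w hw; rw [← zrun_add]; exact hwin _ (by omega)
        have hBt' : B (zrun δ sym₁ (zrun δ sym₁ u Δ₁) (t - Δ₁)).1 := by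
          rw [← zrun_add, show Δ₁ + (t - Δ₁) = t by omega]; exact hBt
        obtain ⟨t'', hwin'', hB''⟩ :=
          ih (n - Δ₁) (by omega) _ _ hm' hu2' (t - Δ₁) (by omega) hwin' hBt'
        refine ⟨Δ₂ + t'', ?_, by rw [zrun_add]; exact hB''⟩
        intro w hw
        rcases Nat.eq_zero_or_pos w with rfl | hw0
        · rw [zrun_zero]; have := hm.2.2; omega
        · by_cases hwΔ : w < Δ₂
          · have := hint2 w hw0 hwΔ; omega
          · push_neg at hwΔ
            have := hwin'' (w - Δ₂) (by omega)
            rw [← zrun_add, show Δ₂ + (w - Δ₂) = w by omega] at this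
            exact this
    · obtain ⟨w', hBw'⟩ := hbit.mp ⟨t, hBt⟩
      refine ⟨w', ?_, hBw'⟩
      intro w hw
      rcases Nat.eq_zero_or_pos w with rfl | hw0
      · rw [zrun_zero]; have := hm.2.2; omega
      · have := hno2 w hw0; omega

/-- Master consequence: hitting `B` is equivalent on the two tapes from matched starts. -/
lemma hit_iff (u v : Q × ℤ) (hm : Matched c₁ c₂ u v) :
    (∃ t, B (zrun δ sym₁ u t).1) ↔ (∃ t, B (zrun δ sym₂ v t).1) := by
  constructor
  · rintro ⟨t, hBt⟩
    exact hit_transfer δ B sym₁ sym₂ c₁ c₂ hδ hsym hF hB t u v hm t le_rfl hBt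
  · rintro ⟨t, hBt⟩
    exact hit_transfer δ B sym₂ sym₁ c₂ c₁ hδ (hsym_symm sym₁ sym₂ c₁ c₂ hsym)
      (fun q => (hF q).symm) (fun q => (hB q).symm) t v u (hm.symm' c₁ c₂) t le_rfl hBt

/-- Master consequence: extension of the exit-state behaviour by one more cell. -/
lemma behF_ext (q : Q) : behF δ sym₁ (c₁ + 1) q = behF δ sym₂ (c₂ + 1) q := by
  classical
  have hm : Matched c₁ c₂ (q, c₁ + 1 - 1) (q, c₂ + 1 - 1) :=
    ⟨rfl, by simp, by simp⟩
  by_cases hex : ExitT δ sym₁ (c₁ + 1) q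
  · have hspec : c₁ + 1 ≤ (zrun δ sym₁ (q, c₁ + 1 - 1) (Nat.find hex)).2 := Nat.find_spec hex
    have hmin : ∀ w < Nat.find hex, (zrun δ sym₁ (q, c₁ + 1 - 1) w).2 < c₁ + 1 := by
      intro w hw; have := Nat.find_min hex hw; omega
    obtain ⟨e', h1, h2, h3, h4⟩ :=
      exit_transfer δ B sym₁ sym₂ c₁ c₂ hδ hsym hF hB (Nat.find hex) _ _ hm
        (Nat.find hex) le_rfl hspec hmin
    have hex2 : ExitT δ sym₂ (c₂ + 1) q := ⟨e', by omega⟩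
    have hfind2 : Nat.find hex2 = e' := by
      apply le_antisymm
      · exact Nat.find_le (by omega)
      · by_contra hlt
        push_neg at hlt
        have := h3 _ hlt
        have := Nat.find_spec hex2
        omega
    rw [behF, behF, dif_pos hex, dif_pos hex2, hfind2, h1]
  · have hex2 : ¬ ExitT δ sym₂ (c₂ + 1) q := by
      intro h2
      have hm' : Matched c₂ c₁ (q, c₂ + 1 - 1) (q, c₁ + 1 - 1) := hm.symm' c₁ c₂
      have hspec : c₂ + 1 ≤ (zrun δ sym₂ (q, c₂ + 1 - 1) (Nat.find h2)).2 := Nat.find_spec h2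
      have hmin : ∀ w < Nat.find h2, (zrun δ sym₂ (q, c₂ + 1 - 1) w).2 < c₂ + 1 := by
        intro w hw; have := Nat.find_min h2 hw; omega
      obtain ⟨e', h1, h2', h3, h4⟩ :=
        exit_transfer δ B sym₂ sym₁ c₂ c₁ hδ (hsym_symm sym₁ sym₂ c₁ c₂ hsym)
          (fun q => (hF q).symm) (fun q => (hB q).symm) (Nat.find h2) _ _ hm'
          (Nat.find h2) le_rfl hspec hmin
      exact hex ⟨e', by omega⟩
    rw [behF, behF, dif_neg hex, dif_neg hex2]

/-- Master consequence: extension of the B-visit behaviour by one more cell. -/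
lemma behB_ext (q : Q) : behB δ B sym₁ (c₁ + 1) q ↔ behB δ B sym₂ (c₂ + 1) q := by
  have hm : Matched c₁ c₂ (q, c₁ + 1 - 1) (q, c₂ + 1 - 1) :=
    ⟨rfl, by simp, by simp⟩
  constructor
  · rintro ⟨t, hwin, hBt⟩
    obtain ⟨t', hwin', hBt'⟩ :=
      behBext_transfer δ B sym₁ sym₂ c₁ c₂ hδ hsym hF hB t _ _ hm (by simp) t le_rfl hwin hBt
    exact ⟨t', hwin', hBt'⟩
  · rintro ⟨t, hwin, hBt⟩
    obtain ⟨t', hwin', hBt'⟩ :=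
      behBext_transfer δ B sym₂ sym₁ c₂ c₁ hδ (hsym_symm sym₁ sym₂ c₁ c₂ hsym)
        (fun q => (hF q).symm) (fun q => (hB q).symm) t _ _ (hm.symm' c₁ c₂) (by simp)
        t le_rfl hwin hBt
    exact ⟨t', hwin', hBt'⟩

end Master

/-- The mirrored automaton. -/
def mirror (δ : Q → TapeSym → Q × ℤ) : Q → TapeSym → Q × ℤ :=
  fun q x => ((δ q x).1, -(δ q x).2)

lemma mirror_bound (δ : Q → TapeSym → Q × ℤ)
    (hδ : ∀ q x, (δ q x).2 = -1 ∨ (δ q x).2 = 0 ∨ (δ q x).2 = 1) :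
    ∀ q x, (mirror δ q x).2 = -1 ∨ (mirror δ q x).2 = 0 ∨ (mirror δ q x).2 = 1 := by
  intro q x
  rcases hδ q x with h | h | h <;> simp [mirror, h]

lemma mirror_run (δ : Q → TapeSym → Q × ℤ) (sym : ℤ → TapeSym) (q : Q) (x : ℤ) (t : ℕ) :
    zrun (mirror δ) (fun y => sym (-y)) (q, -x) t
      = ((zrun δ sym (q, x) t).1, -(zrun δ sym (q, x) t).2) := by
  induction t with
  | zero => simp [zrun_zero]
  | succ t ih =>
    rw [zrun_succ, zrun_succ, ih]
    simp only [zstep, mirror, neg_neg, Prod.mk.injEq]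
    exact ⟨trivial, by ring⟩

def symL : ℤ → TapeSym := fun x => if x ≤ 0 then TapeSym.lmark else TapeSym.a

def symR : ℤ → TapeSym := fun x => if x ≤ 0 then TapeSym.rmark else TapeSym.a

/-- Canonical behaviour of the left prefix `…lll a^j` entered at its last cell. -/
noncomputable def LB (δ : Q → TapeSym → Q × ℤ) (B : Q → Prop) (j : ℕ) :
    (Q → Option Q) × (Q → Prop) :=
  (fun q => behF δ symL ((j : ℤ) + 1) q, fun q => behB δ B symL ((j : ℤ) + 1) q)

/-- Canonical behaviour of the right suffix `a^k rrr…` (mirrored) entered at its first cell. -/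
noncomputable def RB (δ : Q → TapeSym → Q × ℤ) (B : Q → Prop) (k : ℕ) :
    (Q → Option Q) × (Q → Prop) :=
  (fun q => behF (mirror δ) symR ((k : ℤ) + 1) q,
   fun q => behB (mirror δ) B symR ((k : ℤ) + 1) q)

lemma beh_congr_step (δ : Q → TapeSym → Q × ℤ) (B : Q → Prop)
    (hδ : ∀ q x, (δ q x).2 = -1 ∨ (δ q x).2 = 0 ∨ (δ q x).2 = 1)
    (sym : ℤ → TapeSym) (hsa : ∀ x : ℤ, 1 ≤ x → sym x = TapeSym.a) (j j' : ℕ)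
    (hFe : ∀ q, behF δ sym ((j : ℤ) + 1) q = behF δ sym ((j' : ℤ) + 1) q)
    (hBe : ∀ q, behB δ B sym ((j : ℤ) + 1) q ↔ behB δ B sym ((j' : ℤ) + 1) q) :
    (∀ q, behF δ sym ((j : ℤ) + 1 + 1) q = behF δ sym ((j' : ℤ) + 1 + 1) q) ∧
    (∀ q, behB δ B sym ((j : ℤ) + 1 + 1) q ↔ behB δ B sym ((j' : ℤ) + 1 + 1) q) := by
  have hsym : ∀ x : ℤ, (j : ℤ) + 1 ≤ x → sym (x + (((j' : ℤ) + 1) - ((j : ℤ) + 1))) = sym x := by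
    intro x hx
    rw [hsa x (by omega), hsa _ (by omega)]
  exact ⟨fun q => behF_ext δ B sym sym ((j : ℤ) + 1) ((j' : ℤ) + 1) hδ hsym hFe hBe q,
    fun q => behB_ext δ B sym sym ((j : ℤ) + 1) ((j' : ℤ) + 1) hδ hsym hFe hBe q⟩

/-- Iteration congruence implies eventual periodicity for maps into a finite type. -/
lemma ev_periodic_of_congr {T : Type*} [Finite T] (g : ℕ → T)
    (hg : ∀ j j', g j = g j' → g (j + 1) = g (j' + 1)) :
    ∃ K p, 1 ≤ p ∧ ∀ j, K ≤ j → g (j + p) = g j := by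
  obtain ⟨j₁, j₂, hne, heq⟩ := Finite.exists_ne_map_eq_of_infinite g
  obtain ⟨aa, bb, hab, heq⟩ : ∃ a b, a < b ∧ g a = g b := by
    rcases lt_trichotomy j₁ j₂ with h | h | h
    exacts [⟨j₁, j₂, h, heq⟩, absurd h hne, ⟨j₂, j₁, h, heq.symm⟩]
  have hd : ∀ d, g (aa + d) = g (bb + d) := by
    intro d
    induction d with
    | zero => simpa using heq
    | succ d ih =>
      have := hg _ _ ih
      rw [show aa + (d + 1) = aa + d + 1 by omega, show bb + (d + 1) = bb + d + 1 by omega]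
      exact this
  refine ⟨aa, bb - aa, by omega, ?_⟩
  intro j hj
  have h := hd (j - aa)
  rw [show aa + (j - aa) = j by omega] at h
  rw [show j + (bb - aa) = bb + (j - aa) by omega]
  exact h.symm

lemma LB_congr (δ : Q → TapeSym → Q × ℤ) (B : Q → Prop)
    (hδ : ∀ q x, (δ q x).2 = -1 ∨ (δ q x).2 = 0 ∨ (δ q x).2 = 1) :
    ∀ j j', LB δ B j = LB δ B j' → LB δ B (j + 1) = LB δ B (j' + 1) := by
  intro j j' h
  have hsa : ∀ x : ℤ, 1 ≤ x → symL x = TapeSym.a := by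
    intro x hx; simp [symL]; omega
  have hF : ∀ q, behF δ symL ((j : ℤ) + 1) q = behF δ symL ((j' : ℤ) + 1) q :=
    fun q => congrFun (congrArg Prod.fst h) q
  have hB : ∀ q, behB δ B symL ((j : ℤ) + 1) q ↔ behB δ B symL ((j' : ℤ) + 1) q :=
    fun q => iff_of_eq (congrFun (congrArg Prod.snd h) q)
  obtain ⟨hF', hB'⟩ := beh_congr_step δ B hδ symL hsa j j' hF hB
  have c1 : ((j + 1 : ℕ) : ℤ) + 1 = (j : ℤ) + 1 + 1 := by push_cast; ring
  have c2 : ((j' + 1 : ℕ) : ℤ) + 1 = (j' : ℤ) + 1 + 1 := by push_cast; ring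
  refine Prod.ext ?_ ?_
  · funext q; rw [LB, LB]; simp only; rw [c1, c2]; exact hF' q
  · funext q; rw [LB, LB]; simp only; rw [c1, c2]; exact propext (hB' q)

lemma RB_congr (δ : Q → TapeSym → Q × ℤ) (B : Q → Prop)
    (hδ : ∀ q x, (δ q x).2 = -1 ∨ (δ q x).2 = 0 ∨ (δ q x).2 = 1) :
    ∀ j j', RB δ B j = RB δ B j' → RB δ B (j + 1) = RB δ B (j' + 1) := by
  intro j j' h
  have hsa : ∀ x : ℤ, 1 ≤ x → symR x = TapeSym.a := by
    intro x hx; simp [symR]; omega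
  have hF : ∀ q, behF (mirror δ) symR ((j : ℤ) + 1) q = behF (mirror δ) symR ((j' : ℤ) + 1) q :=
    fun q => congrFun (congrArg Prod.fst h) q
  have hB : ∀ q, behB (mirror δ) B symR ((j : ℤ) + 1) q ↔
      behB (mirror δ) B symR ((j' : ℤ) + 1) q :=
    fun q => iff_of_eq (congrFun (congrArg Prod.snd h) q)
  obtain ⟨hF', hB'⟩ := beh_congr_step (mirror δ) B (mirror_bound δ hδ) symR hsa j j' hF hB
  have c1 : ((j + 1 : ℕ) : ℤ) + 1 = (j : ℤ) + 1 + 1 := by push_cast; ring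
  have c2 : ((j' + 1 : ℕ) : ℤ) + 1 = (j' : ℤ) + 1 + 1 := by push_cast; ring
  refine Prod.ext ?_ ?_
  · funext q; rw [RB, RB]; simp only; rw [c1, c2]; exact hF' q
  · funext q; rw [RB, RB]; simp only; rw [c1, c2]; exact propext (hB' q)

/-- The hitting predicate for a single automaton started at `(q₀, m)` on tape `N`. -/
def Hit (δ : Q → TapeSym → Q × ℤ) (B : Q → Prop) (q₀ : Q) (N m : ℕ) : Prop :=
  ∃ t, B (zrun δ (symAt N) (q₀, (m : ℤ)) t).1

/-- The canonical left-prefix behaviour computes the behaviour of tape `N` below cut `m`. -/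
lemma behF_canonL (δ : Q → TapeSym → Q × ℤ) (N m : ℕ) (h1 : 1 ≤ m) (h2 : m ≤ N + 1) (q : Q) :
    behF δ (symAt N) ((m : ℤ)) q = behF δ symL ((m : ℤ)) q := by
  have hs : ∀ x : ℤ, x ≤ (m : ℤ) - 1 → symL (x + ((m : ℤ) - (m : ℤ))) = symAt N x := by
    intro x hx
    rw [show (m : ℤ) - (m : ℤ) = 0 by ring, add_zero]
    simp only [symL, symAt]
    by_cases h0 : x ≤ 0
    · rw [if_pos h0, if_pos h0]
    · rw [if_neg h0, if_neg h0, if_neg (by omega)]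
  exact (behF_shift δ (symAt N) symL (m : ℤ) (m : ℤ) hs q).symm

lemma behB_canonL (δ : Q → TapeSym → Q × ℤ) (B : Q → Prop) (N m : ℕ)
    (h1 : 1 ≤ m) (h2 : m ≤ N + 1) (q : Q) :
    (behB δ B (symAt N) ((m : ℤ)) q ↔ behB δ B symL ((m : ℤ)) q) := by
  have hs : ∀ x : ℤ, x ≤ (m : ℤ) - 1 → symL (x + ((m : ℤ) - (m : ℤ))) = symAt N x := by
    intro x hx
    rw [show (m : ℤ) - (m : ℤ) = 0 by ring, add_zero]
    simp only [symL, symAt]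
    by_cases h0 : x ≤ 0
    · rw [if_pos h0, if_pos h0]
    · rw [if_neg h0, if_neg h0, if_neg (by omega)]
  exact (behB_shift δ B (symAt N) symL (m : ℤ) (m : ℤ) hs q).symm

/-- Left pumping: equal left-prefix behaviours and identical right parts give the same hit. -/
lemma hit_left_pump (δ : Q → TapeSym → Q × ℤ) (B : Q → Prop)
    (hδ : ∀ q x, (δ q x).2 = -1 ∨ (δ q x).2 = 0 ∨ (δ q x).2 = 1) (q₀ : Q)
    (N m N' m' : ℕ) (h1 : 1 ≤ m) (h2 : m ≤ N + 1) (h1' : 1 ≤ m') (h2' : m' ≤ N' + 1)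
    (hrest : N + 1 - m = N' + 1 - m')
    (hLB : LB δ B (m - 1) = LB δ B (m' - 1)) :
    (Hit δ B q₀ N m ↔ Hit δ B q₀ N' m') := by
  have hNm : (N' : ℤ) - (m' : ℤ) = (N : ℤ) - (m : ℤ) := by omega
  have hsym : ∀ x : ℤ, (m : ℤ) ≤ x →
      symAt N' (x + ((m' : ℤ) - (m : ℤ))) = symAt N x := by
    intro x hx
    simp only [symAt]
    rw [if_neg (by omega : ¬ x ≤ 0), if_neg (by omega : ¬ x + ((m' : ℤ) - (m : ℤ)) ≤ 0)]
    by_cases hr : (N : ℤ) + 1 ≤ x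
    · rw [if_pos hr, if_pos (by omega)]
    · rw [if_neg hr, if_neg (by omega)]
  have hc1 : ((m - 1 : ℕ) : ℤ) + 1 = (m : ℤ) := by omega
  have hc1' : ((m' - 1 : ℕ) : ℤ) + 1 = (m' : ℤ) := by omega
  have hFc : ∀ q, behF δ symL ((m : ℤ)) q = behF δ symL ((m' : ℤ)) q := by
    intro q
    have := congrFun (congrArg Prod.fst hLB) q
    simp only [LB] at this
    rw [hc1, hc1'] at this
    exact this
  have hBc : ∀ q, behB δ B symL ((m : ℤ)) q ↔ behB δ B symL ((m' : ℤ)) q := by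
    intro q
    have := congrFun (congrArg Prod.snd hLB) q
    simp only [LB] at this
    rw [hc1, hc1'] at this
    exact iff_of_eq this
  have hF : ∀ q, behF δ (symAt N) ((m : ℤ)) q = behF δ (symAt N') ((m' : ℤ)) q := by
    intro q
    rw [behF_canonL δ N m h1 h2 q, behF_canonL δ N' m' h1' h2' q]
    exact hFc q
  have hB : ∀ q, behB δ B (symAt N) ((m : ℤ)) q ↔ behB δ B (symAt N') ((m' : ℤ)) q := by
    intro q
    rw [behB_canonL δ B N m h1 h2 q, behB_canonL δ B N' m' h1' h2' q]
    exact hBc q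
  have hm : Matched (m : ℤ) (m' : ℤ) (q₀, (m : ℤ)) (q₀, (m' : ℤ)) :=
    ⟨rfl, by simp, by simp⟩
  exact hit_iff δ B (symAt N) (symAt N') (m : ℤ) (m' : ℤ) hδ hsym hF hB _ _ hm

/-- The canonical right-suffix behaviour computes the mirrored behaviour of tape `N`
above cut `m`. -/
lemma behF_canonR (δ : Q → TapeSym → Q × ℤ) (N m : ℕ) (h2 : m ≤ N) (q : Q) :
    behF (mirror δ) (fun y => symAt N (-y)) (-(m : ℤ)) q
      = behF (mirror δ) symR (((N - m : ℕ) : ℤ) + 1) q := by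
  have hcast : ((N - m : ℕ) : ℤ) = (N : ℤ) - m := by omega
  have hs : ∀ x : ℤ, x ≤ -(m : ℤ) - 1 →
      symR (x + ((((N - m : ℕ) : ℤ) + 1) - (-(m : ℤ)))) = symAt N (-x) := by
    intro x hx
    rw [hcast]
    simp only [symR, symAt]
    rw [if_neg (by omega : ¬ -x ≤ 0)]
    by_cases hr : (N : ℤ) + 1 ≤ -x
    · rw [if_pos (by omega), if_pos hr]
    · rw [if_neg (by omega), if_neg hr]
  exact (behF_shift (mirror δ) (fun y => symAt N (-y)) symR (-(m : ℤ))
    (((N - m : ℕ) : ℤ) + 1) hs q).symm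

lemma behB_canonR (δ : Q → TapeSym → Q × ℤ) (B : Q → Prop) (N m : ℕ) (h2 : m ≤ N) (q : Q) :
    (behB (mirror δ) B (fun y => symAt N (-y)) (-(m : ℤ)) q ↔
      behB (mirror δ) B symR (((N - m : ℕ) : ℤ) + 1) q) := by
  have hcast : ((N - m : ℕ) : ℤ) = (N : ℤ) - m := by omega
  have hs : ∀ x : ℤ, x ≤ -(m : ℤ) - 1 →
      symR (x + ((((N - m : ℕ) : ℤ) + 1) - (-(m : ℤ)))) = symAt N (-x) := by
    intro x hx
    rw [hcast]
    simp only [symR, symAt]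
    rw [if_neg (by omega : ¬ -x ≤ 0)]
    by_cases hr : (N : ℤ) + 1 ≤ -x
    · rw [if_pos (by omega), if_pos hr]
    · rw [if_neg (by omega), if_neg hr]
  exact (behB_shift (mirror δ) B (fun y => symAt N (-y)) symR (-(m : ℤ))
    (((N - m : ℕ) : ℤ) + 1) hs q).symm

/-- Right pumping: equal right-suffix behaviours and identical left parts give the same hit. -/
lemma hit_right_pump (δ : Q → TapeSym → Q × ℤ) (B : Q → Prop)
    (hδ : ∀ q x, (δ q x).2 = -1 ∨ (δ q x).2 = 0 ∨ (δ q x).2 = 1) (q₀ : Q)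
    (N m N' : ℕ) (h2 : m ≤ N) (h2' : m ≤ N')
    (hRB : RB δ B (N - m) = RB δ B (N' - m)) :
    (Hit δ B q₀ N m ↔ Hit δ B q₀ N' m) := by
  have hmir : ∀ M : ℕ, (Hit δ B q₀ M m ↔
      ∃ t, B (zrun (mirror δ) (fun y => symAt M (-y)) (q₀, -(m : ℤ)) t).1) := by
    intro M
    constructor
    · rintro ⟨t, ht⟩
      exact ⟨t, by rw [mirror_run δ (symAt M) q₀ (m : ℤ) t]; exact ht⟩
    · rintro ⟨t, ht⟩
      rw [mirror_run δ (symAt M) q₀ (m : ℤ) t] at ht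
      exact ⟨t, ht⟩
  rw [hmir N, hmir N']
  have hsym : ∀ x : ℤ, -(m : ℤ) ≤ x →
      symAt N' (-(x + (-(m : ℤ) - -(m : ℤ)))) = symAt N (-x) := by
    intro x hx
    rw [show x + (-(m : ℤ) - -(m : ℤ)) = x by ring]
    simp only [symAt]
    by_cases h0 : -x ≤ 0
    · rw [if_pos h0, if_pos h0]
    · rw [if_neg h0, if_neg h0, if_neg (by omega), if_neg (by omega)]
  have hFc : ∀ q, behF (mirror δ) symR (((N - m : ℕ) : ℤ) + 1) q
      = behF (mirror δ) symR (((N' - m : ℕ) : ℤ) + 1) q := by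
    intro q
    have := congrFun (congrArg Prod.fst hRB) q
    simp only [RB] at this
    exact this
  have hBc : ∀ q, behB (mirror δ) B symR (((N - m : ℕ) : ℤ) + 1) q ↔
      behB (mirror δ) B symR (((N' - m : ℕ) : ℤ) + 1) q := by
    intro q
    have := congrFun (congrArg Prod.snd hRB) q
    simp only [RB] at this
    exact iff_of_eq this
  have hF : ∀ q, behF (mirror δ) (fun y => symAt N (-y)) (-(m : ℤ)) q
      = behF (mirror δ) (fun y => symAt N' (-y)) (-(m : ℤ)) q := by
    intro q
    rw [behF_canonR δ N m h2 q, behF_canonR δ N' m h2' q]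
    exact hFc q
  have hB : ∀ q, behB (mirror δ) B (fun y => symAt N (-y)) (-(m : ℤ)) q ↔
      behB (mirror δ) B (fun y => symAt N' (-y)) (-(m : ℤ)) q := by
    intro q
    rw [behB_canonR δ B N m h2 q, behB_canonR δ B N' m h2' q]
    exact hBc q
  have hm : Matched (-(m : ℤ)) (-(m : ℤ)) (q₀, -(m : ℤ)) (q₀, -(m : ℤ)) :=
    ⟨rfl, by simp, by simp⟩
  exact hit_iff (mirror δ) B (fun y => symAt N (-y)) (fun y => symAt N' (-y))
    (-(m : ℤ)) (-(m : ℤ)) (mirror_bound δ hδ) hsym hF hB _ _ hm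

/-- θ-factoring: the hit predicate depends on `(m, N+1-m)` only through
residues mod `p` and values truncated at `K`. -/
lemma hit_factor [Fintype Q] (δ : Q → TapeSym → Q × ℤ) (B : Q → Prop)
    (hδ : ∀ q x, (δ q x).2 = -1 ∨ (δ q x).2 = 0 ∨ (δ q x).2 = 1) (q₀ : Q) :
    ∃ p K : ℕ, 1 ≤ p ∧ 1 ≤ K ∧ ∀ N m N' m' : ℕ,
      m ≤ N + 1 → m' ≤ N' + 1 →
      min m K = min m' K → m % p = m' % p →
      min (N + 1 - m) K = min (N' + 1 - m') K →
      (N + 1 - m) % p = (N' + 1 - m') % p →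
      (Hit δ B q₀ N m ↔ Hit δ B q₀ N' m') := by
  classical
  obtain ⟨KL, pL, hpL, hLB⟩ := ev_periodic_of_congr (LB δ B) (LB_congr δ B hδ)
  obtain ⟨KR, pR, hpR, hRB⟩ := ev_periodic_of_congr (RB δ B) (RB_congr δ B hδ)
  set p := pL * pR with hp
  set K := KL + KR + 2 with hK
  have hp1 : 1 ≤ p := by
    have := Nat.mul_le_mul hpL hpR
    simpa [hp] using this
  have hLBmul : ∀ j k, KL ≤ j → LB δ B (j + k * pL) = LB δ B j := by
    intro j k hj
    induction k with
    | zero => simp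
    | succ k ih =>
      rw [show j + (k + 1) * pL = j + k * pL + pL by ring, hLB _ (by omega)]
      exact ih
  have hLBp : ∀ j k, KL ≤ j → LB δ B (j + k * p) = LB δ B j := by
    intro j k hj
    rw [show j + k * p = j + (k * pR) * pL by rw [hp]; ring]
    exact hLBmul j (k * pR) hj
  have hRBmul : ∀ j k, KR ≤ j → RB δ B (j + k * pR) = RB δ B j := by
    intro j k hj
    induction k with
    | zero => simp
    | succ k ih =>
      rw [show j + (k + 1) * pR = j + k * pR + pR by ring, hRB _ (by omega)]
      exact ih
  have hRBp : ∀ j k, KR ≤ j → RB δ B (j + k * p) = RB δ B j := by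
    intro j k hj
    rw [show j + k * p = j + (k * pL) * pR by rw [hp]; ring]
    exact hRBmul j (k * pL) hj
  have chainL : ∀ (k N m : ℕ), KL + 1 ≤ m → m ≤ N + 1 →
      (Hit δ B q₀ N m ↔ Hit δ B q₀ (N + k * p) (m + k * p)) := by
    intro k N m hm hmn
    apply hit_left_pump δ B hδ q₀ N m (N + k * p) (m + k * p) (by omega) hmn (by omega)
      (by omega) (by omega)
    rw [show m + k * p - 1 = m - 1 + k * p by omega]
    exact (hLBp (m - 1) k (by omega)).symm
  have chainR : ∀ (k N m : ℕ), m ≤ N → KR ≤ N - m →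
      (Hit δ B q₀ N m ↔ Hit δ B q₀ (N + k * p) m) := by
    intro k N m hm hNm
    apply hit_right_pump δ B hδ q₀ N m (N + k * p) hm (by omega)
    rw [show N + k * p - m = N - m + k * p by omega]
    exact (hRBp (N - m) k hNm).symm
  have eqR : ∀ (N m N' : ℕ), m ≤ N + 1 → m ≤ N' + 1 →
      ((N + 1 - m = N' + 1 - m) ∨
        (K ≤ N + 1 - m ∧ K ≤ N' + 1 - m ∧ (N + 1 - m) % p = (N' + 1 - m) % p)) →
      (Hit δ B q₀ N m ↔ Hit δ B q₀ N' m) := by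
    intro N m N' hN hN' hcase
    rcases hcase with heq | ⟨hr, hr', hmod⟩
    · rw [show N' = N by omega]
    · rcases le_total N N' with hNN | hNN
      · obtain ⟨k, hk⟩ := (Nat.modEq_iff_dvd' (by omega)).mp hmod
        rw [mul_comm p k] at hk
        rw [show N' = N + k * p by omega]
        exact chainR k N m (by omega) (by omega)
      · obtain ⟨k, hk⟩ := (Nat.modEq_iff_dvd' (by omega)).mp hmod.symm
        rw [mul_comm p k] at hk
        rw [show N = N' + k * p by omega]
        exact (chainR k N' m (by omega) (by omega)).symm
  have aux : ∀ N m N' m' : ℕ, m ≤ m' → m ≤ N + 1 → m' ≤ N' + 1 →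
      min m K = min m' K → m % p = m' % p →
      min (N + 1 - m) K = min (N' + 1 - m') K →
      (N + 1 - m) % p = (N' + 1 - m') % p →
      (Hit δ B q₀ N m ↔ Hit δ B q₀ N' m') := by
    intro N m N' m' hmm h2 h2' hminm hmodm hminr hmodr
    by_cases hcm : m = m'
    · subst hcm
      apply eqR N m N' h2 h2'
      have hh : (N + 1 - m = N' + 1 - m) ∨ (K ≤ N + 1 - m ∧ K ≤ N' + 1 - m) := by omega
      rcases hh with h | h
      · exact Or.inl h
      · exact Or.inr ⟨h.1, h.2, hmodr⟩
    · have hKm : K ≤ m ∧ K ≤ m' := by omega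
      obtain ⟨k, hk⟩ := (Nat.modEq_iff_dvd' hmm).mp hmodm
      rw [mul_comm p k] at hk
      have h1 := chainL k N m (by omega) h2
      rw [show m + k * p = m' by omega] at h1
      rw [h1]
      apply eqR (N + k * p) m' N' (by omega) h2'
      rw [show N + k * p + 1 - m' = N + 1 - m by omega]
      have hh : (N + 1 - m = N' + 1 - m') ∨ (K ≤ N + 1 - m ∧ K ≤ N' + 1 - m') := by omega
      rcases hh with h | h
      · exact Or.inl h
      · exact Or.inr ⟨h.1, h.2, hmodr⟩
  refine ⟨p, K, hp1, by omega, ?_⟩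
  intro N m N' m' h2 h2' hminm hmodm hminr hmodr
  rcases le_total m m' with hmm | hmm
  · exact aux N m N' m' hmm h2 h2' hminm hmodm hminr hmodr
  · exact (aux N' m' N m hmm h2' h2 hminm.symm hmodm.symm hminr.symm hmodr.symm).symm

/-- Structure of a Presburger-definable position function: eventually, along each
residue class mod `P`, it is an arithmetic progression. -/
lemma fstruct {n : ℕ} (f : ℕ → Fin n → ℕ)
    (hfgraph : IsSemilinearSetNat {v : Fin (n + 1) → ℕ | ∀ i : Fin n, v i.succ = f (v 0) i}) :
    ∃ P K₀ : ℕ, 1 ≤ P ∧ ∀ N, K₀ ≤ N → ∀ i,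
      f N i ≤ f (N + P) i ∧ f (N + 2 * P) i + f N i = 2 * f (N + P) i := by
  classical
  obtain ⟨mG, L, hlin, hGU⟩ := hfgraph
  choose md ad bd hLd using hlin
  set P : ℕ := ∏ j : Fin mG, ∏ l : Fin (md j), max (bd j l 0) 1 with hPdef
  have hP1 : 1 ≤ P := by
    have hpos : 0 < P := by
      rw [hPdef]
      apply Finset.prod_pos
      intro j _
      apply Finset.prod_pos
      intro l _
      omega
    omega
  have hdvd : ∀ (j : Fin mG) (l : Fin (md j)), bd j l 0 ≠ 0 → bd j l 0 ∣ P := by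
    intro j l h0
    have h1 : bd j l 0 ∣ ∏ l' : Fin (md j), max (bd j l' 0) 1 := by
      have hm : max (bd j l 0) 1 = bd j l 0 := by omega
      rw [← hm]
      exact Finset.dvd_prod_of_mem _ (Finset.mem_univ l)
    exact h1.trans (Finset.dvd_prod_of_mem _ (Finset.mem_univ j))
  have hvG : ∀ N : ℕ, (Fin.cons N (f N) : Fin (n + 1) → ℕ) ∈
      {v : Fin (n + 1) → ℕ | ∀ i : Fin n, v i.succ = f (v 0) i} := by
    intro N i
    simp
  have hGmem : ∀ v, v ∈ {v : Fin (n + 1) → ℕ | ∀ i : Fin n, v i.succ = f (v 0) i} ↔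
      ∃ j, v ∈ L j := by
    intro v
    rw [hGU]
    exact Set.mem_iUnion
  have good_step : ∀ (j : Fin mG) (l : Fin (md j)), bd j l 0 ≠ 0 → ∀ N : ℕ,
      (Fin.cons N (f N) : Fin (n + 1) → ℕ) ∈ L j →
      (∀ i : Fin n, f (N + P) i = f N i + P / bd j l 0 * bd j l i.succ) ∧
      (Fin.cons (N + P) (f (N + P)) : Fin (n + 1) → ℕ) ∈ L j := by
    intro j l h0 N hN
    rw [hLd j, Set.mem_setOf_eq] at hN
    obtain ⟨c, hc⟩ := hN
    set c' : Fin (md j) → ℕ := fun l' => c l' + if l' = l then P / bd j l 0 else 0 with hc'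
    have hsum : (ad j + ∑ l', c' l' • bd j l')
        = (Fin.cons N (f N) : Fin (n + 1) → ℕ) + (P / bd j l 0) • bd j l := by
      rw [hc]
      funext x
      simp only [Pi.add_apply, Finset.sum_apply, Pi.smul_apply, smul_eq_mul, hc']
      have hterm : ∀ l' : Fin (md j),
          (c l' + if l' = l then P / bd j l 0 else 0) * bd j l' x
            = c l' * bd j l' x + (if l' = l then P / bd j l 0 * bd j l' x else 0) := by
        intro l'
        split_ifs <;> ring
      rw [Finset.sum_congr rfl (fun l' _ => hterm l'), Finset.sum_add_distrib,
        Finset.sum_ite_eq' Finset.univ l (fun l' => P / bd j l 0 * bd j l' x)]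
      simp [add_assoc]
    have hwL : (Fin.cons N (f N) + (P / bd j l 0) • bd j l : Fin (n + 1) → ℕ) ∈ L j := by
      rw [hLd j, Set.mem_setOf_eq]
      exact ⟨c', hsum.symm⟩
    have hw0 : (Fin.cons N (f N) + (P / bd j l 0) • bd j l : Fin (n + 1) → ℕ) 0 = N + P := by
      simp [Nat.div_mul_cancel (hdvd j l h0)]
    have hwG := (hGmem _).mpr ⟨j, hwL⟩
    have hfs : ∀ i : Fin n, f (N + P) i = f N i + P / bd j l 0 * bd j l i.succ := by
      intro i
      have hh := hwG i
      rw [hw0] at hh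
      simp only [Pi.add_apply, Pi.smul_apply, smul_eq_mul, Fin.cons_succ] at hh
      exact hh.symm
    refine ⟨hfs, ?_⟩
    have hveq : (Fin.cons (N + P) (f (N + P)) : Fin (n + 1) → ℕ)
        = Fin.cons N (f N) + (P / bd j l 0) • bd j l := by
      funext x
      refine Fin.cases ?_ ?_ x
      · rw [hw0]; simp
      · intro i
        simp only [Fin.cons_succ, Pi.add_apply, Pi.smul_apply, smul_eq_mul]
        exact hfs i
    rw [hveq]
    exact hwL
  set K₁ : ℕ := (Finset.univ.sup fun j : Fin mG => ad j 0) + 1 with hK₁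
  have hgoodex : ∀ N, K₁ ≤ N →
      ∃ (j : Fin mG) (l : Fin (md j)),
        ((Fin.cons N (f N) : Fin (n + 1) → ℕ) ∈ L j) ∧ bd j l 0 ≠ 0 := by
    intro N hN
    obtain ⟨j, hj⟩ := (hGmem _).mp (hvG N)
    by_cases hex : ∃ l, bd j l 0 ≠ 0
    · obtain ⟨l, hl⟩ := hex
      exact ⟨j, l, hj, hl⟩
    · exfalso
      push_neg at hex
      rw [hLd j, Set.mem_setOf_eq] at hj
      obtain ⟨c, hc⟩ := hj
      have hcf := congrFun hc 0
      simp only [Pi.add_apply, Finset.sum_apply, Pi.smul_apply, smul_eq_mul,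
        Fin.cons_zero] at hcf
      have hz : (∑ l' : Fin (md j), c l' * bd j l' 0) = 0 := by
        apply Finset.sum_eq_zero
        intro l' _
        rw [hex l']
        ring
      rw [hz] at hcf
      have hle : ad j 0 ≤ Finset.univ.sup (fun j : Fin mG => ad j 0) :=
        Finset.le_sup (f := fun j : Fin mG => ad j 0) (Finset.mem_univ j)
      omega
  refine ⟨P, K₁, hP1, ?_⟩
  intro N hN i
  obtain ⟨j, l, hj, hl⟩ := hgoodex N hN
  obtain ⟨h1, hv1⟩ := good_step j l hl N hj
  obtain ⟨h2, _⟩ := good_step j l hl (N + P) hv1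
  have e1 := h1 i
  have e2 := h2 i
  constructor
  · omega
  · rw [show N + 2 * P = N + P + P by ring]
    omega

section Multi

variable {n : ℕ} (δ : Fin n → Q → TapeSym → (Fin n → Option Q) → Q × ℤ)
  (B : Fin n → Q → Prop) (N : ℕ) (c0 : Fin n → Q × ℤ)

lemma gstep_no_broadcast (c : Fin n → Q × ℤ) (hnb : ¬ Broadcasting B c) :
    gstep δ B N c = fun i => zstep (fun q x => δ i q x fun _ => none) (symAt N) (c i) := by
  classical
  funext i
  have hm : (fun j => if B j (c j).1 then some (c j).1 else none)
      = (fun _ => none : Fin n → Option Q) := by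
    funext j
    exact if_neg (fun hBj => hnb ⟨j, hBj⟩)
  simp only [gstep]
  rw [hm]
  rfl

lemma grun_eq_indep (t : ℕ)
    (hno : ∀ u < t, ¬ Broadcasting B (grun δ B N c0 u)) :
    grun δ B N c0 t
      = fun i => zrun (fun q x => δ i q x fun _ => none) (symAt N) (c0 i) t := by
  induction t with
  | zero => funext i; rfl
  | succ t ih =>
    have ihe := ih (fun u hu => hno u (by omega))
    have hnb := hno t (by omega)
    have h1 : grun δ B N c0 (t + 1) = gstep δ B N (grun δ B N c0 t) :=
      Function.iterate_succ_apply' _ _ _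
    rw [h1, gstep_no_broadcast δ B N (grun δ B N c0 t) hnb, ihe]
    funext i
    simp only []
    rw [← zrun_succ]

lemma broadcast_iff_indep :
    (∃ t, Broadcasting B (grun δ B N c0 t)) ↔
      ∃ i t, B i ((zrun (fun q x => δ i q x fun _ => none) (symAt N) (c0 i) t).1) := by
  classical
  constructor
  · intro h
    have hmin : ∀ u < Nat.find h, ¬ Broadcasting B (grun δ B N c0 u) :=
      fun u hu => Nat.find_min h hu
    have heq := grun_eq_indep δ B N c0 (Nat.find h) hmin
    obtain ⟨i, hBi⟩ := Nat.find_spec h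
    rw [heq] at hBi
    exact ⟨i, Nat.find h, hBi⟩
  · rintro ⟨i, t, hBt⟩
    by_contra hno
    push_neg at hno
    have heq := grun_eq_indep δ B N c0 t (fun u _ => hno u)
    exact hno t (by rw [heq]; exact ⟨i, hBt⟩)

end Multi

section Assembly

variable {n : ℕ} [Fintype Q]

lemma S_ev_periodic (δ : Fin n → Q → TapeSym → (Fin n → Option Q) → Q × ℤ)
    (hδ : ∀ i q x m, (δ i q x m).2 = -1 ∨ (δ i q x m).2 = 0 ∨ (δ i q x m).2 = 1)
    (B : Fin n → Q → Prop) (f : ℕ → Fin n → ℕ) (hf : ∀ N i, f N i ≤ N + 1)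
    (hfgraph : IsSemilinearSetNat {v : Fin (n + 1) → ℕ | ∀ i : Fin n, v i.succ = f (v 0) i})
    (σ : Fin n → Q) :
    ∃ KK PP : ℕ, 1 ≤ PP ∧ ∀ N, KK ≤ N →
      ((∃ t, Broadcasting B (grun δ B N (fun i => (σ i, (f N i : ℤ))) t)) ↔
        (∃ t, Broadcasting B (grun δ B (N + PP) (fun i => (σ i, (f (N + PP) i : ℤ))) t))) := by
  classical
  set δ' : Fin n → Q → TapeSym → Q × ℤ := fun i q x => δ i q x fun _ => none with hδ'def
  have hδ' : ∀ i q x, (δ' i q x).2 = -1 ∨ (δ' i q x).2 = 0 ∨ (δ' i q x).2 = 1 :=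
    fun i q x => hδ i q x _
  have hfact := fun i : Fin n => hit_factor (δ' i) (B i) (hδ' i) (σ i)
  choose pI KI hfa using hfact
  set p : ℕ := ∏ i : Fin n, pI i with hpdef
  set K : ℕ := (∑ i : Fin n, KI i) + 1 with hKdef
  have hp1 : 1 ≤ p := by
    have hpos : 0 < p := by
      rw [hpdef]; apply Finset.prod_pos; intro i _; exact (hfa i).1
    omega
  have hpdvd : ∀ i, pI i ∣ p := fun i => by
    rw [hpdef]; exact Finset.dvd_prod_of_mem _ (Finset.mem_univ i)
  have hKle : ∀ i, KI i ≤ K := by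
    intro i
    rw [hKdef]
    have := Finset.single_le_sum (f := KI) (fun j _ => Nat.zero_le _) (Finset.mem_univ i)
    omega
  have hrefine : ∀ (i : Fin n) (a b : ℕ), min a K = min b K → a % p = b % p →
      min a (KI i) = min b (KI i) ∧ a % pI i = b % pI i := by
    intro i a b hmin hmod
    have h1 : a = b ∨ (K ≤ a ∧ K ≤ b) := by omega
    rcases h1 with rfl | ⟨ha, hb⟩
    · exact ⟨rfl, rfl⟩
    · refine ⟨by have := hKle i; omega, ?_⟩
      exact Nat.ModEq.of_dvd (hpdvd i) hmod
  obtain ⟨P, K₀, hP1, hFS⟩ := fstruct f hfgraph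
  have hd : ∀ N, K₀ ≤ N → ∀ k i,
      f (N + k * P + P) i - f (N + k * P) i = f (N + P) i - f N i ∧
      f (N + k * P) i ≤ f (N + k * P + P) i := by
    intro N hN k i
    induction k with
    | zero =>
      simp only [Nat.zero_mul, Nat.add_zero]
      exact ⟨trivial, (hFS N hN i).1⟩
    | succ k ih =>
      have hNk : K₀ ≤ N + k * P := by omega
      have h2 := (hFS (N + k * P) hNk i).2
      have h1a := (hFS (N + k * P) hNk i).1
      have h1b := (hFS (N + k * P + P) (by omega) i).1
      rw [show N + k * P + 2 * P = N + k * P + P + P by ring] at h2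
      have hrw : N + (k + 1) * P = N + k * P + P := by ring
      rw [hrw]
      exact ⟨by omega, h1b⟩
  have hlin : ∀ N, K₀ ≤ N → ∀ k i,
      f (N + k * P) i = f N i + k * (f (N + P) i - f N i) := by
    intro N hN k i
    induction k with
    | zero => simp
    | succ k ih =>
      have hk := hd N hN k i
      rw [show N + (k + 1) * P = N + k * P + P by ring]
      have hstep : f (N + k * P + P) i = f (N + k * P) i + (f (N + P) i - f N i) := by
        omega
      have hmul : (k + 1) * (f (N + P) i - f N i)
          = k * (f (N + P) i - f N i) + (f (N + P) i - f N i) := by ring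
      omega
  have hdP : ∀ N, K₀ ≤ N → ∀ i, f (N + P) i - f N i ≤ P := by
    intro N hN i
    by_contra hgt
    push_neg at hgt
    have hk := hlin N hN (N + 2) i
    have hb := hf (N + (N + 2) * P) i
    have hmul : (N + 2) * (P + 1) ≤ (N + 2) * (f (N + P) i - f N i) :=
      Nat.mul_le_mul_left _ (by omega)
    have hexp : (N + 2) * (P + 1) = (N + 2) * P + (N + 2) := by ring
    omega
  set PP : ℕ := P * p with hPPdef
  have hPP1 : 1 ≤ PP := by
    have := Nat.mul_le_mul hP1 hp1
    simpa [hPPdef] using this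
  set KK : ℕ := K₀ + (K + 2) * P with hKKdef
  refine ⟨KK, PP, hPP1, ?_⟩
  intro N hNK
  obtain ⟨k, r, hkr, hrP⟩ : ∃ k r, N - K₀ = k * P + r ∧ r < P := by
    have h := Nat.div_add_mod (N - K₀) P
    rw [Nat.mul_comm] at h
    exact ⟨(N - K₀) / P, (N - K₀) % P, by omega, Nat.mod_lt _ (by omega)⟩
  set N₀ : ℕ := K₀ + r with hN₀def
  have hNeq : N = N₀ + k * P := by omega
  have hN₀ : K₀ ≤ N₀ := by omega
  have hkge : K + 1 ≤ k := by
    by_contra hlt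
    push_neg at hlt
    have hmul : k * P ≤ K * P := Nat.mul_le_mul_right _ (by omega)
    have hexp : (K + 2) * P = K * P + 2 * P := by ring
    omega
  rw [broadcast_iff_indep δ B N _, broadcast_iff_indep δ B (N + PP) _]
  apply exists_congr
  intro i
  set dd : ℕ := f (N₀ + P) i - f N₀ i with hdd
  have hdle : dd ≤ P := hdP N₀ hN₀ i
  set ee : ℕ := P - dd with hee
  have hfN : f N i = f N₀ i + k * dd := by
    rw [hNeq]; exact hlin N₀ hN₀ k i
  have hfNP : f (N + PP) i = f N₀ i + (k + p) * dd := by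
    rw [hNeq, hPPdef, show N₀ + k * P + P * p = N₀ + (k + p) * P by ring]
    exact hlin N₀ hN₀ (k + p) i
  have hfPP : f (N + PP) i = f N i + p * dd := by
    have hmul : (k + p) * dd = k * dd + p * dd := by ring
    omega
  have hkP : k * P = k * dd + k * ee := by
    have h1 : dd + ee = P := by omega
    rw [← h1, Nat.mul_add]
  have hpP : p * P = p * dd + p * ee := by
    have h1 : dd + ee = P := by omega
    rw [← h1, Nat.mul_add]
  have hcomm : P * p = p * P := Nat.mul_comm _ _
  have hminm : min (f N i) K = min (f (N + PP) i) K := by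
    rcases Nat.eq_zero_or_pos dd with h0 | h0
    · rw [hfPP, h0]; simp
    · have h1 : k ≤ k * dd := Nat.le_mul_of_pos_right _ h0
      have h2 : K ≤ f N i := by omega
      have h3 : K ≤ f (N + PP) i := by omega
      omega
  have hmodm : f N i % p = f (N + PP) i % p := by
    rw [hfPP, Nat.add_mul_mod_self_left]
  have hRval : N + 1 - f N i = (N₀ + 1 - f N₀ i) + k * ee := by
    have hb := hf N₀ i
    omega
  have hR'val : N + PP + 1 - f (N + PP) i = (N + 1 - f N i) + p * ee := by
    have hb := hf N i
    have hple : p * dd ≤ p * P := Nat.mul_le_mul_left _ hdle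
    omega
  have hminr : min (N + 1 - f N i) K = min (N + PP + 1 - f (N + PP) i) K := by
    rcases Nat.eq_zero_or_pos ee with h0 | h0
    · rw [hR'val, h0]; simp
    · have h1 : k ≤ k * ee := Nat.le_mul_of_pos_right _ h0
      have h2 : K ≤ N + 1 - f N i := by omega
      have h3 : K ≤ N + PP + 1 - f (N + PP) i := by omega
      omega
  have hmodr : (N + 1 - f N i) % p = (N + PP + 1 - f (N + PP) i) % p := by
    rw [hR'val, Nat.add_mul_mod_self_left]
  have hri := hrefine i (f N i) (f (N + PP) i) hminm hmodm
  have hri2 := hrefine i (N + 1 - f N i) (N + PP + 1 - f (N + PP) i) hminr hmodr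
  exact (hfa i).2.2 N (f N i) (N + PP) (f (N + PP) i) (hf N i) (hf (N + PP) i)
    hri.1 hri.2 hri2.1 hri2.2

end Assembly

/-- Singletons are linear sets. -/
lemma isLinear_singleton {kk : ℕ} (a : Fin kk → ℕ) : IsLinearSetNat {a} := by
  refine ⟨0, a, fun j => Fin.elim0 j, ?_⟩
  ext v
  simp only [Set.mem_singleton_iff, Set.mem_setOf_eq]
  constructor
  · rintro rfl
    exact ⟨fun j => Fin.elim0 j, by simp⟩
  · rintro ⟨c, rfl⟩
    simp
/-- Arithmetic progressions are linear sets. -/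
lemma isLinear_progression {kk : ℕ} (a b : Fin kk → ℕ) :
    IsLinearSetNat {v | ∃ c : ℕ, v = a + c • b} := by
  refine ⟨1, a, fun _ => b, ?_⟩
  ext v
  simp only [Set.mem_setOf_eq]
  constructor
  · rintro ⟨c, rfl⟩
    exact ⟨fun _ => c, by simp⟩
  · rintro ⟨c, rfl⟩
    exact ⟨c 0, by simp⟩

/-- An eventually periodic subset of ℕ gives a semilinear subset of ℕ¹. -/
lemma semilinear_of_evp (S : Set ℕ) (n₀ pp : ℕ) (hpp : 1 ≤ pp)
    (hper : ∀ n, n₀ ≤ n → (n ∈ S ↔ n + pp ∈ S)) :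
    IsSemilinearSetNat {v : Fin 1 → ℕ | v 0 ∈ S} := by
  classical
  have hiff : ∀ r k, n₀ ≤ r → (r ∈ S ↔ r + k * pp ∈ S) := by
    intro r k hr
    induction k with
    | zero => simp
    | succ k ih =>
      rw [show r + (k + 1) * pp = (r + k * pp) + pp by ring]
      rw [ih, hper (r + k * pp) (by omega)]
  by_cases hEx : ∃ r, r < n₀ + pp ∧ r ∈ S
  · obtain ⟨r₀, hr₀, hr₀S⟩ := hEx
    set base : ℕ → Set (Fin 1 → ℕ) := fun r =>
      if r < n₀ then {fun _ => r}
      else {v | ∃ c : ℕ, v = (fun _ => r) + c • fun _ => pp} with hbase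
    refine ⟨n₀ + pp, fun r => base (if (r : ℕ) ∈ S then (r : ℕ) else r₀), ?_, ?_⟩
    · intro r
      by_cases hc : (r : ℕ) ∈ S <;> rw [hbase] <;> simp only [hc, if_true, if_false] <;>
        split_ifs <;> first
          | exact isLinear_singleton _
          | exact isLinear_progression _ _
    · ext v
      simp only [Set.mem_setOf_eq, Set.mem_iUnion]
      constructor
      · intro hv
        have hvconst : v = fun _ => v 0 := by
          funext x
          have : x = 0 := Subsingleton.elim x 0
          rw [this]
        by_cases hsmall : v 0 < n₀ + pp
        · refine ⟨⟨v 0, hsmall⟩, ?_⟩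
          simp only [hv, if_true, hbase]
          by_cases h0 : v 0 < n₀
          · rw [if_pos h0]
            exact hvconst
          · rw [if_neg h0]
            exact ⟨0, by simpa using hvconst⟩
        · push_neg at hsmall
          obtain ⟨k2, r2, hkr2, hr2⟩ : ∃ k2 r2, v 0 - n₀ = k2 * pp + r2 ∧ r2 < pp := by
            have h := Nat.div_add_mod (v 0 - n₀) pp
            rw [Nat.mul_comm] at h
            exact ⟨(v 0 - n₀) / pp, (v 0 - n₀) % pp, by omega, Nat.mod_lt _ (by omega)⟩
          have hv0 : v 0 = (n₀ + r2) + k2 * pp := by omega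
          have hrS : (n₀ + r2) ∈ S := by
            rw [hiff (n₀ + r2) k2 (by omega), ← hv0]
            exact hv
          refine ⟨⟨n₀ + r2, by omega⟩, ?_⟩
          simp only [hrS, if_true, hbase]
          rw [if_neg (by omega)]
          refine ⟨k2, ?_⟩
          funext x
          have hx : x = 0 := Subsingleton.elim x 0
          rw [hx]
          simp [hv0]
      · rintro ⟨r, hvr⟩
        set s : ℕ := if (r : ℕ) ∈ S then (r : ℕ) else r₀ with hs
        have hsS : s ∈ S := by
          rw [hs]; split_ifs with h
          · exact h
          · exact hr₀S
        have hslt : s < n₀ + pp := by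
          rw [hs]; split_ifs
          · exact r.2
          · exact hr₀
        rw [hbase] at hvr
        simp only at hvr
        split_ifs at hvr with hsn
        · rw [Set.mem_singleton_iff] at hvr
          rw [hvr]
          exact hsS
        · obtain ⟨c, hc⟩ := hvr
          rw [hc]
          simp only [Pi.add_apply, Pi.smul_apply, smul_eq_mul]
          rw [← hiff s c (by omega)]
          exact hsS
  · push_neg at hEx
    have hSempty : ∀ m, m ∉ S := by
      intro m hm
      by_cases hsmall : m < n₀ + pp
      · exact hEx m hsmall hm
      · push_neg at hsmall
        obtain ⟨k2, r2, hkr2, hr2⟩ : ∃ k2 r2, m - n₀ = k2 * pp + r2 ∧ r2 < pp := by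
          have h := Nat.div_add_mod (m - n₀) pp
          rw [Nat.mul_comm] at h
          exact ⟨(m - n₀) / pp, (m - n₀) % pp, by omega, Nat.mod_lt _ (by omega)⟩
        have hm0 : m = (n₀ + r2) + k2 * pp := by omega
        have : (n₀ + r2) ∈ S := by
          rw [hiff (n₀ + r2) k2 (by omega), ← hm0]
          exact hm
        exact hEx (n₀ + r2) (by omega) this
    refine ⟨0, fun j => Fin.elim0 j, fun j => Fin.elim0 j, ?_⟩
    ext v
    simp only [Set.mem_setOf_eq, Set.mem_iUnion]
    constructor
    · intro hv
      exact absurd hv (hSempty (v 0))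
    · rintro ⟨j, -⟩
      exact Fin.elim0 j

end S13

/-- for a Presburger-definable position function `f` and a global state
`σ`, the set of `N` such that the multiautomaton started in `(σ, f(N))` reaches a
broadcasting configuration is Presburger-definable, hence eventually periodic; and for
each global state `τ` the positions at the first broadcast with global state `τ` are
given by at most one position function. -/
theorem stmt13 {n : ℕ} {Q : Type} [Fintype Q]
    (δ : Fin n → Q → TapeSym → (Fin n → Option Q) → Q × ℤ)
    (hδ : ∀ i q x m, (δ i q x m).2 = -1 ∨ (δ i q x m).2 = 0 ∨ (δ i q x m).2 = 1)
    (B : Fin n → Q → Prop)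
    (f : ℕ → Fin n → ℕ) (hf : ∀ N i, f N i ≤ N + 1)
    (hfgraph : IsSemilinearSetNat {v : Fin (n + 1) → ℕ | ∀ i : Fin n, v i.succ = f (v 0) i})
    (σ : Fin n → Q) :
    (IsSemilinearSetNat {v : Fin 1 → ℕ |
        ∃ t, Broadcasting B (grun δ B (v 0) (fun i => (σ i, (f (v 0) i : ℤ))) t)} ∧
     EventuallyPeriodic {N : ℕ |
        ∃ t, Broadcasting B (grun δ B N (fun i => (σ i, (f N i : ℤ))) t)}) ∧
    ∀ (τ : Fin n → Q) (g₁ g₂ : ℕ → Fin n → ℕ),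
      (∀ N t, (∀ u, u < t → ¬ Broadcasting B (grun δ B N (fun i => (σ i, (f N i : ℤ))) u)) →
        Broadcasting B (grun δ B N (fun i => (σ i, (f N i : ℤ))) t) →
        (∀ i, (grun δ B N (fun i => (σ i, (f N i : ℤ))) t i).1 = τ i) →
        ∀ i, (grun δ B N (fun i => (σ i, (f N i : ℤ))) t i).2 = (g₁ N i : ℤ)) →
      (∀ N t, (∀ u, u < t → ¬ Broadcasting B (grun δ B N (fun i => (σ i, (f N i : ℤ))) u)) →
        Broadcasting B (grun δ B N (fun i => (σ i, (f N i : ℤ))) t) →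
        (∀ i, (grun δ B N (fun i => (σ i, (f N i : ℤ))) t i).1 = τ i) →
        ∀ i, (grun δ B N (fun i => (σ i, (f N i : ℤ))) t i).2 = (g₂ N i : ℤ)) →
      ∀ N t, (∀ u, u < t → ¬ Broadcasting B (grun δ B N (fun i => (σ i, (f N i : ℤ))) u)) →
        Broadcasting B (grun δ B N (fun i => (σ i, (f N i : ℤ))) t) →
        (∀ i, (grun δ B N (fun i => (σ i, (f N i : ℤ))) t i).1 = τ i) →
        g₁ N = g₂ N := by
  classical
  constructor
  · obtain ⟨KK, PP, hPP1, hper⟩ := S13.S_ev_periodic δ hδ B f hf hfgraph σ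
    refine ⟨?_, ⟨KK, PP, hPP1, fun N hN => hper N hN⟩⟩
    exact S13.semilinear_of_evp
      {N : ℕ | ∃ t, Broadcasting B (grun δ B N (fun i => (σ i, (f N i : ℤ))) t)}
      KK PP hPP1 hper
  · intro τ g₁ g₂ h₁ h₂ N t hu hb hτ
    funext i
    have e1 := h₁ N t hu hb hτ i
    have e2 := h₂ N t hu hb hτ i
    have e3 : (g₁ N i : ℤ) = (g₂ N i : ℤ) := by rw [← e1, ← e2]
    exact_mod_cast e3
end
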